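/- arXiv:0911.2201 — 9 statements merged into one kernel-verified Lean document; each statement's English description precedes it below -/
import Mathlib

section
/- Let μ be a Borel probability measure on ℝ, and define the survival amplitude A(s) = ∫_ℝ e^{−isλ} dμ(λ) and the survival probability p(s) = |A(s)|². Then the following three statements are equivalent: (1) Λ·μ((−Λ,Λ)ᶜ) → 0 as Λ → +∞; (2) p is differentiable at 0 with p'(0) = 0; (3) for every T > 0, sup_{|t|≤T} |p(t/N)^N − 1| → 0 as N → +∞ (i.e. [p(t/N)]^N → 1 uniformly for t in bounded intervals of ℝ). -/
open MeasureTheory Filter Topology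
open scoped ENNReal

namespace PfAux

lemma integrable_of_bdd {ν : Measure ℝ} [IsFiniteMeasure ν] {f : ℝ → ℝ} (hm : Measurable f)
    (C : ℝ) (hb : ∀ x, |f x| ≤ C) : Integrable f ν := by
  refine (integrable_const C).mono' hm.aestronglyMeasurable
    (Filter.Eventually.of_forall fun x => ?_)
  simpa [Real.norm_eq_abs] using hb x

lemma lint_linear_Ioc (b c : ℝ) (hb : 0 ≤ b) (hc : 0 ≤ c) :
    ∫⁻ u in Set.Ioc 0 c, ENNReal.ofReal (b * u) = ENNReal.ofReal (b * c ^ 2 / 2) := by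
  rw [← ofReal_integral_eq_lintegral_ofReal]
  · rw [← intervalIntegral.integral_of_le hc]
    rw [intervalIntegral.integral_const_mul]
    simp [integral_id]
    ring_nf
  · exact (continuous_const.mul continuous_id).integrableOn_Ioc.integrable
  · filter_upwards [ae_restrict_mem measurableSet_Ioc] with u hu
    exact mul_nonneg hb hu.1.le

lemma lint_linear_Ioo (b c : ℝ) (hb : 0 ≤ b) (hc : 0 ≤ c) :
    ∫⁻ u in Set.Ioo 0 c, ENNReal.ofReal (b * u) = ENNReal.ofReal (b * c ^ 2 / 2) := by
  rw [← lint_linear_Ioc b c hb hc]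
  exact setLIntegral_congr Ioo_ae_eq_Ioc

lemma one_sub_cos_nonneg (u : ℝ) : 0 ≤ 1 - Real.cos u := by
  linarith [Real.cos_le_one u]

lemma one_sub_cos_le_two (u : ℝ) : 1 - Real.cos u ≤ 2 := by
  linarith [Real.neg_one_le_cos u]

lemma one_sub_cos_le_sq (u : ℝ) : 1 - Real.cos u ≤ u ^ 2 / 2 := by
  linarith [Real.one_sub_sq_div_two_le_cos (x := u)]

/-- Layer-cake representation of truncated second moment. -/
lemma tonelli_min (ν : Measure ℝ) [IsProbabilityMeasure ν] (L : ℝ) (hL : 0 < L) :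
    ∫⁻ l, ENNReal.ofReal (min (l ^ 2) (L ^ 2)) ∂ν
      = ∫⁻ u in Set.Ioc 0 L, ENNReal.ofReal (2 * u) * ν {l | u < |l|} := by
  have hFm : Measurable (fun q : ℝ × ℝ => Set.indicator {q : ℝ × ℝ | q.1 < |q.2|}
      (fun q : ℝ × ℝ => ENNReal.ofReal (2 * q.1)) q) := by
    apply Measurable.indicator
    · exact (measurable_const.mul measurable_fst).ennreal_ofReal
    · exact measurableSet_lt measurable_fst measurable_snd.abs
  have key : ∀ l : ℝ, ∫⁻ u in Set.Ioc 0 L,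
      Set.indicator {q : ℝ × ℝ | q.1 < |q.2|} (fun q => ENNReal.ofReal (2 * q.1)) (u, l)
        = ENNReal.ofReal (min (l ^ 2) (L ^ 2)) := by
    intro l
    have : ∀ u : ℝ, Set.indicator {q : ℝ × ℝ | q.1 < |q.2|}
        (fun q : ℝ × ℝ => ENNReal.ofReal (2 * q.1)) (u, l)
        = Set.indicator (Set.Iio |l|) (fun u : ℝ => ENNReal.ofReal (2 * u)) u := by
      intro u
      by_cases h : u < |l| <;> simp [Set.indicator, h, Set.mem_setOf_eq]
    simp_rw [this]
    rw [lintegral_indicator measurableSet_Iio]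
    rw [Measure.restrict_restrict measurableSet_Iio]
    rcases le_or_gt (|l|) L with h | h
    · have hset : Set.Iio |l| ∩ Set.Ioc 0 L = Set.Ioo 0 |l| := by
        ext u; simp only [Set.mem_inter_iff, Set.mem_Ioc, Set.mem_Iio, Set.mem_Ioo]
        constructor
        · rintro ⟨h3, h1, _⟩; exact ⟨h1, h3⟩
        · rintro ⟨h1, h2⟩; exact ⟨h2, h1, le_trans h2.le h⟩
      rw [hset, lint_linear_Ioo 2 |l| (by norm_num) (abs_nonneg l)]
      rw [min_eq_left (by nlinarith [abs_nonneg l, sq_abs l] : l ^ 2 ≤ L ^ 2)]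
      rw [← sq_abs l]; ring_nf
    · have hset : Set.Iio |l| ∩ Set.Ioc 0 L = Set.Ioc 0 L := by
        apply Set.inter_eq_right.2
        intro u hu; exact lt_of_le_of_lt hu.2 h
      rw [hset, lint_linear_Ioc 2 L (by norm_num) hL.le]
      rw [min_eq_right (by nlinarith [abs_nonneg l, sq_abs l] : L ^ 2 ≤ l ^ 2)]
      ring_nf
  calc ∫⁻ l, ENNReal.ofReal (min (l ^ 2) (L ^ 2)) ∂ν
      = ∫⁻ l, (∫⁻ u in Set.Ioc 0 L,
          Set.indicator {q : ℝ × ℝ | q.1 < |q.2|} (fun q => ENNReal.ofReal (2 * q.1)) (u, l)) ∂ν := by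
        refine lintegral_congr fun l => ?_
        exact (key l).symm
    _ = ∫⁻ u in Set.Ioc 0 L, (∫⁻ l,
          Set.indicator {q : ℝ × ℝ | q.1 < |q.2|} (fun q => ENNReal.ofReal (2 * q.1)) (u, l) ∂ν) := by
        have hswap : Measurable (fun q : ℝ × ℝ => Set.indicator {q : ℝ × ℝ | q.1 < |q.2|}
            (fun q : ℝ × ℝ => ENNReal.ofReal (2 * q.1)) (q.2, q.1)) := hFm.comp measurable_swap
        exact lintegral_lintegral_swap (f := fun (l u : ℝ) => Set.indicator {q : ℝ × ℝ | q.1 < |q.2|}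
          (fun q : ℝ × ℝ => ENNReal.ofReal (2 * q.1)) (u, l)) hswap.aemeasurable
    _ = ∫⁻ u in Set.Ioc 0 L, ENNReal.ofReal (2 * u) * ν {l | u < |l|} := by
        apply setLIntegral_congr_fun measurableSet_Ioc
        intro u _
        have : ∀ l : ℝ, Set.indicator {q : ℝ × ℝ | q.1 < |q.2|}
            (fun q : ℝ × ℝ => ENNReal.ofReal (2 * q.1)) (u, l)
            = Set.indicator {l : ℝ | u < |l|} (fun _ : ℝ => ENNReal.ofReal (2 * u)) l := by
          intro l
          by_cases h : u < |l| <;> simp [Set.indicator, h, Set.mem_setOf_eq]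
        simp_rw [this]
        rw [lintegral_indicator (measurableSet_lt measurable_const measurable_abs)]
        simp [mul_comm]


lemma meas_tail_le {ν : Measure ℝ} [IsProbabilityMeasure ν] {u ε : ℝ} (hu : 0 < u)
    (h : u * (ν {l | u ≤ |l|}).toReal ≤ ε) : ν {l : ℝ | u ≤ |l|} ≤ ENNReal.ofReal (ε / u) := by
  have hεnn : 0 ≤ ε := le_trans (by positivity) h
  rw [ENNReal.le_ofReal_iff_toReal_le (measure_ne_top ν _) (div_nonneg hεnn hu.le)]
  rw [le_div_iff₀ hu]
  linarith [h]

lemma tail_to_slope (ν : Measure ℝ) [IsProbabilityMeasure ν]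
    (h : Tendsto (fun Λ : ℝ => Λ * (ν {l | Λ ≤ |l|}).toReal) atTop (𝓝 0)) :
    Tendsto (fun s : ℝ => (∫ l, (1 - Real.cos (s * l)) ∂ν) / s) (𝓝[>] 0) (𝓝 0) := by
  have hint : ∀ s : ℝ, Integrable (fun l => 1 - Real.cos (s * l)) ν := by
    intro s
    apply integrable_of_bdd (measurable_const.sub ((measurable_const.mul measurable_id).cos)) 2
    intro x
    show |1 - Real.cos (s * x)| ≤ 2
    rw [abs_of_nonneg (one_sub_cos_nonneg _)]
    exact one_sub_cos_le_two _
  have hFnn : ∀ s : ℝ, 0 ≤ ∫ l, (1 - Real.cos (s * l)) ∂ν := fun s =>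
    integral_nonneg fun l => one_sub_cos_nonneg _
  rw [NormedAddCommGroup.tendsto_nhds_zero]
  intro ε₀ hε₀
  set ε : ℝ := ε₀ / 8 with hεdef
  have hε : 0 < ε := by positivity
  have hM : ∃ M : ℝ, 0 < M ∧ ∀ u ≥ M, u * (ν {l | u ≤ |l|}).toReal ≤ ε := by
    have h2 := (Metric.tendsto_nhds.mp h) ε hε
    rw [eventually_atTop] at h2
    obtain ⟨M₀, hM₀⟩ := h2
    refine ⟨max M₀ 1, lt_of_lt_of_le one_pos (le_max_right _ _), fun u hu => ?_⟩
    have := hM₀ u (le_trans (le_max_left _ _) hu)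
    rw [Real.dist_eq, sub_zero] at this
    exact le_trans (le_abs_self _) this.le
  obtain ⟨M, hMpos, hMtail⟩ := hM
  set δ : ℝ := min (ε₀ / (2 * M ^ 2 + 1)) (1 / M) with hδdef
  have hδpos : 0 < δ := lt_min (by positivity) (by positivity)
  filter_upwards [Ioo_mem_nhdsGT_of_mem (Set.mem_Ico.mpr ⟨le_refl (0 : ℝ), hδpos⟩)] with s hs
  obtain ⟨hs0, hsδ⟩ := hs
  set L : ℝ := 1 / s with hLdef
  have hL : 0 < L := by positivity
  have hML : M ≤ L := by
    rw [hLdef, le_div_iff₀ hs0, ← le_div_iff₀' hMpos]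
    exact le_trans hsδ.le (min_le_right _ _)
  have key : ENNReal.ofReal (∫ l, (1 - Real.cos (s * l)) ∂ν)
      ≤ ENNReal.ofReal (s ^ 2 / 2 * (M ^ 2 + 2 * ε * L) + 2 * (ε / L)) := by
    rw [ofReal_integral_eq_lintegral_ofReal (hint s)
      (Filter.Eventually.of_forall fun l => one_sub_cos_nonneg _)]
    calc ∫⁻ l, ENNReal.ofReal (1 - Real.cos (s * l)) ∂ν
        ≤ ∫⁻ l, (ENNReal.ofReal (s ^ 2 / 2 * min (l ^ 2) (L ^ 2))
            + Set.indicator {x : ℝ | L < |x|} (fun _ => (2 : ℝ≥0∞)) l) ∂ν := by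
          apply lintegral_mono
          intro l
          dsimp only
          rcases le_or_gt (|l|) L with hl | hl
          · have h1 : 1 - Real.cos (s * l) ≤ s ^ 2 / 2 * min (l ^ 2) (L ^ 2) := by
              have h2 := one_sub_cos_le_sq (s * l)
              have h3 : min (l ^ 2) (L ^ 2) = l ^ 2 :=
                min_eq_left (by nlinarith [abs_nonneg l, sq_abs l])
              rw [h3]; nlinarith [sq_abs l]
            exact le_trans (ENNReal.ofReal_le_ofReal h1) le_self_add
          · have hmem : l ∈ {x : ℝ | L < |x|} := hl
            rw [Set.indicator_of_mem hmem]
            refine le_add_left ?_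
            refine le_trans (ENNReal.ofReal_le_ofReal (one_sub_cos_le_two _)) ?_
            simp
      _ = ENNReal.ofReal (s ^ 2 / 2) * (∫⁻ l, ENNReal.ofReal (min (l ^ 2) (L ^ 2)) ∂ν)
            + 2 * ν {x : ℝ | L < |x|} := by
          rw [lintegral_add_left]
          · congr 1
            · rw [← lintegral_const_mul']
              · congr 1; ext l
                rw [← ENNReal.ofReal_mul (by positivity)]
              · exact ENNReal.ofReal_ne_top
            · rw [lintegral_indicator (measurableSet_lt measurable_const measurable_abs)]
              simp [mul_comm]
          · exact (measurable_const.mul ((measurable_id.pow_const 2).min measurable_const)).ennreal_ofReal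
      _ ≤ ENNReal.ofReal (s ^ 2 / 2) * ENNReal.ofReal (M ^ 2 + 2 * ε * L)
            + 2 * ENNReal.ofReal (ε / L) := by
          gcongr
          · rw [tonelli_min ν L hL]
            calc ∫⁻ u in Set.Ioc 0 L, ENNReal.ofReal (2 * u) * ν {l | u < |l|}
                ≤ ∫⁻ u in Set.Ioc 0 L, (Set.indicator (Set.Iic M)
                    (fun u => ENNReal.ofReal (2 * u)) u + ENNReal.ofReal (2 * ε)) := by
                  apply lintegral_mono
                  intro u
                  rcases le_or_gt u M with hu | hu
                  · refine le_trans ?_ le_self_add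
                    rw [Set.indicator_of_mem (Set.mem_Iic.mpr hu)]
                    calc ENNReal.ofReal (2 * u) * ν {l | u < |l|}
                        ≤ ENNReal.ofReal (2 * u) * 1 := by
                          gcongr; exact prob_le_one
                      _ = ENNReal.ofReal (2 * u) := mul_one _
                  · refine le_trans ?_ le_add_self
                    have htail : ν {l | u < |l|} ≤ ENNReal.ofReal (ε / u) := by
                      refine le_trans (measure_mono ?_) (meas_tail_le (lt_trans hMpos hu) (hMtail u hu.le))
                      intro l hl
                      simp only [Set.mem_setOf_eq] at hl ⊢
                      exact hl.le
                    calc ENNReal.ofReal (2 * u) * ν {l | u < |l|}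
                        ≤ ENNReal.ofReal (2 * u) * ENNReal.ofReal (ε / u) := by gcongr
                      _ = ENNReal.ofReal (2 * u * (ε / u)) := by
                          rw [← ENNReal.ofReal_mul (by linarith : (0:ℝ) ≤ 2 * u)]
                      _ = ENNReal.ofReal (2 * ε) := by
                          congr 1
                          have hu0 : u ≠ 0 := (lt_trans hMpos hu).ne'
                          field_simp
              _ ≤ ENNReal.ofReal (M ^ 2) + ENNReal.ofReal (2 * ε * L) := by
                  rw [lintegral_add_right _ measurable_const]
                  gcongr
                  · rw [lintegral_indicator measurableSet_Iic]
                    rw [Measure.restrict_restrict measurableSet_Iic]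
                    refine le_trans (lintegral_mono_set (t := Set.Ioc 0 M) (fun u hu => ?_)) ?_
                    · exact Set.mem_Ioc.mpr ⟨hu.2.1, hu.1⟩
                    · rw [lint_linear_Ioc 2 M (by norm_num) hMpos.le]
                      apply ENNReal.ofReal_le_ofReal; nlinarith
                  · rw [lintegral_const, Measure.restrict_apply_univ, Real.volume_Ioc]
                    rw [← ENNReal.ofReal_mul (by positivity)]
                    apply ENNReal.ofReal_le_ofReal
                    rw [sub_zero]
              _ = ENNReal.ofReal (M ^ 2 + 2 * ε * L) := by
                  rw [ENNReal.ofReal_add (by positivity) (by positivity)]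
          · refine le_trans (measure_mono ?_) (meas_tail_le hL (hMtail L hML))
            intro l hl
            simp only [Set.mem_setOf_eq] at hl ⊢
            exact hl.le
      _ = ENNReal.ofReal (s ^ 2 / 2 * (M ^ 2 + 2 * ε * L) + 2 * (ε / L)) := by
          rw [← ENNReal.ofReal_mul (by positivity), ENNReal.ofReal_add (by positivity) (by positivity)]
          congr 1
          rw [← ENNReal.ofReal_ofNat, ← ENNReal.ofReal_mul (by norm_num)]
  have hεL : 0 ≤ ε / L := div_nonneg hε.le hL.le
  have hreal : (∫ l, (1 - Real.cos (s * l)) ∂ν)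
      ≤ s ^ 2 / 2 * (M ^ 2 + 2 * ε * L) + 2 * (ε / L) := by
    rw [← ENNReal.ofReal_le_ofReal_iff (by positivity)]
    exact key
  have hbound : (∫ l, (1 - Real.cos (s * l)) ∂ν) / s ≤ s * M ^ 2 / 2 + ε + 2 * ε := by
    rw [div_le_iff₀ hs0]
    have hs0' : s ≠ 0 := hs0.ne'
    have hrw : s ^ 2 / 2 * (M ^ 2 + 2 * ε * L) + 2 * (ε / L)
        = s ^ 2 * M ^ 2 / 2 + ε * s + 2 * ε * s := by
      rw [hLdef]; field_simp
    rw [hrw] at hreal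
    refine le_trans hreal ?_
    ring_nf
    nlinarith [sq_nonneg s, hε.le, hs0.le]
  have hsM : s * M ^ 2 / 2 ≤ ε₀ / 4 := by
    have hsle : s ≤ ε₀ / (2 * M ^ 2 + 1) := le_trans hsδ.le (min_le_left _ _)
    have h1 : s * (2 * M ^ 2 + 1) ≤ ε₀ := by
      rwa [← le_div_iff₀ (by positivity)]
    nlinarith [sq_nonneg M, hε₀, hs0.le]
  rw [Real.norm_eq_abs, abs_of_nonneg (div_nonneg (hFnn s) hs0.le)]
  calc (∫ l, (1 - Real.cos (s * l)) ∂ν) / s ≤ s * M ^ 2 / 2 + ε + 2 * ε := hbound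
    _ ≤ ε₀ / 4 + ε₀ / 8 + 2 * (ε₀ / 8) := by rw [hεdef] at *; linarith
    _ < ε₀ := by linarith


lemma interval_one_sub_cos (s d : ℝ) (hd : d ≠ 0) :
    ∫ u in (0:ℝ)..s, (1 - Real.cos (u * d)) = s - Real.sin (s * d) / d := by
  have hg : IntervalIntegrable (fun u : ℝ => Real.cos (u * d)) volume 0 s :=
    (by continuity : Continuous fun u : ℝ => Real.cos (u * d)).intervalIntegrable 0 s
  rw [intervalIntegral.integral_sub intervalIntegrable_const hg]
  rw [intervalIntegral.integral_const]
  rw [intervalIntegral.integral_comp_mul_right Real.cos hd]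
  rw [integral_cos]
  simp [smul_eq_mul, div_eq_inv_mul, mul_sub]

lemma slope_to_tail (ν : Measure ℝ) [IsProbabilityMeasure ν]
    (h : Tendsto (fun s : ℝ => (∫ l, (1 - Real.cos (s * l)) ∂ν) / s) (𝓝[>] 0) (𝓝 0)) :
    Tendsto (fun Λ : ℝ => Λ * (ν {l | Λ ≤ |l|}).toReal) atTop (𝓝 0) := by
  have hint : ∀ s : ℝ, Integrable (fun l => 1 - Real.cos (s * l)) ν := by
    intro s
    apply integrable_of_bdd (measurable_const.sub ((measurable_const.mul measurable_id).cos)) 2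
    intro x
    show |1 - Real.cos (s * x)| ≤ 2
    rw [abs_of_nonneg (one_sub_cos_nonneg _)]
    exact one_sub_cos_le_two _
  have hFnn : ∀ s : ℝ, 0 ≤ ∫ l, (1 - Real.cos (s * l)) ∂ν := fun s =>
    integral_nonneg fun l => one_sub_cos_nonneg _
  rw [NormedAddCommGroup.tendsto_nhds_zero]
  intro ε₀ hε₀
  set ε : ℝ := ε₀ / 8 with hεdef
  have hε : 0 < ε := by positivity
  have h2 := Metric.tendsto_nhds.mp h ε hε
  rw [eventually_nhdsWithin_iff, Metric.eventually_nhds_iff] at h2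
  obtain ⟨δ, hδpos, hδ⟩ := h2
  filter_upwards [eventually_ge_atTop (max (4 / δ) 1)] with Λ hΛ
  have hΛ1 : (1:ℝ) ≤ Λ := le_trans (le_max_right _ _) hΛ
  have hΛpos : 0 < Λ := lt_of_lt_of_le one_pos hΛ1
  set s : ℝ := 2 / Λ with hsdef
  have hs0 : 0 < s := by positivity
  have hsδ : s < δ := by
    have h4 : 4 / δ ≤ Λ := le_trans (le_max_left _ _) hΛ
    rw [hsdef, div_lt_iff₀ hΛpos]
    rw [div_le_iff₀ hδpos] at h4
    nlinarith
  have hFs : ∀ u : ℝ, u ∈ Set.Ioc (0:ℝ) s → (∫ l, (1 - Real.cos (u * l)) ∂ν) ≤ ε * u := by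
    intro u hu
    have hud : dist u 0 < δ := by
      rw [Real.dist_eq, sub_zero, abs_of_pos hu.1]
      exact lt_of_le_of_lt hu.2 hsδ
    have := hδ hud (Set.mem_Ioi.mpr hu.1)
    rw [Real.dist_eq, sub_zero, abs_of_nonneg (div_nonneg (hFnn u) hu.1.le)] at this
    rw [div_lt_iff₀ hu.1] at this
    linarith [this]
  have hΛs : 2 / s = Λ := by
    rw [hsdef]; field_simp
  -- the truncation chain
  have key : ENNReal.ofReal (s / 2) * ν {l : ℝ | Λ ≤ |l|}
      ≤ ENNReal.ofReal (s / 2) * ENNReal.ofReal (ε * s) := by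
    have hmul : ENNReal.ofReal (s / 2) * ENNReal.ofReal (ε * s) = ENNReal.ofReal (ε * s ^ 2 / 2) := by
      rw [← ENNReal.ofReal_mul (by positivity)]
      congr 1; ring
    rw [hmul]
    calc ENNReal.ofReal (s / 2) * ν {l : ℝ | Λ ≤ |l|}
        = ∫⁻ l, Set.indicator {x : ℝ | Λ ≤ |x|} (fun _ => ENNReal.ofReal (s / 2)) l ∂ν := by
          rw [lintegral_indicator (measurableSet_le measurable_const measurable_abs)]
          simp [mul_comm]
      _ ≤ ∫⁻ l, (∫⁻ u in Set.Ioc 0 s, ENNReal.ofReal (1 - Real.cos (u * l))) ∂ν := by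
          apply lintegral_mono
          intro l
          dsimp only
          rcases le_or_gt Λ |l| with hl | hl
          · have hmem : l ∈ {x : ℝ | Λ ≤ |x|} := hl
            rw [Set.indicator_of_mem hmem]
            have hl0 : l ≠ 0 := by
              intro h0; rw [h0, abs_zero] at hl; linarith
            have heq : ∫⁻ u in Set.Ioc 0 s, ENNReal.ofReal (1 - Real.cos (u * l))
                = ENNReal.ofReal (s - Real.sin (s * l) / l) := by
              rw [← ofReal_integral_eq_lintegral_ofReal]
              · rw [← intervalIntegral.integral_of_le hs0.le, interval_one_sub_cos s l hl0]
              · exact ((continuous_const.sub (Real.continuous_cos.comp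
                  (continuous_id.mul continuous_const))).integrableOn_Ioc).integrable
              · filter_upwards [] with u
                exact one_sub_cos_nonneg _
            rw [heq]
            apply ENNReal.ofReal_le_ofReal
            have habs : |Real.sin (s * l) / l| ≤ s / 2 := by
              rw [abs_div]
              have h1 : |Real.sin (s * l)| ≤ 1 := Real.abs_sin_le_one (s * l)
              have h2 : 2 / s ≤ |l| := by rw [hΛs]; exact hl
              have hlpos : 0 < |l| := abs_pos.mpr hl0
              rw [div_le_iff₀ hlpos]
              calc |Real.sin (s * l)| ≤ 1 := h1
                _ ≤ s / 2 * |l| := by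
                    rw [div_le_iff₀ hs0] at h2
                    nlinarith
            have := abs_le.mp habs
            linarith [this.1]
          · rw [Set.indicator_of_notMem (by simpa using not_le.mpr hl : l ∉ {x : ℝ | Λ ≤ |x|})]
            exact zero_le
      _ = ∫⁻ u in Set.Ioc 0 s, (∫⁻ l, ENNReal.ofReal (1 - Real.cos (u * l)) ∂ν) := by
          have hm : Measurable (fun q : ℝ × ℝ => ENNReal.ofReal (1 - Real.cos (q.2 * q.1))) :=
            (measurable_const.sub ((measurable_snd.mul measurable_fst).cos)).ennreal_ofReal
          exact lintegral_lintegral_swap (f := fun (l u : ℝ) =>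
            ENNReal.ofReal (1 - Real.cos (u * l))) hm.aemeasurable
      _ ≤ ∫⁻ u in Set.Ioc 0 s, ENNReal.ofReal (ε * u) := by
          apply setLIntegral_mono' measurableSet_Ioc
          intro u hu
          rw [← ofReal_integral_eq_lintegral_ofReal (hint u)
            (Filter.Eventually.of_forall fun l => one_sub_cos_nonneg _)]
          exact ENNReal.ofReal_le_ofReal (hFs u hu)
      _ = ENNReal.ofReal (ε * s ^ 2 / 2) := by
          rw [lint_linear_Ioc ε s hε.le hs0.le]
  have hcancel : ν {l : ℝ | Λ ≤ |l|} ≤ ENNReal.ofReal (ε * s) := by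
    rw [ENNReal.mul_le_mul_iff_right (by simp [hs0] : ENNReal.ofReal (s / 2) ≠ 0)
      ENNReal.ofReal_ne_top] at key
    exact key
  have htoreal : (ν {l : ℝ | Λ ≤ |l|}).toReal ≤ ε * s :=
    ENNReal.toReal_le_of_le_ofReal (by positivity) hcancel
  rw [Real.norm_eq_abs, abs_of_nonneg (by positivity)]
  have : Λ * (ν {l : ℝ | Λ ≤ |l|}).toReal ≤ Λ * (ε * s) := by
    apply mul_le_mul_of_nonneg_left htoreal hΛpos.le
  have hεs : Λ * (ε * s) = 2 * ε := by
    rw [hsdef]; field_simp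
  rw [hεs] at this
  calc Λ * (ν {l : ℝ | Λ ≤ |l|}).toReal ≤ 2 * ε := this
    _ < ε₀ := by rw [hεdef]; linarith


lemma deriv_of_right_slope {p : ℝ → ℝ} (hev : ∀ s : ℝ, p (-s) = p s) (hle : ∀ s : ℝ, p s ≤ 1)
    (hp0 : p 0 = 1) (h : Tendsto (fun s : ℝ => (1 - p s) / s) (𝓝[>] 0) (𝓝 0)) :
    HasDerivAt p 0 0 := by
  rw [hasDerivAt_iff_tendsto_slope]
  rw [tendsto_zero_iff_abs_tendsto_zero]
  have hcomp : Tendsto (fun s : ℝ => (1 - p |s|) / |s|) (𝓝[≠] 0) (𝓝 0) :=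
    h.comp tendsto_abs_nhdsNE_zero
  refine hcomp.congr' ?_
  filter_upwards [self_mem_nhdsWithin] with s hs
  have hs0 : s ≠ 0 := hs
  have hpabs : p |s| = p s := by
    rcases le_or_gt 0 s with h' | h'
    · rw [abs_of_nonneg h']
    · rw [abs_of_neg h', hev]
  show (1 - p |s|) / |s| = |slope p 0 s|
  rw [slope_def_field, hp0, sub_zero]
  rw [abs_div]
  congr 1
  rw [abs_sub_comm, abs_of_nonneg (by linarith [hle s] : 0 ≤ 1 - p s), hpabs]

lemma right_slope_of_deriv {p : ℝ → ℝ} (hp0 : p 0 = 1) (h : HasDerivAt p 0 0) :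
    Tendsto (fun s : ℝ => (1 - p s) / s) (𝓝[>] 0) (𝓝 0) := by
  have h1 := hasDerivAt_iff_tendsto_slope.mp h
  have h2 : Tendsto (slope p 0) (𝓝[>] 0) (𝓝 0) :=
    h1.mono_left (nhdsWithin_mono _ (fun s hs => ne_of_gt hs))
  have h3 := h2.neg
  rw [neg_zero] at h3
  refine h3.congr' ?_
  filter_upwards [self_mem_nhdsWithin] with s hs
  have heq : (1 - p s) / s = -slope p 0 s := by
    rw [slope_def_field, hp0, sub_zero, ← neg_div, neg_sub]
  exact heq.symm


lemma integrable_of_bdd' {α : Type*} [MeasurableSpace α] {ν : Measure α} [IsFiniteMeasure ν]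
    {f : α → ℝ} (hm : Measurable f) (C : ℝ) (hb : ∀ x, |f x| ≤ C) : Integrable f ν := by
  refine (integrable_const C).mono' hm.aestronglyMeasurable
    (Filter.Eventually.of_forall fun x => ?_)
  simpa [Real.norm_eq_abs] using hb x

lemma A_repr (μ : Measure ℝ) [IsProbabilityMeasure μ] (s : ℝ) :
    (∫ l : ℝ, Complex.exp (-(Complex.I * s * l)) ∂μ)
      = Complex.ofReal (∫ l, Real.cos (s * l) ∂μ)
        - Complex.ofReal (∫ l, Real.sin (s * l) ∂μ) * Complex.I := by
  have h1 : ∀ l : ℝ, Complex.exp (-(Complex.I * s * l))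
      = Complex.ofReal (Real.cos (s * l)) - Complex.ofReal (Real.sin (s * l)) * Complex.I := by
    intro l
    have h2 : -(Complex.I * s * l) = (↑(-(s * l)) : ℂ) * Complex.I := by push_cast; ring
    rw [h2, Complex.exp_mul_I, ← Complex.ofReal_cos, ← Complex.ofReal_sin]
    rw [Real.cos_neg, Real.sin_neg]
    push_cast
    ring
  simp_rw [h1]
  have hcos : Integrable (fun l : ℝ => Real.cos (s * l)) μ :=
    integrable_of_bdd' ((measurable_const.mul measurable_id).cos) 1 (fun x => Real.abs_cos_le_one _)
  have hsin : Integrable (fun l : ℝ => Real.sin (s * l)) μ :=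
    integrable_of_bdd' ((measurable_const.mul measurable_id).sin) 1 (fun x => Real.abs_sin_le_one _)
  rw [integral_sub]
  · rw [integral_mul_const]
    congr 1
    · exact integral_ofReal
    · congr 1
      exact integral_ofReal
  · exact hcos.ofReal
  · exact hsin.ofReal.mul_const _

lemma exists_K (μ : Measure ℝ) [IsProbabilityMeasure μ] :
    ∃ K : ℝ, 0 < K ∧ 2⁻¹ ≤ μ (Set.Icc (-K) K) := by
  have hmono : Monotone (fun n : ℕ => Set.Icc (-(n:ℝ)) n) := by
    intro n m hnm
    apply Set.Icc_subset_Icc <;> [skip; exact_mod_cast hnm]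
    simp only [neg_le_neg_iff]
    exact_mod_cast hnm
  have hunion : (⋃ n : ℕ, Set.Icc (-(n:ℝ)) n) = Set.univ := by
    ext x
    simp only [Set.mem_iUnion, Set.mem_Icc, Set.mem_univ, iff_true]
    refine ⟨⌈|x|⌉₊, ?_, ?_⟩
    · linarith [Nat.le_ceil |x|, neg_abs_le x]
    · linarith [Nat.le_ceil |x|, le_abs_self x]
  have htend : Tendsto (fun n : ℕ => μ (Set.Icc (-(n:ℝ)) n)) atTop (𝓝 (μ Set.univ)) := by
    have h5 : Tendsto (μ ∘ fun n : ℕ => Set.Icc (-(n:ℝ)) n) atTop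
        (𝓝 (μ (⋃ n : ℕ, Set.Icc (-(n:ℝ)) n))) := tendsto_measure_iUnion_atTop hmono
    rw [hunion] at h5
    exact h5
  rw [measure_univ] at htend
  have hhalf : (2⁻¹ : ℝ≥0∞) < 1 := by norm_num
  have hev := htend.eventually_const_lt hhalf
  rw [eventually_atTop] at hev
  obtain ⟨n, hn⟩ := hev
  exact ⟨(n : ℝ) + 1, by positivity, le_trans (hn n le_rfl).le
    (measure_mono (Set.Icc_subset_Icc (by linarith) (by linarith)))⟩

lemma tail_compare (μ : Measure ℝ) [IsProbabilityMeasure μ] {K : ℝ}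
    (hK : 2⁻¹ ≤ μ (Set.Icc (-K) K)) (Λ : ℝ) :
    μ {l : ℝ | Λ ≤ |l|}
      ≤ 2 * (Measure.map (fun z : ℝ × ℝ => z.1 - z.2) (μ.prod μ)) {l : ℝ | Λ - K ≤ |l|} := by
  have hmsub : Measurable (fun z : ℝ × ℝ => z.1 - z.2) := measurable_fst.sub measurable_snd
  have hmset : MeasurableSet {l : ℝ | Λ - K ≤ |l|} := measurableSet_le measurable_const measurable_abs
  rw [Measure.map_apply hmsub hmset]
  have hsub : ({l : ℝ | Λ ≤ |l|} ×ˢ Set.Icc (-K) K)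
      ⊆ (fun z : ℝ × ℝ => z.1 - z.2) ⁻¹' {l : ℝ | Λ - K ≤ |l|} := by
    rintro ⟨a, b⟩ ⟨ha, hb⟩
    simp only [Set.mem_setOf_eq, Set.mem_Icc, Set.mem_preimage] at *
    have hb' : |b| ≤ K := abs_le.mpr hb
    calc Λ - K ≤ |a| - |b| := by linarith
      _ ≤ |a - b| := abs_sub_abs_le_abs_sub a b
  have hge := measure_mono (μ := μ.prod μ) hsub
  rw [Measure.prod_prod] at hge
  have h1 : 2⁻¹ * μ {l : ℝ | Λ ≤ |l|} ≤ (μ.prod μ) ((fun z : ℝ × ℝ => z.1 - z.2) ⁻¹' {l : ℝ | Λ - K ≤ |l|}) := by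
    refine le_trans ?_ hge
    rw [mul_comm]
    exact mul_le_mul_right hK _
  calc μ {l : ℝ | Λ ≤ |l|} = 2 * (2⁻¹ * μ {l : ℝ | Λ ≤ |l|}) := by
        rw [← mul_assoc, ENNReal.mul_inv_cancel (by norm_num) (by norm_num), one_mul]
    _ ≤ _ := mul_le_mul_right h1 _


end PfAux

set_option maxHeartbeats 1000000 in
open PfAux in
theorem stmt_0 (μ : Measure ℝ) [IsProbabilityMeasure μ]
    (A : ℝ → ℂ) (hA : ∀ s : ℝ, A s = ∫ l : ℝ, Complex.exp (-(Complex.I * s * l)) ∂μ)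
    (p : ℝ → ℝ) (hp : ∀ s : ℝ, p s = ‖A s‖ ^ 2) :
    [Tendsto (fun Λ : ℝ => Λ * (μ (Set.Ioo (-Λ) Λ)ᶜ).toReal) atTop (𝓝 0),
     HasDerivAt p 0 0,
     ∀ T > (0 : ℝ), TendstoUniformlyOn (fun (N : ℕ) (t : ℝ) => p (t / N) ^ N)
       (fun _ => 1) atTop (Set.Icc (-T) T)].TFAE := by
  -- basic notation
  set X : ℝ → ℝ := fun s => ∫ l, Real.cos (s * l) ∂μ with hXdef
  set Y : ℝ → ℝ := fun s => ∫ l, Real.sin (s * l) ∂μ with hYdef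
  have hA' : ∀ s : ℝ, A s = Complex.ofReal (X s) - Complex.ofReal (Y s) * Complex.I := by
    intro s; rw [hA s, A_repr]
  have hpXY : ∀ s : ℝ, p s = X s ^ 2 + Y s ^ 2 := by
    intro s
    rw [hp s, hA' s]
    rw [Complex.sq_norm, Complex.normSq_apply]
    simp [Complex.sub_re, Complex.sub_im, Complex.mul_re, Complex.mul_im]
    ring
  have hpnn : ∀ s : ℝ, 0 ≤ p s := by
    intro s; rw [hpXY s]; positivity
  have hple : ∀ s : ℝ, p s ≤ 1 := by
    intro s
    rw [hp s]
    have hnorm : ‖A s‖ ≤ 1 := by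
      rw [hA s]
      refine le_trans (norm_integral_le_integral_norm _) ?_
      have h1 : ∀ l : ℝ, ‖Complex.exp (-(Complex.I * s * l))‖ = 1 := by
        intro l
        have h2 : -(Complex.I * s * l) = (↑(-(s * l)) : ℂ) * Complex.I := by push_cast; ring
        rw [h2]
        rw [Complex.norm_exp_ofReal_mul_I]
      simp_rw [h1]
      simp
    calc ‖A s‖ ^ 2 ≤ 1 ^ 2 := by
          apply pow_le_pow_left₀ (norm_nonneg _) hnorm
      _ = 1 := one_pow 2
  have hp0 : p 0 = 1 := by
    rw [hp 0, hA 0]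
    simp
  have hev : ∀ s : ℝ, p (-s) = p s := by
    intro s
    have hX : X (-s) = X s := by
      rw [hXdef]
      apply integral_congr_ae
      filter_upwards [] with l
      rw [neg_mul, Real.cos_neg]
    have hY : Y (-s) = -Y s := by
      rw [hYdef]
      simp only
      rw [← integral_neg]
      apply integral_congr_ae
      filter_upwards [] with l
      rw [neg_mul, Real.sin_neg]
    rw [hpXY, hpXY, hX, hY]
    ring
  -- product representation
  have hmsub : Measurable (fun z : ℝ × ℝ => z.1 - z.2) := measurable_fst.sub measurable_snd
  have hprod : ∀ s : ℝ, p s = ∫ z : ℝ × ℝ, Real.cos (s * (z.1 - z.2)) ∂(μ.prod μ) := by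
    intro s
    have hcoseq : ∀ z : ℝ × ℝ, Real.cos (s * (z.1 - z.2))
        = Real.cos (s * z.1) * Real.cos (s * z.2) + Real.sin (s * z.1) * Real.sin (s * z.2) := by
      intro z; rw [mul_sub, Real.cos_sub]
    simp_rw [hcoseq]
    have hi1 : Integrable (fun z : ℝ × ℝ => Real.cos (s * z.1) * Real.cos (s * z.2)) (μ.prod μ) := by
      apply integrable_of_bdd' (((measurable_const.mul measurable_fst).cos).mul
        ((measurable_const.mul measurable_snd).cos)) 1
      intro z
      show |Real.cos (s * z.1) * Real.cos (s * z.2)| ≤ 1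
      rw [abs_mul]
      exact mul_le_one₀ (Real.abs_cos_le_one _) (abs_nonneg _) (Real.abs_cos_le_one _)
    have hi2 : Integrable (fun z : ℝ × ℝ => Real.sin (s * z.1) * Real.sin (s * z.2)) (μ.prod μ) := by
      apply integrable_of_bdd' (((measurable_const.mul measurable_fst).sin).mul
        ((measurable_const.mul measurable_snd).sin)) 1
      intro z
      show |Real.sin (s * z.1) * Real.sin (s * z.2)| ≤ 1
      rw [abs_mul]
      exact mul_le_one₀ (Real.abs_sin_le_one _) (abs_nonneg _) (Real.abs_sin_le_one _)
    rw [integral_add hi1 hi2]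
    rw [integral_prod_mul (f := fun l : ℝ => Real.cos (s * l)) (g := fun l : ℝ => Real.cos (s * l))]
    rw [integral_prod_mul (f := fun l : ℝ => Real.sin (s * l)) (g := fun l : ℝ => Real.sin (s * l))]
    rw [hpXY s]
    ring
  haveI hPM : IsProbabilityMeasure (Measure.map (fun z : ℝ × ℝ => z.1 - z.2) (μ.prod μ)) :=
    Measure.isProbabilityMeasure_map hmsub.aemeasurable
  have hpν : ∀ s : ℝ, 1 - p s
      = ∫ l, (1 - Real.cos (s * l)) ∂(Measure.map (fun z : ℝ × ℝ => z.1 - z.2) (μ.prod μ)) := by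
    intro s
    rw [integral_map hmsub.aemeasurable]
    · have hi2 : Integrable (fun z : ℝ × ℝ => Real.cos (s * (z.1 - z.2))) (μ.prod μ) := by
        apply integrable_of_bdd' ((measurable_const.mul (measurable_fst.sub measurable_snd)).cos) 1
        intro z
        exact Real.abs_cos_le_one _
      rw [integral_sub (integrable_const 1) hi2]
      rw [integral_const]
      simp only [measure_univ, probReal_univ, ENNReal.toReal_one, one_smul, smul_eq_mul, mul_one]
      rw [hprod s]
    · exact (continuous_const.sub (Real.continuous_cos.comp
        (continuous_const.mul continuous_id))).aestronglyMeasurable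
  have hμset : ∀ Λ : ℝ, (Set.Ioo (-Λ) Λ)ᶜ = {l : ℝ | Λ ≤ |l|} := by
    intro Λ
    ext l
    simp only [Set.mem_compl_iff, Set.mem_Ioo, not_and_or, not_lt, Set.mem_setOf_eq, le_abs]
    constructor
    · rintro (h | h)
      · right; linarith
      · left; exact h
    · rintro (h | h)
      · right; exact h
      · left; linarith
  tfae_have 1 → 2
  | h1 => by
    have h1' : Tendsto (fun Λ : ℝ => Λ * (μ {l : ℝ | Λ ≤ |l|}).toReal) atTop (𝓝 0) := by
      refine h1.congr fun Λ => ?_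
      rw [hμset]
    have hslope := tail_to_slope μ h1'
    apply deriv_of_right_slope hev hple hp0
    have hXs : ∀ s : ℝ, ∫ l, (1 - Real.cos (s * l)) ∂μ = 1 - X s := by
      intro s
      have hcos : Integrable (fun l : ℝ => Real.cos (s * l)) μ :=
        integrable_of_bdd' ((measurable_const.mul measurable_id).cos) 1
          (fun x => Real.abs_cos_le_one _)
      rw [integral_sub (integrable_const 1) hcos, integral_const]
      simp [measure_univ]
      rfl
    have hupper : ∀ᶠ s in 𝓝[>] (0:ℝ), (1 - p s) / s
        ≤ 2 * ((∫ l, (1 - Real.cos (s * l)) ∂μ) / s) := by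
      filter_upwards [self_mem_nhdsWithin] with s hs
      have hs0 : (0:ℝ) < s := hs
      rw [← mul_div_assoc]
      rw [div_le_div_iff_of_pos_right hs0]
      rw [hXs s, hpXY s]
      nlinarith [sq_nonneg (1 - X s), sq_nonneg (Y s)]
    have hlower : ∀ᶠ s in 𝓝[>] (0:ℝ), 0 ≤ (1 - p s) / s := by
      filter_upwards [self_mem_nhdsWithin] with s hs
      have hs0 : (0:ℝ) < s := hs
      exact div_nonneg (by linarith [hple s]) hs0.le
    have hconst : Tendsto (fun _ : ℝ => (0:ℝ)) (𝓝[>] (0:ℝ)) (𝓝 0) := tendsto_const_nhds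
    have htwo : Tendsto (fun s : ℝ => 2 * ((∫ l, (1 - Real.cos (s * l)) ∂μ) / s))
        (𝓝[>] (0:ℝ)) (𝓝 0) := by
      have := hslope.const_mul (2:ℝ)
      simpa using this
    exact tendsto_of_tendsto_of_tendsto_of_le_of_le' hconst htwo hlower hupper
  tfae_have 2 → 1
  | h2 => by
    have hsl := right_slope_of_deriv hp0 h2
    have hslν : Tendsto (fun s : ℝ => (∫ l, (1 - Real.cos (s * l))
        ∂(Measure.map (fun z : ℝ × ℝ => z.1 - z.2) (μ.prod μ))) / s) (𝓝[>] 0) (𝓝 0) := by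
      refine hsl.congr fun s => ?_
      rw [hpν s]
    have htailν := slope_to_tail _ hslν
    obtain ⟨K, hKpos, hK⟩ := exists_K μ
    rw [NormedAddCommGroup.tendsto_nhds_zero] at htailν ⊢
    intro ε₀ hε₀
    have hε : 0 < ε₀ / 8 := by positivity
    have h3 := htailν _ hε
    rw [eventually_atTop] at h3
    obtain ⟨Λ₀, hΛ₀⟩ := h3
    filter_upwards [eventually_ge_atTop (max (2 * K) (Λ₀ + K))] with Λ hΛ
    have hK2 : 2 * K ≤ Λ := le_trans (le_max_left _ _) hΛ
    have hΛK : Λ₀ ≤ Λ - K := by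
      have := le_trans (le_max_right _ _) hΛ; linarith
    have hΛpos : 0 < Λ := by linarith
    have hΛ'pos : 0 < Λ - K := by linarith
    have hν1 := hΛ₀ (Λ - K) hΛK
    rw [Real.norm_eq_abs, abs_of_nonneg (by positivity)] at hν1
    have hcomp := tail_compare μ hK Λ
    have hfin : (μ {l : ℝ | Λ ≤ |l|}).toReal
        ≤ 2 * ((Measure.map (fun z : ℝ × ℝ => z.1 - z.2) (μ.prod μ)) {l : ℝ | Λ - K ≤ |l|}).toReal := by
      have h4 : (2 : ℝ≥0∞) * (Measure.map (fun z : ℝ × ℝ => z.1 - z.2) (μ.prod μ))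
          {l : ℝ | Λ - K ≤ |l|} ≠ ⊤ :=
        ENNReal.mul_ne_top (by norm_num) (measure_ne_top _ _)
      have h5 := ENNReal.toReal_mono h4 hcomp
      rwa [ENNReal.toReal_mul, ENNReal.toReal_ofNat] at h5
    rw [Real.norm_eq_abs, hμset, abs_of_nonneg (by positivity)]
    set r := ((Measure.map (fun z : ℝ × ℝ => z.1 - z.2) (μ.prod μ)) {l : ℝ | Λ - K ≤ |l|}).toReal with hr
    have hr0 : 0 ≤ r := ENNReal.toReal_nonneg
    calc Λ * (μ {l : ℝ | Λ ≤ |l|}).toReal ≤ Λ * (2 * r) :=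
          mul_le_mul_of_nonneg_left hfin hΛpos.le
      _ ≤ 4 * ((Λ - K) * r) := by nlinarith
      _ < 4 * (ε₀ / 8) := by
          apply mul_lt_mul_of_pos_left hν1
          norm_num
      _ < ε₀ := by linarith
  tfae_have 2 → 3
  | h2 => by
    intro T hT
    have hsl := right_slope_of_deriv hp0 h2
    rw [Metric.tendstoUniformlyOn_iff]
    intro ε hε
    have hε' : 0 < ε / 2 / T := by positivity
    have h3 := Metric.tendsto_nhds.mp hsl _ hε'
    rw [eventually_nhdsWithin_iff, Metric.eventually_nhds_iff] at h3
    obtain ⟨δ, hδpos, hδ⟩ := h3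
    filter_upwards [eventually_ge_atTop (⌈T / δ⌉₊ + 1)] with N hN
    intro t ht
    have hN1 : 1 ≤ N := le_trans (Nat.le_add_left 1 _) hN
    have hNpos : (0:ℝ) < N := by exact_mod_cast hN1
    have hNT : T / δ < N := by
      have h4 : (⌈T / δ⌉₊ : ℝ) + 1 ≤ N := by exact_mod_cast hN
      linarith [Nat.le_ceil (T / δ)]
    rcases eq_or_ne t 0 with rfl | ht0
    · simp [hp0, dist_self]
      exact hε
    · have hu0 : 0 < |t| / N := by positivity
      have huδ : |t| / N < δ := by
        rw [div_lt_iff₀ hNpos]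
        have h5 : |t| ≤ T := abs_le.mpr ⟨ht.1, ht.2⟩
        have h6 : T < δ * N := by
          rw [← div_lt_iff₀' hδpos]
          exact hNT
        linarith
      have hslope : (1 - p (|t| / N)) / (|t| / N) < ε / 2 / T := by
        have h7 := hδ (by rw [Real.dist_eq, sub_zero, abs_of_pos hu0]; exact huδ)
          (Set.mem_Ioi.mpr hu0)
        rw [Real.dist_eq, sub_zero, abs_of_nonneg
          (div_nonneg (by linarith [hple (|t| / N)]) hu0.le)] at h7
        exact h7
      have hpabs : p (|t| / N) = p (t / N) := by
        rcases le_or_gt 0 t with h' | h'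
        · rw [abs_of_nonneg h']
        · rw [abs_of_neg h', neg_div, hev]
      have hkey : 1 - p (t / N) ≤ ε / 2 / T * (|t| / N) := by
        rw [← hpabs]
        rw [div_lt_iff₀ hu0] at hslope
        linarith
      -- Bernoulli
      have hbern : 1 - p (t / N) ^ N ≤ N * (1 - p (t / N)) := by
        have hb := one_add_mul_le_pow (a := p (t / N) - 1) (by linarith [hpnn (t / N)]) N
        have : 1 + (N : ℝ) * (p (t / N) - 1) ≤ p (t / N) ^ N := by
          rwa [add_sub_cancel] at hb
        nlinarith
      have hple' : p (t / N) ^ N ≤ 1 :=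
        pow_le_one₀ (hpnn _) (hple _)
      rw [dist_eq_norm, Real.norm_eq_abs, abs_of_nonneg (by linarith)]
      have h8 : (N : ℝ) * (1 - p (t / N)) ≤ (N : ℝ) * (ε / 2 / T * (|t| / N)) :=
        mul_le_mul_of_nonneg_left hkey hNpos.le
      have h9 : (N : ℝ) * (ε / 2 / T * (|t| / N)) = ε / 2 / T * |t| := by
        field_simp
      have h10 : ε / 2 / T * |t| ≤ ε / 2 := by
        have h5 : |t| ≤ T := abs_le.mpr ⟨ht.1, ht.2⟩
        rw [div_mul_eq_mul_div, div_le_iff₀ hT]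
        have : ε / 2 * |t| ≤ ε / 2 * T := by
          apply mul_le_mul_of_nonneg_left h5 (by positivity)
        linarith
      calc 1 - p (t / N) ^ N ≤ (N : ℝ) * (1 - p (t / N)) := hbern
        _ ≤ ε / 2 / T * |t| := by rw [← h9]; exact h8
        _ ≤ ε / 2 := h10
        _ < ε := by linarith
  tfae_have 3 → 2
  | h3 => by
    apply deriv_of_right_slope hev hple hp0
    have hu := h3 2 two_pos
    rw [Metric.tendstoUniformlyOn_iff] at hu
    rw [NormedAddCommGroup.tendsto_nhds_zero]
    intro ε₀ hε₀
    set ε : ℝ := min (ε₀ / 8) 4⁻¹ with hεdef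
    have hε : 0 < ε := lt_min (by positivity) (by norm_num)
    have hε4 : ε ≤ 4⁻¹ := min_le_right _ _
    have hεε₀ : ε ≤ ε₀ / 8 := min_le_left _ _
    have h4 := hu ε hε
    rw [eventually_atTop] at h4
    obtain ⟨N₀, hN₀⟩ := h4
    have hden : (0:ℝ) < min (1 / ((N₀:ℝ) + 1)) 1 := by positivity
    filter_upwards [Ioo_mem_nhdsGT_of_mem
      (Set.mem_Ico.mpr ⟨le_refl (0:ℝ), hden⟩)] with s hs
    obtain ⟨hs0, hsub⟩ := hs
    have hs1 : s ≤ 1 := le_trans hsub.le (min_le_right _ _)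
    have hsN₀ : s < 1 / ((N₀:ℝ) + 1) := lt_of_lt_of_le hsub (min_le_left _ _)
    set N : ℕ := ⌈1 / s⌉₊ with hNdef
    have hinv1 : (1:ℝ) ≤ 1 / s := by
      rw [le_div_iff₀ hs0]; linarith
    have hNinv : 1 / s ≤ N := Nat.le_ceil _
    have hNpos : (0:ℝ) < N := by linarith
    have hN0 : N ≠ 0 := by
      intro h0
      rw [h0] at hNpos
      simp at hNpos
    have hNN₀ : N₀ ≤ N := by
      rw [lt_div_iff₀ (by positivity : (0:ℝ) < (N₀:ℝ) + 1)] at hsN₀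
      have h5 : (N₀:ℝ) + 1 < 1 / s := by
        rw [lt_div_iff₀ hs0]
        linarith [hsN₀]
      have h6 : (N₀ : ℝ) ≤ (N : ℝ) := by linarith [le_trans h5.le hNinv]
      exact_mod_cast h6
    have hsN1 : 1 ≤ s * N := by
      rw [div_le_iff₀ hs0] at hNinv
      linarith [mul_comm (N:ℝ) s, hNinv]
    have hceil : (N : ℝ) < 1 / s + 1 := Nat.ceil_lt_add_one (by positivity)
    have hsN2 : s * N ≤ 2 := by
      have h7 : s * (N : ℝ) < s * (1 / s + 1) := by
        apply mul_lt_mul_of_pos_left hceil hs0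
      have h8 : s * (1 / s + 1) = 1 + s := by field_simp
      linarith
    have hmem : s * N ∈ Set.Icc (-2 : ℝ) 2 := ⟨by linarith, hsN2⟩
    have h6 := hN₀ N hNN₀ (s * N) hmem
    have htN : s * (N:ℝ) / N = s := by field_simp
    rw [htN] at h6
    rw [Real.dist_eq] at h6
    have hple' : p s ^ N ≤ 1 := pow_le_one₀ (hpnn _) (hple _)
    rw [abs_of_nonneg (by linarith : (0:ℝ) ≤ 1 - p s ^ N)] at h6
    set d : ℝ := 1 - p s ^ N with hddef
    have hd0 : 0 ≤ d := by linarith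
    have hd4 : d ≤ 4⁻¹ := by linarith [lt_of_lt_of_le h6 hε4]
    have hqpos : 0 < p s ^ N := by
      have : p s ^ N = 1 - d := by rw [hddef]; ring
      rw [this]; linarith
    have hps : 0 < p s := by
      rcases lt_or_eq_of_le (hpnn s) with h' | h'
      · exact h'
      · exfalso
        rw [← h', zero_pow hN0] at hqpos
        exact lt_irrefl 0 hqpos
    have hlog1 : 1 - p s ≤ -Real.log (p s) := by
      linarith [Real.log_le_sub_one_of_pos hps]
    have hexp : Real.exp (-(2 * d)) ≤ 1 - d := by
      rw [Real.exp_neg, ← one_div, div_le_iff₀ (Real.exp_pos _)]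
      have ha1 : (1:ℝ) ≤ (1 - d) * (1 + 2 * d) := by nlinarith [hd0, hd4]
      have ha2 : (1 - d) * (1 + 2 * d) ≤ (1 - d) * Real.exp (2 * d) := by
        apply mul_le_mul_of_nonneg_left ?_ (by linarith : (0:ℝ) ≤ 1 - d)
        linarith [Real.add_one_le_exp (2 * d)]
      linarith
    have hlogq : -(2 * d) ≤ Real.log (p s ^ N) := by
      have h7 : Real.log (Real.exp (-(2 * d))) ≤ Real.log (p s ^ N) := by
        apply Real.log_le_log (Real.exp_pos _)
        rw [hddef] at hexp ⊢
        calc Real.exp (-(2 * (1 - p s ^ N))) ≤ 1 - (1 - p s ^ N) := hexp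
          _ = p s ^ N := by ring
      rwa [Real.log_exp] at h7
    have hchain : (N : ℝ) * (1 - p s) ≤ 2 * d := by
      have h8 : (N : ℝ) * (1 - p s) ≤ (N : ℝ) * (-Real.log (p s)) :=
        mul_le_mul_of_nonneg_left hlog1 hNpos.le
      have h9 : (N : ℝ) * (-Real.log (p s)) = -Real.log (p s ^ N) := by
        rw [Real.log_pow]
        push_cast
        ring
      linarith [h8, h9.symm ▸ h8, hlogq]
    have hfinal : (1 - p s) / s ≤ 2 * d := by
      have h10 : (1 - p s) / s ≤ (1 - p s) * N := by
        rw [div_eq_mul_inv, ← one_div]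
        apply mul_le_mul_of_nonneg_left hNinv (by linarith [hple s])
      calc (1 - p s) / s ≤ (1 - p s) * N := h10
        _ = (N : ℝ) * (1 - p s) := by ring
        _ ≤ 2 * d := hchain
    rw [Real.norm_eq_abs, abs_of_nonneg (div_nonneg (by linarith [hple s]) hs0.le)]
    calc (1 - p s) / s ≤ 2 * d := hfinal
      _ < 2 * ε := by linarith
      _ ≤ 2 * (ε₀ / 8) := by linarith
      _ < ε₀ := by linarith
  tfae_finish
end

section
/- Let μ be a Borel probability measure on ℝ, A(s) = ∫_ℝ e^{−isλ} dμ(λ) and p(s) = |A(s)|². Then Λ·μ((−Λ,Λ)ᶜ) → 0 as Λ → +∞ if and only if p is differentiable at 0 with p'(0) = 0. -/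
open MeasureTheory Filter Topology
open scoped ENNReal

lemma compl_Ioo_eq (Λ : ℝ) : (Set.Ioo (-Λ) Λ)ᶜ = {y : ℝ | Λ ≤ |y|} := by
  ext y
  simp only [Set.mem_compl_iff, Set.mem_Ioo, Set.mem_setOf_eq, not_and_or, not_lt, le_abs]
  constructor
  · rintro (h | h)
    · right; linarith
    · left; exact h
  · rintro (h | h)
    · right; exact h
    · left; linarith



/-- helper: nonneg function with `∀ ε>0, eventually ≤ ε` tends to 0 -/
lemma tendsto_zero_of_eps (f : ℝ → ℝ) (h0 : ∀ᶠ Λ in atTop, 0 ≤ f Λ)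
    (h : ∀ ε > (0:ℝ), ∀ᶠ Λ in atTop, f Λ ≤ ε) : Tendsto f atTop (𝓝 0) := by
  rw [NormedAddCommGroup.tendsto_nhds_zero]
  intro ε hε
  filter_upwards [h0, h (ε/2) (by linarith)] with Λ h1 h2
  rw [Real.norm_eq_abs, abs_of_nonneg h1]
  linarith

lemma p_eq_cos (μ : Measure ℝ) [IsProbabilityMeasure μ]
    (A : ℝ → ℂ) (hA : ∀ s : ℝ, A s = ∫ l : ℝ, Complex.exp (-(Complex.I * s * l)) ∂μ)
    (p : ℝ → ℝ) (hp : ∀ s : ℝ, p s = ‖A s‖ ^ 2) (s : ℝ) :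
    p s = ∫ y, Real.cos (s * y) ∂((μ.prod μ).map (fun q : ℝ × ℝ => q.1 - q.2)) := by
  have hsub : Measurable (fun q : ℝ × ℝ => q.1 - q.2) := measurable_fst.sub measurable_snd
  have hcont : Continuous (fun y : ℝ => Complex.exp (-(Complex.I * s * y))) := by continuity
  have hmeas : AEStronglyMeasurable (fun y : ℝ => Complex.exp (-(Complex.I * s * y)))
      ((μ.prod μ).map (fun q : ℝ × ℝ => q.1 - q.2)) := hcont.aestronglyMeasurable
  have hconj : (starRingEnd ℂ) (A s) = ∫ l : ℝ, Complex.exp (Complex.I * s * l) ∂μ := by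
    rw [hA, ← integral_conj]
    congr 1
    ext l
    rw [← Complex.exp_conj]
    congr 1
    simp [Complex.conj_I]
  have hnorm : (p s : ℂ) = A s * (starRingEnd ℂ) (A s) := by
    rw [hp, Complex.mul_conj']
    norm_cast
  have hprod : A s * (starRingEnd ℂ) (A s)
      = ∫ q : ℝ × ℝ, Complex.exp (-(Complex.I * s * (q.1 - q.2))) ∂(μ.prod μ) := by
    rw [hconj, hA, ← integral_prod_mul]
    congr 1
    ext q
    rw [← Complex.exp_add]
    congr 1
    ring
  have hmap : ∫ q : ℝ × ℝ, Complex.exp (-(Complex.I * s * (q.1 - q.2))) ∂(μ.prod μ)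
      = ∫ y, Complex.exp (-(Complex.I * s * y)) ∂((μ.prod μ).map (fun q : ℝ × ℝ => q.1 - q.2)) := by
    rw [integral_map hsub.aemeasurable hmeas]
    norm_cast
  have hint : Integrable (fun y : ℝ => Complex.exp (-(Complex.I * s * y)))
      ((μ.prod μ).map (fun q : ℝ × ℝ => q.1 - q.2)) := by
    have : IsProbabilityMeasure ((μ.prod μ).map (fun q : ℝ × ℝ => q.1 - q.2)) :=
      Measure.isProbabilityMeasure_map hsub.aemeasurable
    apply (integrable_const (1:ℝ)).mono' hmeas
    filter_upwards with y
    rw [Complex.norm_exp]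
    simp
  have hre : ∀ y : ℝ, (Complex.exp (-(Complex.I * s * y))).re = Real.cos (s * y) := by
    intro y
    have h1 : -(Complex.I * s * y) = ((-(s*y) : ℝ) : ℂ) * Complex.I := by push_cast; ring
    rw [h1, Complex.exp_ofReal_mul_I_re, Real.cos_neg]
  have h2 : ∫ y, (Complex.exp (-(Complex.I * s * y))).re
        ∂((μ.prod μ).map (fun q : ℝ × ℝ => q.1 - q.2))
      = (∫ y, Complex.exp (-(Complex.I * s * y))
        ∂((μ.prod μ).map (fun q : ℝ × ℝ => q.1 - q.2))).re := by
    simpa using integral_re hint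
  have h3 : p s = (∫ y, Complex.exp (-(Complex.I * s * y))
      ∂((μ.prod μ).map (fun q : ℝ × ℝ => q.1 - q.2))).re := by
    rw [← hmap, ← hprod, ← hnorm, Complex.ofReal_re]
  rw [h3, ← h2]
  simp_rw [hre]

lemma tailSet_measurable (Λ : ℝ) : MeasurableSet {y : ℝ | Λ ≤ |y|} :=
  measurableSet_le measurable_const continuous_abs.measurable

lemma cos_integrable (ν : Measure ℝ) [IsProbabilityMeasure ν] (s : ℝ) :
    Integrable (fun y : ℝ => Real.cos (s * y)) ν := by
  apply (integrable_const (1:ℝ)).mono' (Continuous.aestronglyMeasurable (by fun_prop))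
  filter_upwards with y
  rw [Real.norm_eq_abs]
  exact Real.abs_cos_le_one _

lemma one_sub_p (ν : Measure ℝ) [IsProbabilityMeasure ν] (p : ℝ → ℝ)
    (hp2 : ∀ s : ℝ, p s = ∫ y, Real.cos (s * y) ∂ν) (s : ℝ) :
    1 - p s = ∫ y, (1 - Real.cos (s * y)) ∂ν := by
  rw [hp2, integral_sub (integrable_const 1) (cos_integrable ν s)]
  simp

lemma tail_of_slope (ν : Measure ℝ) [IsProbabilityMeasure ν]
    (p : ℝ → ℝ) (hp2 : ∀ s : ℝ, p s = ∫ y, Real.cos (s * y) ∂ν)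
    {ε δ : ℝ} (hε : 0 < ε) (hδ : 0 < δ)
    (h : ∀ t : ℝ, 0 < t → t ≤ δ → 1 - p t ≤ ε * t) :
    ∀ Λ : ℝ, 2/δ ≤ Λ → Λ * (ν {y : ℝ | Λ ≤ |y|}).toReal ≤ 2 * ε := by
  intro Λ hΛ
  have hΛ0 : 0 < Λ := lt_of_lt_of_le (by positivity) hΛ
  set u : ℝ := 2/Λ with hu_def
  have hu0 : 0 < u := by positivity
  have huδ : u ≤ δ := by
    rw [hu_def, div_le_iff₀ hΛ0, mul_comm]
    rw [div_le_iff₀ hδ] at hΛ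
    linarith
  set m : Measure ℝ := volume.restrict (Set.Ioc (0:ℝ) u) with hm_def
  haveI : IsFiniteMeasure m := by
    constructor
    rw [hm_def, Measure.restrict_apply_univ, Real.volume_Ioc]
    exact ENNReal.ofReal_lt_top
  set F : ℝ → ℝ → ℝ := fun t y => 1 - Real.cos (t * y) with hF_def
  have hFcont : Continuous (Function.uncurry F) := by
    apply Continuous.sub continuous_const
    exact Real.continuous_cos.comp (continuous_fst.mul continuous_snd)
  have hFint : Integrable (Function.uncurry F) (m.prod ν) := by
    apply (integrable_const (2:ℝ)).mono' hFcont.aestronglyMeasurable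
    filter_upwards with q
    rw [Real.norm_eq_abs, abs_le]
    constructor
    · have := Real.cos_le_one (q.1 * q.2); simp [Function.uncurry, hF_def]; linarith
    · have := Real.neg_one_le_cos (q.1 * q.2); simp [Function.uncurry, hF_def]; linarith
  have hswap : ∫ t, (∫ y, F t y ∂ν) ∂m = ∫ y, (∫ t, F t y ∂m) ∂ν :=
    integral_integral_swap hFint
  set g : ℝ → ℝ := fun y => ∫ t, F t y ∂m with hg_def
  have hg_nonneg : ∀ y, 0 ≤ g y := by
    intro y
    refine integral_nonneg fun t => ?_
    show (0:ℝ) ≤ 1 - Real.cos (t * y)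
    simp [sub_nonneg, Real.cos_le_one]
  have hcalc : ∀ y : ℝ, y ≠ 0 → g y = u - Real.sin (u * y) / y := by
    intro y hy
    have hci : IntervalIntegrable (fun t : ℝ => Real.cos (t * y)) volume 0 u :=
      Continuous.intervalIntegrable (by fun_prop) 0 u
    have h1 : g y = ∫ t in (0:ℝ)..u, (1 - Real.cos (t * y)) :=
      (intervalIntegral.integral_of_le hu0.le).symm
    rw [h1, intervalIntegral.integral_sub intervalIntegrable_const hci,
      intervalIntegral.integral_const]
    have h2 : ∫ t in (0:ℝ)..u, Real.cos (t * y) = Real.sin (u * y) / y := by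
      rw [intervalIntegral.integral_comp_mul_right Real.cos hy]
      simp [integral_cos]
      field_simp
    rw [h2]
    simp
  have key1 : u/2 * (ν {y : ℝ | Λ ≤ |y|}).toReal ≤ ∫ y, g y ∂ν := by
    have hgint : Integrable g ν := by
      have := hFint.integral_prod_right
      simpa [Function.uncurry, hg_def] using this
    have hlow : ∀ y ∈ {y : ℝ | Λ ≤ |y|}, u/2 ≤ g y := by
      intro y hy
      have hyabs : Λ ≤ |y| := hy
      have hypos : 0 < |y| := lt_of_lt_of_le hΛ0 hyabs
      have hy0 : y ≠ 0 := by
        intro h0; rw [h0] at hypos; simp at hypos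
      rw [hcalc y hy0]
      have h5 : |Real.sin (u*y)| ≤ 1 := Real.abs_sin_le_one _
      have h6 : |Real.sin (u*y)|/|y| ≤ 1/Λ := by
        rw [div_le_div_iff₀ hypos hΛ0]
        calc |Real.sin (u*y)| * Λ ≤ 1 * Λ := mul_le_mul_of_nonneg_right h5 hΛ0.le
          _ = Λ := one_mul Λ
          _ ≤ |y| := hyabs
          _ = 1 * |y| := (one_mul _).symm
      have h7 : (1:ℝ)/Λ = u/2 := by rw [hu_def]; ring
      have hsin : Real.sin (u * y) / y ≤ u/2 := by
        calc Real.sin (u*y)/y ≤ |Real.sin (u*y)/y| := le_abs_self _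
          _ = |Real.sin (u*y)|/|y| := abs_div _ _
          _ ≤ 1/Λ := h6
          _ = u/2 := h7
      linarith
    calc u/2 * (ν {y : ℝ | Λ ≤ |y|}).toReal
        ≤ ∫ y in {y : ℝ | Λ ≤ |y|}, g y ∂ν :=
          setIntegral_ge_of_const_le_real (tailSet_measurable Λ) (measure_ne_top ν _) hlow
            hgint.integrableOn
      _ ≤ ∫ y, g y ∂ν := setIntegral_le_integral hgint (Filter.Eventually.of_forall hg_nonneg)
  have key2 : ∫ t, (∫ y, F t y ∂ν) ∂m ≤ ε * u^2 / 2 := by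
    have hmarg : Integrable (fun t => ∫ y, F t y ∂ν) m := by
      have := hFint.integral_prod_left
      simpa [Function.uncurry] using this
    have hub : Integrable (fun t : ℝ => ε * t) m := by
      apply (integrable_const (ε * u)).mono'
        (Continuous.aestronglyMeasurable (by fun_prop))
      rw [hm_def]
      filter_upwards [ae_restrict_mem measurableSet_Ioc] with t ht
      rw [Real.norm_eq_abs, abs_of_nonneg (by nlinarith [ht.1] : (0:ℝ) ≤ ε * t)]
      nlinarith [ht.2]
    have hle : ∀ᵐ t ∂m, (∫ y, F t y ∂ν) ≤ ε * t := by
      rw [hm_def]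
      filter_upwards [ae_restrict_mem measurableSet_Ioc] with t ht
      have heq : (∫ y, F t y ∂ν) = 1 - p t := (one_sub_p ν p hp2 t).symm
      rw [heq]
      exact h t ht.1 (ht.2.trans huδ)
    calc ∫ t, (∫ y, F t y ∂ν) ∂m ≤ ∫ t, ε * t ∂m := integral_mono_ae hmarg hub hle
      _ = ε * u^2/2 := by
        rw [hm_def, ← intervalIntegral.integral_of_le hu0.le,
          intervalIntegral.integral_const_mul, integral_id]
        ring
  have hcomb : u/2 * (ν {y : ℝ | Λ ≤ |y|}).toReal ≤ ε * u^2/2 := by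
    calc u/2 * (ν {y : ℝ | Λ ≤ |y|}).toReal ≤ ∫ y, g y ∂ν := key1
      _ = ∫ t, (∫ y, F t y ∂ν) ∂m := hswap.symm
      _ ≤ ε * u^2/2 := key2
  have htoReal : (ν {y : ℝ | Λ ≤ |y|}).toReal ≤ ε * u := by nlinarith [hcomb]
  calc Λ * (ν {y : ℝ | Λ ≤ |y|}).toReal ≤ Λ * (ε * u) :=
        mul_le_mul_of_nonneg_left htoReal hΛ0.le
    _ = 2 * ε := by rw [hu_def]; field_simp

lemma second_moment_bound (ν : Measure ℝ) [IsProbabilityMeasure ν]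
    {ε Λ₀ B : ℝ} (hε : 0 < ε) (hΛ₀ : 1 ≤ Λ₀) (hB : Λ₀ ≤ B)
    (h : ∀ t : ℝ, Λ₀ ≤ t → t * (ν {y : ℝ | t ≤ |y|}).toReal ≤ ε) :
    ∫ y in {y : ℝ | |y| < B}, y^2 ∂ν ≤ Λ₀^2 + 2 * ε * B := by
  have hΛ₀0 : 0 < Λ₀ := lt_of_lt_of_le one_pos hΛ₀
  have hB0 : 0 < B := lt_of_lt_of_le hΛ₀0 hB
  set S : Set ℝ := {y : ℝ | |y| < B} with hS_def
  have hSmeas : MeasurableSet S := measurableSet_lt continuous_abs.measurable measurable_const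
  set m : Measure ℝ := ν.restrict S with hm_def
  have hfint : Integrable (fun y : ℝ => y^2) m := by
    apply (integrable_const (B^2)).mono' (Continuous.aestronglyMeasurable (by fun_prop))
    rw [hm_def]
    filter_upwards [ae_restrict_mem hSmeas] with y hy
    rw [Real.norm_eq_abs, abs_of_nonneg (sq_nonneg y), ← sq_abs]
    exact pow_le_pow_left₀ (abs_nonneg y) (le_of_lt hy) 2
  have hlayer : ∫ y, y^2 ∂m = ∫ t in Set.Ioi (0:ℝ), (m {a : ℝ | t < a^2}).toReal :=
    hfint.integral_eq_integral_meas_lt (Filter.Eventually.of_forall fun y => sq_nonneg y)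
  -- the dominating function
  set G : ℝ → ℝ := fun t => (m {a : ℝ | t < a^2}).toReal with hG_def
  set H : ℝ → ℝ := fun t =>
    Set.indicator (Set.Ioc 0 (Λ₀^2)) (fun _ => (1:ℝ)) t
    + Set.indicator (Set.Ioc (Λ₀^2) (B^2)) (fun t => ε * (Real.sqrt t)⁻¹) t with hH_def
  have hG_nonneg : ∀ t, 0 ≤ G t := fun t => ENNReal.toReal_nonneg
  have hGH : ∀ t ∈ Set.Ioi (0:ℝ), G t ≤ H t := by
    intro t ht
    have ht0 : 0 < t := ht
    rcases le_or_gt t (Λ₀^2) with h1 | h1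
    · have hmem : t ∈ Set.Ioc 0 (Λ₀^2) := ⟨ht0, h1⟩
      have : H t = 1 + Set.indicator (Set.Ioc (Λ₀^2) (B^2)) (fun t => ε * (Real.sqrt t)⁻¹) t := by
        rw [hH_def]; simp [Set.indicator_of_mem hmem]
      rw [this]
      have h2 : G t ≤ 1 := by
        rw [hG_def]
        have : m {a : ℝ | t < a^2} ≤ 1 := le_trans (Measure.restrict_le_self _) (prob_le_one)
        exact le_trans (ENNReal.toReal_mono ENNReal.one_ne_top this) (by simp)
      have h3 : 0 ≤ Set.indicator (Set.Ioc (Λ₀^2) (B^2)) (fun t => ε * (Real.sqrt t)⁻¹) t := by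
        apply Set.indicator_nonneg
        intro x hx
        have : 0 < Real.sqrt x := Real.sqrt_pos.mpr (lt_trans (by positivity) hx.1)
        positivity
      linarith
    · rcases le_or_gt t (B^2) with h2 | h2
      · have hmem : t ∈ Set.Ioc (Λ₀^2) (B^2) := ⟨h1, h2⟩
        have hHt : H t = ε * (Real.sqrt t)⁻¹ := by
          rw [hH_def]
          simp [Set.indicator_of_mem hmem, Set.indicator_of_notMem (by
            simp only [Set.mem_Ioc, not_and_or, not_le]; right; exact h1 : t ∉ Set.Ioc 0 (Λ₀^2))]
        rw [hHt]
        have hst : Λ₀ ≤ Real.sqrt t := by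
          rw [show Λ₀ = Real.sqrt (Λ₀^2) by rw [Real.sqrt_sq hΛ₀0.le]]
          exact Real.sqrt_le_sqrt h1.le
        have hsub : {a : ℝ | t < a^2} ⊆ {y : ℝ | Real.sqrt t ≤ |y|} := by
          intro a ha
          have : Real.sqrt t ≤ Real.sqrt (a^2) := Real.sqrt_le_sqrt (le_of_lt ha)
          rwa [Real.sqrt_sq_eq_abs] at this
        have hmono : m {a : ℝ | t < a^2} ≤ ν {y : ℝ | Real.sqrt t ≤ |y|} :=
          le_trans (Measure.restrict_le_self _) (measure_mono hsub)
        have htail := h (Real.sqrt t) hst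
        have hsq0 : 0 < Real.sqrt t := lt_of_lt_of_le hΛ₀0 hst
        have : G t ≤ (ν {y : ℝ | Real.sqrt t ≤ |y|}).toReal :=
          ENNReal.toReal_mono (measure_ne_top _ _) hmono
        rw [hG_def] at *
        calc (m {a : ℝ | t < a^2}).toReal ≤ (ν {y : ℝ | Real.sqrt t ≤ |y|}).toReal := this
          _ ≤ ε / Real.sqrt t := by
            rw [le_div_iff₀ hsq0, mul_comm]
            exact htail
          _ = ε * (Real.sqrt t)⁻¹ := by ring
      · have hHt : H t = 0 := by
          rw [hH_def]
          simp [Set.indicator_of_notMem (by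
              simp only [Set.mem_Ioc, not_and_or, not_le]; right; nlinarith : t ∉ Set.Ioc 0 (Λ₀^2)),
            Set.indicator_of_notMem (by
              simp only [Set.mem_Ioc, not_and_or, not_le]; right; exact h2 : t ∉ Set.Ioc (Λ₀^2) (B^2))]
        have hGt : G t = 0 := by
          rw [hG_def]
          show (m {a : ℝ | t < a^2}).toReal = 0
          have hempty : {a : ℝ | t < a^2} ∩ S = ∅ := by
            ext y
            simp only [Set.mem_inter_iff, Set.mem_setOf_eq, Set.mem_empty_iff_false, iff_false,
              not_and]
            intro hy
            rw [hS_def]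
            simp only [Set.mem_setOf_eq, not_lt]
            nlinarith [abs_nonneg y, sq_abs y]
          rw [hm_def, Measure.restrict_apply (by
            exact measurableSet_lt measurable_const (by fun_prop)), hempty, measure_empty]
          simp
        rw [hGt, hHt]
  -- integrability of H
  have hvol1 : volume (Set.Ioc (0:ℝ) (Λ₀^2)) < ⊤ := by
    rw [Real.volume_Ioc]; exact ENNReal.ofReal_lt_top
  have hint1 : Integrable (Set.indicator (Set.Ioc 0 (Λ₀^2)) (fun _ => (1:ℝ)))
      (volume.restrict (Set.Ioi (0:ℝ))) := by
    apply Integrable.restrict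
    rw [integrable_indicator_iff measurableSet_Ioc]
    exact integrableOn_const hvol1.ne
  have hcontOn : ContinuousOn (fun t : ℝ => ε * (Real.sqrt t)⁻¹) (Set.Icc (Λ₀^2) (B^2)) := by
    apply ContinuousOn.mul continuousOn_const
    apply ContinuousOn.inv₀ Real.continuous_sqrt.continuousOn
    intro x hx
    have hx0 : 0 < x := lt_of_lt_of_le (by positivity) hx.1
    exact (Real.sqrt_ne_zero'.mpr hx0)
  have hintOn : IntegrableOn (fun t : ℝ => ε * (Real.sqrt t)⁻¹) (Set.Ioc (Λ₀^2) (B^2)) volume :=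
    (hcontOn.integrableOn_compact isCompact_Icc).mono_set Set.Ioc_subset_Icc_self
  have hint2 : Integrable (Set.indicator (Set.Ioc (Λ₀^2) (B^2)) (fun t => ε * (Real.sqrt t)⁻¹))
      (volume.restrict (Set.Ioi (0:ℝ))) := by
    apply Integrable.restrict
    rw [integrable_indicator_iff measurableSet_Ioc]
    exact hintOn
  have hH_int : Integrable H (volume.restrict (Set.Ioi (0:ℝ))) := by
    rw [hH_def]; exact hint1.add hint2
  -- compare
  have hmono : ∫ t in Set.Ioi (0:ℝ), G t ≤ ∫ t in Set.Ioi (0:ℝ), H t := by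
    apply integral_mono_of_nonneg (Filter.Eventually.of_forall hG_nonneg) hH_int
    filter_upwards [ae_restrict_mem measurableSet_Ioi] with t ht
    exact hGH t ht
  -- compute ∫ H
  have hB2 : Λ₀^2 ≤ B^2 := by nlinarith
  have hI1 : ∫ t in Set.Ioi (0:ℝ), Set.indicator (Set.Ioc 0 (Λ₀^2)) (fun _ => (1:ℝ)) t = Λ₀^2 := by
    rw [integral_indicator measurableSet_Ioc, setIntegral_const, measureReal_def,
      Measure.restrict_apply measurableSet_Ioc,
      Set.inter_eq_left.mpr Set.Ioc_subset_Ioi_self, Real.volume_Ioc,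
      ENNReal.toReal_ofReal (by nlinarith : (0:ℝ) ≤ Λ₀^2 - 0)]
    simp
  have hftc : ∫ t in (Λ₀^2)..(B^2), (Real.sqrt t)⁻¹ = 2*B - 2*Λ₀ := by
    have huIcc : Set.uIcc (Λ₀^2) (B^2) = Set.Icc (Λ₀^2) (B^2) := Set.uIcc_of_le hB2
    have hderiv : ∀ x ∈ Set.uIcc (Λ₀^2) (B^2),
        HasDerivAt (fun y : ℝ => 2 * Real.sqrt y) ((Real.sqrt x)⁻¹) x := by
      intro x hx
      rw [huIcc] at hx
      have hx0 : 0 < x := lt_of_lt_of_le (by positivity) hx.1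
      have := (Real.hasDerivAt_sqrt hx0.ne').const_mul 2
      refine this.congr_deriv ?_
      rw [Real.sqrt_eq_rpow] at *
      ring
    have hii : IntervalIntegrable (fun t : ℝ => (Real.sqrt t)⁻¹) volume (Λ₀^2) (B^2) := by
      apply ContinuousOn.intervalIntegrable
      rw [huIcc]
      apply ContinuousOn.inv₀ Real.continuous_sqrt.continuousOn
      intro x hx
      exact Real.sqrt_ne_zero'.mpr (lt_of_lt_of_le (by positivity) hx.1)
    rw [intervalIntegral.integral_eq_sub_of_hasDerivAt hderiv hii]
    rw [Real.sqrt_sq hB0.le, Real.sqrt_sq hΛ₀0.le]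
  have hI2 : ∫ t in Set.Ioi (0:ℝ),
      Set.indicator (Set.Ioc (Λ₀^2) (B^2)) (fun t => ε * (Real.sqrt t)⁻¹) t
      = ε * (2*B - 2*Λ₀) := by
    have hsub2 : Set.Ioc (Λ₀^2) (B^2) ∩ Set.Ioi (0:ℝ) = Set.Ioc (Λ₀^2) (B^2) := by
      apply Set.inter_eq_left.mpr
      intro t ht
      exact lt_trans (by positivity) ht.1
    rw [integral_indicator measurableSet_Ioc,
      Measure.restrict_restrict measurableSet_Ioc, hsub2,
      ← intervalIntegral.integral_of_le hB2, intervalIntegral.integral_const_mul, hftc]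
  have hHval : ∫ t in Set.Ioi (0:ℝ), H t = Λ₀^2 + ε * (2*B - 2*Λ₀) := by
    rw [hH_def]
    rw [integral_add hint1 hint2, hI1, hI2]
  calc ∫ y in S, y^2 ∂ν = ∫ t in Set.Ioi (0:ℝ), G t := hlayer
    _ ≤ ∫ t in Set.Ioi (0:ℝ), H t := hmono
    _ = Λ₀^2 + ε * (2*B - 2*Λ₀) := hHval
    _ ≤ Λ₀^2 + 2 * ε * B := by nlinarith

lemma cos_integrable' (ν : Measure ℝ) [IsProbabilityMeasure ν] (s : ℝ) :
    Integrable (fun y : ℝ => 1 - Real.cos (s * y)) ν := by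
  apply (integrable_const (2:ℝ)).mono' (Continuous.aestronglyMeasurable (by fun_prop))
  filter_upwards with y
  rw [Real.norm_eq_abs, abs_le]
  constructor
  · have := Real.cos_le_one (s*y); linarith
  · have := Real.neg_one_le_cos (s*y); linarith

lemma one_sub_p_bound (ν : Measure ℝ) [IsProbabilityMeasure ν]
    (p : ℝ → ℝ) (hp2 : ∀ s : ℝ, p s = ∫ y, Real.cos (s * y) ∂ν)
    {ε Λ₀ : ℝ} (hε : 0 < ε) (hΛ₀ : 1 ≤ Λ₀)
    (h : ∀ t : ℝ, Λ₀ ≤ t → t * (ν {y : ℝ | t ≤ |y|}).toReal ≤ ε) :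
    ∀ s : ℝ, 0 < s → s ≤ 1/Λ₀ → 1 - p s ≤ s^2 * Λ₀^2/2 + 3 * (ε * s) := by
  intro s hs0 hs1
  have hΛ₀0 : 0 < Λ₀ := lt_of_lt_of_le one_pos hΛ₀
  set B : ℝ := 1/s with hB_def
  have hB0 : 0 < B := by positivity
  have hBΛ : Λ₀ ≤ B := by
    rw [hB_def, le_div_iff₀ hs0]
    rw [le_div_iff₀ hΛ₀0] at hs1
    linarith
  set S : Set ℝ := {y : ℝ | |y| < B} with hS_def
  have hSmeas : MeasurableSet S := measurableSet_lt continuous_abs.measurable measurable_const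
  have hScompl : Sᶜ = {y : ℝ | B ≤ |y|} := by
    ext y; simp [hS_def, not_lt]
  have hint : Integrable (fun y : ℝ => 1 - Real.cos (s * y)) ν := cos_integrable' ν s
  have one_sub : 1 - p s = ∫ y, (1 - Real.cos (s * y)) ∂ν := by
    rw [hp2, integral_sub (integrable_const 1)]
    · simp
    · apply (integrable_const (1:ℝ)).mono' (Continuous.aestronglyMeasurable (by fun_prop))
      filter_upwards with y
      rw [Real.norm_eq_abs]
      exact Real.abs_cos_le_one _
  have hsplit : ∫ y, (1 - Real.cos (s * y)) ∂ν
      = (∫ y in S, (1 - Real.cos (s * y)) ∂ν) + ∫ y in Sᶜ, (1 - Real.cos (s * y)) ∂ν :=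
    (integral_add_compl hSmeas hint).symm
  -- bound on S
  have hy2int : IntegrableOn (fun y : ℝ => s^2/2 * y^2) S ν := by
    apply (integrable_const (s^2/2 * B^2)).mono' (Continuous.aestronglyMeasurable (by fun_prop))
    filter_upwards [ae_restrict_mem hSmeas] with y hy
    rw [Real.norm_eq_abs, abs_of_nonneg (by positivity)]
    have h1 : y^2 ≤ B^2 := by
      rw [← sq_abs]
      exact pow_le_pow_left₀ (abs_nonneg y) (le_of_lt hy) 2
    nlinarith [sq_nonneg s]
  have hboundS : ∫ y in S, (1 - Real.cos (s * y)) ∂ν ≤ ∫ y in S, s^2/2 * y^2 ∂ν := by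
    apply setIntegral_mono_on hint.integrableOn hy2int hSmeas
    intro y _
    have h1 := Real.one_sub_sq_div_two_le_cos (x := s*y)
    nlinarith [sq_nonneg (s*y), mul_pow s y 2]
  have hSval : ∫ y in S, s^2/2 * y^2 ∂ν ≤ s^2/2 * (Λ₀^2 + 2 * ε * B) := by
    rw [integral_const_mul]
    exact mul_le_mul_of_nonneg_left (second_moment_bound ν hε hΛ₀ hBΛ h) (by positivity)
  -- bound on Sᶜ
  have hboundSc : ∫ y in Sᶜ, (1 - Real.cos (s * y)) ∂ν ≤ 2 * (ν Sᶜ).toReal := by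
    calc ∫ y in Sᶜ, (1 - Real.cos (s * y)) ∂ν ≤ ∫ _ in Sᶜ, (2:ℝ) ∂ν := by
          apply setIntegral_mono_on hint.integrableOn
            (integrableOn_const (measure_lt_top ν _).ne) hSmeas.compl
          intro y _
          have := Real.neg_one_le_cos (s*y)
          linarith
      _ = 2 * (ν Sᶜ).toReal := by rw [setIntegral_const, smul_eq_mul, mul_comm, measureReal_def]
  have htailSc : (ν Sᶜ).toReal ≤ ε * s := by
    rw [hScompl]
    have h1 := h B hBΛ
    have h2 := mul_le_mul_of_nonneg_left h1 hs0.le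
    have h3 : s * (B * (ν {y : ℝ | B ≤ |y|}).toReal) = (ν {y : ℝ | B ≤ |y|}).toReal := by
      rw [hB_def]; field_simp
    rw [h3] at h2
    linarith
  -- combine
  have hkey : s^2/2 * (Λ₀^2 + 2 * ε * B) = s^2 * Λ₀^2/2 + ε * s := by
    rw [hB_def]; field_simp
  rw [one_sub, hsplit]
  calc (∫ y in S, (1 - Real.cos (s * y)) ∂ν) + ∫ y in Sᶜ, (1 - Real.cos (s * y)) ∂ν
      ≤ s^2/2 * (Λ₀^2 + 2 * ε * B) + 2 * (ν Sᶜ).toReal := by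
        have := le_trans hboundS hSval
        linarith
    _ ≤ s^2 * Λ₀^2/2 + ε * s + 2 * (ε * s) := by
        rw [hkey]
        have := htailSc
        linarith
    _ = s^2 * Λ₀^2/2 + 3 * (ε * s) := by ring

lemma nu_tail_le (μ : Measure ℝ) [IsProbabilityMeasure μ] (Λ : ℝ) :
    ((μ.prod μ).map (fun q : ℝ × ℝ => q.1 - q.2)) {y : ℝ | Λ ≤ |y|}
      ≤ 2 * μ {x : ℝ | Λ/2 ≤ |x|} := by
  have hsub : Measurable (fun q : ℝ × ℝ => q.1 - q.2) := measurable_fst.sub measurable_snd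
  rw [Measure.map_apply hsub (tailSet_measurable Λ)]
  have hsubset : (fun q : ℝ × ℝ => q.1 - q.2) ⁻¹' {y : ℝ | Λ ≤ |y|}
      ⊆ ({x : ℝ | Λ/2 ≤ |x|} ×ˢ Set.univ) ∪ (Set.univ ×ˢ {x : ℝ | Λ/2 ≤ |x|}) := by
    intro q hq
    simp only [Set.mem_preimage, Set.mem_setOf_eq] at hq
    by_contra hcon
    simp only [Set.mem_union, Set.mem_prod, Set.mem_setOf_eq, Set.mem_univ, and_true, true_and,
      not_or, not_le] at hcon
    have h1 : |q.1 - q.2| ≤ |q.1| + |q.2| := by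
      calc |q.1 - q.2| = |q.1 + -q.2| := by ring_nf
        _ ≤ |q.1| + |(-q.2)| := abs_add_le _ _
        _ = |q.1| + |q.2| := by rw [abs_neg]
    linarith [hcon.1, hcon.2]
  calc (μ.prod μ) ((fun q : ℝ × ℝ => q.1 - q.2) ⁻¹' {y : ℝ | Λ ≤ |y|})
      ≤ (μ.prod μ) (({x : ℝ | Λ/2 ≤ |x|} ×ˢ Set.univ) ∪ (Set.univ ×ˢ {x : ℝ | Λ/2 ≤ |x|})) :=
        measure_mono hsubset
    _ ≤ (μ.prod μ) ({x : ℝ | Λ/2 ≤ |x|} ×ˢ Set.univ)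
        + (μ.prod μ) (Set.univ ×ˢ {x : ℝ | Λ/2 ≤ |x|}) := measure_union_le _ _
    _ = 2 * μ {x : ℝ | Λ/2 ≤ |x|} := by
        rw [Measure.prod_prod, Measure.prod_prod, measure_univ, mul_one, one_mul, two_mul]

lemma mu_tail_le (μ : Measure ℝ) [IsProbabilityMeasure μ] :
    ∃ m : ℝ, 1 ≤ m ∧ ∀ Λ : ℝ, μ {x : ℝ | Λ + m ≤ |x|}
      ≤ 2 * ((μ.prod μ).map (fun q : ℝ × ℝ => q.1 - q.2)) {y : ℝ | Λ ≤ |y|} := by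
  have hsub : Measurable (fun q : ℝ × ℝ => q.1 - q.2) := measurable_fst.sub measurable_snd
  -- find m with μ {x | m ≤ |x|} ≤ 1/2
  obtain ⟨n, hn⟩ : ∃ n : ℕ, μ {x : ℝ | (n:ℝ) ≤ |x|} ≤ 2⁻¹ := by
    have hanti : Antitone (fun n : ℕ => {x : ℝ | (n:ℝ) ≤ |x|}) := by
      intro a b hab x hx
      simp only [Set.mem_setOf_eq] at *
      exact le_trans (by exact_mod_cast hab) hx
    have hinter : ⋂ n : ℕ, {x : ℝ | (n:ℝ) ≤ |x|} = ∅ := by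
      ext x
      simp only [Set.mem_iInter, Set.mem_setOf_eq, Set.mem_empty_iff_false, iff_false, not_forall,
        not_le]
      obtain ⟨n, hn⟩ := exists_nat_gt |x|
      exact ⟨n, hn⟩
    have htend := tendsto_measure_iInter_atTop (μ := μ)
      (s := fun n : ℕ => {x : ℝ | (n:ℝ) ≤ |x|})
      (fun n => (tailSet_measurable (n:ℝ)).nullMeasurableSet) hanti ⟨0, measure_ne_top μ _⟩
    rw [hinter, measure_empty] at htend
    have hhalfpos : (0:ℝ≥0∞) < 2⁻¹ := by norm_num
    have hev := htend.eventually_lt_const hhalfpos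
    obtain ⟨n, hn⟩ := hev.exists
    exact ⟨n, hn.le⟩
  set m : ℝ := max (n:ℝ) 1 with hm_def
  refine ⟨m, le_max_right _ _, fun Λ => ?_⟩
  have hCm : 2⁻¹ ≤ μ {x : ℝ | |x| < m} := by
    have hsubm : {x : ℝ | m ≤ |x|} ⊆ {x : ℝ | (n:ℝ) ≤ |x|} := by
      intro x hx
      simp only [Set.mem_setOf_eq] at *
      exact le_trans (le_max_left (n:ℝ) 1) hx
    have h1 : μ {x : ℝ | m ≤ |x|} ≤ 2⁻¹ := le_trans (measure_mono hsubm) hn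
    have h2 : {x : ℝ | |x| < m} = {x : ℝ | m ≤ |x|}ᶜ := by
      ext x; simp [not_le]
    rw [h2, measure_compl (tailSet_measurable m) (measure_ne_top μ _), measure_univ]
    calc (2:ℝ≥0∞)⁻¹ = 1 - 2⁻¹ := ENNReal.one_sub_inv_two.symm
      _ ≤ 1 - μ {x : ℝ | m ≤ |x|} := tsub_le_tsub_left h1 1
  -- product set inclusion
  have hincl : {x : ℝ | Λ + m ≤ |x|} ×ˢ {x : ℝ | |x| < m}
      ⊆ (fun q : ℝ × ℝ => q.1 - q.2) ⁻¹' {y : ℝ | Λ ≤ |y|} := by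
    rintro ⟨a, b⟩ ⟨ha, hb⟩
    simp only [Set.mem_preimage, Set.mem_setOf_eq] at *
    have h1 : |a| - |b| ≤ |a - b| := abs_sub_abs_le_abs_sub a b
    linarith
  have hprod : μ {x : ℝ | Λ + m ≤ |x|} * μ {x : ℝ | |x| < m}
      ≤ ((μ.prod μ).map (fun q : ℝ × ℝ => q.1 - q.2)) {y : ℝ | Λ ≤ |y|} := by
    rw [Measure.map_apply hsub (tailSet_measurable Λ), ← Measure.prod_prod]
    exact measure_mono hincl
  have hhalf : μ {x : ℝ | Λ + m ≤ |x|} * 2⁻¹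
      ≤ ((μ.prod μ).map (fun q : ℝ × ℝ => q.1 - q.2)) {y : ℝ | Λ ≤ |y|} :=
    le_trans (mul_le_mul_right hCm _) hprod
  calc μ {x : ℝ | Λ + m ≤ |x|} = 2 * (μ {x : ℝ | Λ + m ≤ |x|} * 2⁻¹) := by
        rw [mul_comm (2:ℝ≥0∞), mul_assoc, ENNReal.inv_mul_cancel two_ne_zero ENNReal.ofNat_ne_top,
          mul_one]
    _ ≤ 2 * ((μ.prod μ).map (fun q : ℝ × ℝ => q.1 - q.2)) {y : ℝ | Λ ≤ |y|} :=
        mul_le_mul_right hhalf 2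


lemma p_zero' (ν : Measure ℝ) [IsProbabilityMeasure ν] (p : ℝ → ℝ)
    (hp2 : ∀ s : ℝ, p s = ∫ y, Real.cos (s * y) ∂ν) : p 0 = 1 := by
  rw [hp2]; simp

lemma p_even' (ν : Measure ℝ) [IsProbabilityMeasure ν] (p : ℝ → ℝ)
    (hp2 : ∀ s : ℝ, p s = ∫ y, Real.cos (s * y) ∂ν) (s : ℝ) : p (-s) = p s := by
  rw [hp2, hp2]
  congr 1
  ext y
  rw [neg_mul, Real.cos_neg]

lemma p_le_one' (ν : Measure ℝ) [IsProbabilityMeasure ν] (p : ℝ → ℝ)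
    (hp2 : ∀ s : ℝ, p s = ∫ y, Real.cos (s * y) ∂ν) (s : ℝ) : 0 ≤ 1 - p s := by
  rw [one_sub_p ν p hp2 s]
  apply integral_nonneg
  intro y
  simp only [Pi.zero_apply, sub_nonneg]
  exact Real.cos_le_one _

/-- direction: μ-tails small → ν-tails small -/
lemma dir1 (μ : Measure ℝ) [IsProbabilityMeasure μ]
    (h : Tendsto (fun Λ : ℝ => Λ * (μ {x : ℝ | Λ ≤ |x|}).toReal) atTop (𝓝 0)) :
    Tendsto (fun Λ : ℝ =>
      Λ * (((μ.prod μ).map (fun q : ℝ × ℝ => q.1 - q.2)) {y : ℝ | Λ ≤ |y|}).toReal)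
      atTop (𝓝 0) := by
  apply tendsto_zero_of_eps
  · filter_upwards [eventually_ge_atTop (0:ℝ)] with Λ hΛ
    exact mul_nonneg hΛ ENNReal.toReal_nonneg
  intro ε hε
  have hcomp : Tendsto (fun Λ : ℝ => (Λ/2) * (μ {x : ℝ | (Λ/2) ≤ |x|}).toReal) atTop (𝓝 0) :=
    h.comp (tendsto_id.atTop_div_const two_pos)
  have hev := (NormedAddCommGroup.tendsto_nhds_zero.mp hcomp) (ε/4) (by linarith)
  filter_upwards [hev, eventually_ge_atTop (0:ℝ)] with Λ hΛ1 hΛ0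
  have hle := nu_tail_le μ Λ
  have htoReal : (((μ.prod μ).map (fun q : ℝ × ℝ => q.1 - q.2)) {y : ℝ | Λ ≤ |y|}).toReal
      ≤ 2 * (μ {x : ℝ | Λ/2 ≤ |x|}).toReal := by
    have h2 : (2 * μ {x : ℝ | Λ/2 ≤ |x|}).toReal = 2 * (μ {x : ℝ | Λ/2 ≤ |x|}).toReal := by
      rw [ENNReal.toReal_mul]; simp
    rw [← h2]
    exact ENNReal.toReal_mono (ENNReal.mul_ne_top ENNReal.ofNat_ne_top (measure_ne_top μ _)) hle
  have habs : (Λ/2) * (μ {x : ℝ | Λ/2 ≤ |x|}).toReal ≤ ε/4 := by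
    have h3 := le_of_lt hΛ1
    rw [Real.norm_eq_abs] at h3
    exact le_trans (le_abs_self _) h3
  calc Λ * (((μ.prod μ).map (fun q : ℝ × ℝ => q.1 - q.2)) {y : ℝ | Λ ≤ |y|}).toReal
      ≤ Λ * (2 * (μ {x : ℝ | Λ/2 ≤ |x|}).toReal) := mul_le_mul_of_nonneg_left htoReal hΛ0
    _ = 4 * ((Λ/2) * (μ {x : ℝ | Λ/2 ≤ |x|}).toReal) := by ring
    _ ≤ 4 * (ε/4) := by linarith
    _ = ε := by ring

/-- direction: ν-tails small → μ-tails small -/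
lemma dir4 (μ : Measure ℝ) [IsProbabilityMeasure μ]
    (h : Tendsto (fun Λ : ℝ =>
        Λ * (((μ.prod μ).map (fun q : ℝ × ℝ => q.1 - q.2)) {y : ℝ | Λ ≤ |y|}).toReal)
      atTop (𝓝 0)) :
    Tendsto (fun Λ : ℝ => Λ * (μ {x : ℝ | Λ ≤ |x|}).toReal) atTop (𝓝 0) := by
  obtain ⟨m, hm1, hmle⟩ := mu_tail_le μ
  apply tendsto_zero_of_eps
  · filter_upwards [eventually_ge_atTop (0:ℝ)] with Λ hΛ
    exact mul_nonneg hΛ ENNReal.toReal_nonneg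
  intro ε hε
  have hev := (NormedAddCommGroup.tendsto_nhds_zero.mp h) (ε/8) (by linarith)
  rw [eventually_atTop] at hev
  obtain ⟨M, hM⟩ := hev
  filter_upwards [eventually_ge_atTop (max M 0 + 2*m + 1)] with Λ hΛ
  have hMle : M ≤ max M 0 := le_max_left _ _
  have h0le : (0:ℝ) ≤ max M 0 := le_max_right _ _
  have hK1 : (1:ℝ) ≤ Λ - m := by linarith
  have hKM : M ≤ Λ - m := by linarith
  have hKm : m ≤ Λ - m := by linarith
  have hK0 : (0:ℝ) < Λ - m := by linarith
  set c : ℝ := (((μ.prod μ).map (fun q : ℝ × ℝ => q.1 - q.2)) {y : ℝ | (Λ - m) ≤ |y|}).toReal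
    with hc_def
  have hc0 : 0 ≤ c := ENNReal.toReal_nonneg
  have hKc : (Λ - m) * c ≤ ε/8 := by
    have := hM (Λ - m) hKM
    rw [Real.norm_eq_abs] at this
    exact le_trans (le_abs_self _) this.le
  have hmono : (μ {x : ℝ | Λ ≤ |x|}).toReal ≤ 2 * c := by
    have h1 := hmle (Λ - m)
    rw [show Λ - m + m = Λ by ring] at h1
    have h2 : (2 * ((μ.prod μ).map (fun q : ℝ × ℝ => q.1 - q.2)) {y : ℝ | (Λ - m) ≤ |y|}).toReal
        = 2 * c := by rw [ENNReal.toReal_mul]; simp [hc_def]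
    rw [← h2]
    exact ENNReal.toReal_mono (ENNReal.mul_ne_top ENNReal.ofNat_ne_top (measure_ne_top _ _)) h1
  have hmc : m * c ≤ ε/8 := by nlinarith
  calc Λ * (μ {x : ℝ | Λ ≤ |x|}).toReal ≤ Λ * (2 * c) := by
        apply mul_le_mul_of_nonneg_left hmono (by linarith)
    _ = 2 * ((Λ - m) * c) + 2 * (m * c) := by ring
    _ ≤ 2 * (ε/8) + 2 * (ε/8) := by linarith
    _ ≤ ε := by linarith

/-- direction: ν-tails small → derivative of p at 0 is 0 -/
lemma dir2 (ν : Measure ℝ) [IsProbabilityMeasure ν]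
    (p : ℝ → ℝ) (hp2 : ∀ s : ℝ, p s = ∫ y, Real.cos (s * y) ∂ν)
    (h : Tendsto (fun Λ : ℝ => Λ * (ν {y : ℝ | Λ ≤ |y|}).toReal) atTop (𝓝 0)) :
    HasDerivAt p 0 0 := by
  rw [hasDerivAt_iff_tendsto_slope]
  rw [NormedAddCommGroup.tendsto_nhds_zero]
  intro ε hε
  set ε' : ℝ := ε/8 with hε'_def
  have hε'0 : 0 < ε' := by rw [hε'_def]; linarith
  -- obtain Λ₀
  have hev := (NormedAddCommGroup.tendsto_nhds_zero.mp h) ε' hε'0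
  rw [eventually_atTop] at hev
  obtain ⟨M, hM⟩ := hev
  set Λ₀ : ℝ := max M 1 with hΛ₀_def
  have hΛ₀1 : 1 ≤ Λ₀ := le_max_right _ _
  have hΛ₀0 : 0 < Λ₀ := lt_of_lt_of_le one_pos hΛ₀1
  have htail : ∀ t : ℝ, Λ₀ ≤ t → t * (ν {y : ℝ | t ≤ |y|}).toReal ≤ ε' := by
    intro t ht
    have h1 := hM t (le_trans (le_max_left _ _) ht)
    rw [Real.norm_eq_abs] at h1
    exact le_trans (le_abs_self _) h1.le
  have hbound := one_sub_p_bound ν p hp2 hε'0 hΛ₀1 htail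
  set δ : ℝ := min (1/Λ₀) (2*ε'/Λ₀^2) with hδ_def
  have hδ0 : 0 < δ := by
    apply lt_min (by positivity) (by positivity)
  have hkey : ∀ s : ℝ, 0 < s → s ≤ δ → 1 - p s ≤ (ε/2) * s := by
    intro s hs0 hsδ
    have h1 := hbound s hs0 (le_trans hsδ (min_le_left _ _))
    have h2 : s ≤ 2*ε'/Λ₀^2 := le_trans hsδ (min_le_right _ _)
    have h3 : s^2 * Λ₀^2/2 ≤ ε' * s := by
      rw [le_div_iff₀ (by positivity : (0:ℝ) < Λ₀^2)] at h2
      nlinarith [mul_le_mul_of_nonneg_left h2 hs0.le]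
    calc 1 - p s ≤ s^2 * Λ₀^2/2 + 3 * (ε' * s) := h1
      _ ≤ ε' * s + 3 * (ε' * s) := by linarith
      _ = (ε/2) * s := by rw [hε'_def]; ring
  -- translate to the slope
  rw [eventually_nhdsWithin_iff, Metric.eventually_nhds_iff]
  refine ⟨δ, hδ0, fun s hdist hs => ?_⟩
  have hs0 : s ≠ 0 := by simpa using hs
  rw [Real.dist_eq, sub_zero] at hdist
  have habs0 : 0 < |s| := abs_pos.mpr hs0
  have hslope : slope p 0 s = (p s - 1) / s := by
    rw [slope_def_field, p_zero' ν p hp2, sub_zero]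
  have hps : 1 - p s = 1 - p |s| := by
    rcases abs_choice s with h1 | h1
    · rw [h1]
    · rw [h1, p_even' ν p hp2]
  have hb : 1 - p |s| ≤ (ε/2) * |s| := hkey |s| habs0 (le_of_lt hdist)
  have hnn : 0 ≤ 1 - p s := p_le_one' ν p hp2 s
  rw [hslope, Real.norm_eq_abs, abs_div, abs_of_nonpos (by linarith : p s - 1 ≤ 0)]
  rw [neg_sub]
  rw [div_lt_iff₀ habs0]
  calc 1 - p s = 1 - p |s| := hps
    _ ≤ (ε/2) * |s| := hb
    _ < ε * |s| := by nlinarith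

/-- direction: derivative of p at 0 is 0 → ν-tails small -/
lemma dir3 (ν : Measure ℝ) [IsProbabilityMeasure ν]
    (p : ℝ → ℝ) (hp2 : ∀ s : ℝ, p s = ∫ y, Real.cos (s * y) ∂ν)
    (h : HasDerivAt p 0 0) :
    Tendsto (fun Λ : ℝ => Λ * (ν {y : ℝ | Λ ≤ |y|}).toReal) atTop (𝓝 0) := by
  rw [hasDerivAt_iff_tendsto_slope] at h
  apply tendsto_zero_of_eps
  · filter_upwards [eventually_ge_atTop (0:ℝ)] with Λ hΛ
    exact mul_nonneg hΛ ENNReal.toReal_nonneg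
  intro ε hε
  have hev := (NormedAddCommGroup.tendsto_nhds_zero.mp h) (ε/2) (by linarith)
  rw [eventually_nhdsWithin_iff, Metric.eventually_nhds_iff] at hev
  obtain ⟨δ, hδ0, hδ⟩ := hev
  have hslope : ∀ t : ℝ, 0 < t → t ≤ δ/2 → 1 - p t ≤ (ε/2) * t := by
    intro t ht0 htδ
    have h1 : dist t 0 < δ := by
      rw [Real.dist_eq, sub_zero, abs_of_pos ht0]; linarith
    have h2 : t ∈ ({0}ᶜ : Set ℝ) := by simp; linarith
    have h3 := hδ h1 h2
    have h4 : slope p 0 t = (p t - 1) / t := by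
      rw [slope_def_field, p_zero' ν p hp2, sub_zero]
    rw [h4, Real.norm_eq_abs, abs_div, abs_of_pos ht0] at h3
    have h5 : |p t - 1| ≤ (ε/2) * t := by
      rw [div_lt_iff₀ ht0] at h3
      exact h3.le
    calc 1 - p t ≤ |p t - 1| := by
          rw [abs_sub_comm]; exact le_abs_self _
      _ ≤ (ε/2) * t := h5
  have := tail_of_slope ν p hp2 (by linarith : (0:ℝ) < ε/2) (by linarith : (0:ℝ) < δ/2) hslope
  filter_upwards [eventually_ge_atTop (2/(δ/2))] with Λ hΛ
  calc Λ * (ν {y : ℝ | Λ ≤ |y|}).toReal ≤ 2 * (ε/2) := this Λ hΛ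
    _ = ε := by ring

theorem stmt_1 (μ : Measure ℝ) [IsProbabilityMeasure μ]
    (A : ℝ → ℂ) (hA : ∀ s : ℝ, A s = ∫ l : ℝ, Complex.exp (-(Complex.I * s * l)) ∂μ)
    (p : ℝ → ℝ) (hp : ∀ s : ℝ, p s = ‖A s‖ ^ 2) :
    Tendsto (fun Λ : ℝ => Λ * (μ (Set.Ioo (-Λ) Λ)ᶜ).toReal) atTop (𝓝 0) ↔
      HasDerivAt p 0 0 := by
  have hsub : Measurable (fun q : ℝ × ℝ => q.1 - q.2) := measurable_fst.sub measurable_snd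
  haveI : IsProbabilityMeasure ((μ.prod μ).map (fun q : ℝ × ℝ => q.1 - q.2)) :=
    Measure.isProbabilityMeasure_map hsub.aemeasurable
  have hp2 : ∀ s : ℝ, p s = ∫ y, Real.cos (s * y)
      ∂((μ.prod μ).map (fun q : ℝ × ℝ => q.1 - q.2)) := p_eq_cos μ A hA p hp
  have hfun : (fun Λ : ℝ => Λ * (μ (Set.Ioo (-Λ) Λ)ᶜ).toReal)
      = fun Λ : ℝ => Λ * (μ {x : ℝ | Λ ≤ |x|}).toReal := by
    funext Λ
    rw [compl_Ioo_eq]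
  rw [hfun]
  constructor
  · intro h
    exact dir2 _ p hp2 (dir1 μ h)
  · intro h
    exact dir4 μ (dir3 _ p hp2 h)
end

section
/- Let μ be a Borel probability measure on ℝ. Then the following are equivalent: (1) Λ·μ((−Λ,Λ)ᶜ) → 0 as Λ → +∞; (2) for every integer k ≥ 1, (1/Λ^k)·∫_{(−Λ,Λ)} λ^{k+1} dμ(λ) → 0 as Λ → +∞. -/
open MeasureTheory Filter Topology

lemma intOn (μ : Measure ℝ) [IsProbabilityMeasure μ] (f : ℝ → ℝ) (hf : Measurable f)
    (m : ℕ) (hb : ∀ l, |f l| = |l| ^ m) (b : ℝ) :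
    IntegrableOn f (Set.Ioo (-b) b) μ := by
  apply Measure.integrableOn_of_bounded (measure_ne_top μ _) hf.aestronglyMeasurable
    (M := b ^ m)
  filter_upwards [ae_restrict_mem measurableSet_Ioo] with l hl
  rw [Real.norm_eq_abs, hb]
  exact pow_le_pow_left₀ (abs_nonneg l) (abs_le.2 ⟨hl.1.le, hl.2.le⟩) m

lemma exists_pow2 (x : ℝ) (hx : 1 ≤ x) : ∃ n : ℕ, (2:ℝ)^n ≤ x ∧ x < 2^(n+1) := by
  have hex : ∃ m : ℕ, x < 2^m := pow_unbounded_of_one_lt x (by norm_num)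
  classical
  have hms : x < 2 ^ Nat.find hex := Nat.find_spec hex
  have hm0 : Nat.find hex ≠ 0 := by
    intro h
    rw [h] at hms; simp at hms; linarith
  obtain ⟨n, hn⟩ := Nat.exists_eq_succ_of_ne_zero hm0
  refine ⟨n, ?_, by rw [← Nat.succ_eq_add_one, ← hn]; exact hms⟩
  by_contra h
  exact Nat.find_min hex (by omega : n < Nat.find hex) (lt_of_not_ge h)

lemma peel (μ : Measure ℝ) [IsProbabilityMeasure μ] (k : ℕ) {a b : ℝ} (ha : 0 ≤ a)
    (hab : a ≤ b) :
    ∫ l in Set.Ioo (-b) b, |l|^(k+1) ∂μ ≤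
      ∫ l in Set.Ioo (-a) a, |l|^(k+1) ∂μ + b^(k+1) * (μ (Set.Ioo (-a) a)ᶜ).toReal := by
  have hb : 0 ≤ b := ha.trans hab
  have hsub : Set.Ioo (-a) a ⊆ Set.Ioo (-b) b := Set.Ioo_subset_Ioo (by linarith) hab
  have hintb : IntegrableOn (fun l : ℝ => |l|^(k+1)) (Set.Ioo (-b) b) μ :=
    intOn μ _ ((measurable_id.abs).pow_const _) (k+1) (fun l => by simp [abs_pow]) b
  have hdiff := integral_diff (f := fun l : ℝ => |l|^(k+1)) (μ := μ) measurableSet_Ioo hintb hsub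
  have h1 : ∫ l in Set.Ioo (-b) b \ Set.Ioo (-a) a, |l|^(k+1) ∂μ ≤
      b^(k+1) * (μ (Set.Ioo (-a) a)ᶜ).toReal := by
    have h2 : ‖∫ l in Set.Ioo (-b) b \ Set.Ioo (-a) a, |l|^(k+1) ∂μ‖ ≤
        b^(k+1) * (μ (Set.Ioo (-b) b \ Set.Ioo (-a) a)).toReal := by
      apply norm_setIntegral_le_of_norm_le_const (measure_lt_top μ _)
      · intro x hx
        rw [Real.norm_eq_abs, abs_of_nonneg (by positivity)]
        exact pow_le_pow_left₀ (abs_nonneg x) (abs_le.2 ⟨hx.1.1.le, hx.1.2.le⟩) _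
    refine (le_trans (le_abs_self _) h2).trans ?_
    have hmeas : (μ (Set.Ioo (-b) b \ Set.Ioo (-a) a)).toReal ≤ (μ (Set.Ioo (-a) a)ᶜ).toReal :=
      ENNReal.toReal_mono (measure_ne_top μ _)
        (measure_mono (fun x hx => hx.2))
    exact mul_le_mul_of_nonneg_left hmeas (by positivity)
  linarith [hdiff ▸ h1, le_of_eq hdiff]

lemma iterF (μ : Measure ℝ) [IsProbabilityMeasure μ] (k : ℕ) {Λ : ℝ} (hΛ : 0 < Λ) (n : ℕ) :
    ∫ l in Set.Ioo (-Λ) Λ, |l|^(k+1) ∂μ ≤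
      (∫ l in Set.Ioo (-(Λ/2^n)) (Λ/2^n), |l|^(k+1) ∂μ)
      + ∑ j ∈ Finset.range n,
          2*(Λ/2^j)^k * ((Λ/2^(j+1)) * (μ (Set.Ioo (-(Λ/2^(j+1))) (Λ/2^(j+1)))ᶜ).toReal) := by
  induction n with
  | zero => simp
  | succ n ih =>
    have ha : (0:ℝ) ≤ Λ/2^(n+1) := by positivity
    have hab : Λ/2^(n+1) ≤ Λ/2^n := by
      apply div_le_div_of_nonneg_left hΛ.le (by positivity)
      exact pow_le_pow_right₀ (by norm_num) (Nat.le_succ n)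
    have hp := peel μ k ha hab
    have key : (Λ/2^n)^(k+1) = 2*(Λ/2^n)^k * (Λ/2^(n+1)) := by
      rw [pow_succ]; field_simp; ring
    rw [Finset.sum_range_succ]
    calc ∫ l in Set.Ioo (-Λ) Λ, |l|^(k+1) ∂μ
        ≤ (∫ l in Set.Ioo (-(Λ/2^n)) (Λ/2^n), |l|^(k+1) ∂μ)
          + ∑ j ∈ Finset.range n,
            2*(Λ/2^j)^k * ((Λ/2^(j+1)) * (μ (Set.Ioo (-(Λ/2^(j+1))) (Λ/2^(j+1)))ᶜ).toReal) := ih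
      _ ≤ ((∫ l in Set.Ioo (-(Λ/2^(n+1))) (Λ/2^(n+1)), |l|^(k+1) ∂μ)
            + (Λ/2^n)^(k+1) * (μ (Set.Ioo (-(Λ/2^(n+1))) (Λ/2^(n+1)))ᶜ).toReal)
          + ∑ j ∈ Finset.range n,
            2*(Λ/2^j)^k * ((Λ/2^(j+1)) * (μ (Set.Ioo (-(Λ/2^(j+1))) (Λ/2^(j+1)))ᶜ).toReal) := by
            gcongr
      _ = _ := by rw [key]; ring

lemma ballBound (μ : Measure ℝ) [IsProbabilityMeasure μ] (k : ℕ) {c : ℝ} (hc : 0 ≤ c) :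
    ∫ l in Set.Ioo (-c) c, |l|^(k+1) ∂μ ≤ c^(k+1) := by
  have h2 : ‖∫ l in Set.Ioo (-c) c, |l|^(k+1) ∂μ‖ ≤ c^(k+1) * (μ (Set.Ioo (-c) c)).toReal := by
    apply norm_setIntegral_le_of_norm_le_const (measure_lt_top μ _)
    · intro x hx
      rw [Real.norm_eq_abs, abs_of_nonneg (by positivity)]
      exact pow_le_pow_left₀ (abs_nonneg x) (abs_le.2 ⟨hx.1.le, hx.2.le⟩) _
  refine (le_abs_self _).trans (h2.trans ?_)
  calc c^(k+1) * (μ (Set.Ioo (-c) c)).toReal ≤ c^(k+1) * 1 := by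
        apply mul_le_mul_of_nonneg_left _ (by positivity)
        exact ENNReal.toReal_le_of_le_ofReal one_pos.le (by simpa using prob_le_one)
    _ = c^(k+1) := mul_one _

lemma forward (μ : Measure ℝ) [IsProbabilityMeasure μ]
    (hT : Tendsto (fun Λ : ℝ => Λ * (μ (Set.Ioo (-Λ) Λ)ᶜ).toReal) atTop (𝓝 0))
    (k : ℕ) (hk : 1 ≤ k) :
    Tendsto (fun Λ : ℝ => (1 / Λ ^ k) * ∫ l in Set.Ioo (-Λ) Λ, l ^ (k + 1) ∂μ)
      atTop (𝓝 0) := by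
  rw [NormedAddCommGroup.tendsto_nhds_zero]
  intro ε hε
  have hε' : 0 < ε/10 := by linarith
  obtain ⟨M0, hM0⟩ := (eventually_atTop).1 ((NormedAddCommGroup.tendsto_nhds_zero.mp hT) _ hε')
  set M : ℝ := max M0 1 with hMdef
  have hM1 : 1 ≤ M := le_max_right _ _
  have hM0' : ∀ s ≥ M, s * (μ (Set.Ioo (-s) s)ᶜ).toReal ≤ ε/10 := by
    intro s hs
    have := hM0 s ((le_max_left _ _).trans hs)
    rw [Real.norm_eq_abs] at this
    exact (le_abs_self _).trans this.le
  filter_upwards [eventually_ge_atTop (max M ((2*M)^(k+1) / (ε/10)))] with Λ hΛ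
  have hΛM : M ≤ Λ := (le_max_left _ _).trans hΛ
  have hΛ1 : 1 ≤ Λ := hM1.trans hΛM
  have hΛpos : 0 < Λ := lt_of_lt_of_le one_pos hΛ1
  have hMpos : 0 < M := lt_of_lt_of_le one_pos hM1
  obtain ⟨n, hn1, hn2⟩ := exists_pow2 (Λ/M) ((one_le_div hMpos).2 hΛM)
  have hball1 : M ≤ Λ/2^n := by
    rw [le_div_iff₀ (by positivity)]
    rw [le_div_iff₀ hMpos] at hn1
    linarith
  have hball2 : Λ/2^n ≤ 2*M := by
    rw [div_le_iff₀ (by positivity)]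
    rw [div_lt_iff₀ hMpos] at hn2
    have : (2:ℝ)^(n+1) = 2 * 2^n := by ring
    nlinarith [pow_pos (by norm_num : (0:ℝ) < 2) n]
  -- norm of the integral bounded by integral of |l|^(k+1)
  have hnorm : ‖∫ l in Set.Ioo (-Λ) Λ, l ^ (k + 1) ∂μ‖ ≤
      ∫ l in Set.Ioo (-Λ) Λ, |l|^(k+1) ∂μ := by
    refine (norm_integral_le_integral_norm _).trans_eq ?_
    simp_rw [Real.norm_eq_abs, abs_pow]
  -- sum bound
  have hsum : ∑ j ∈ Finset.range n,
      2*(Λ/2^j)^k * ((Λ/2^(j+1)) * (μ (Set.Ioo (-(Λ/2^(j+1))) (Λ/2^(j+1)))ᶜ).toReal)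
      ≤ 4 * Λ^k * (ε/10) := by
    have hterm : ∀ j ∈ Finset.range n,
        2*(Λ/2^j)^k * ((Λ/2^(j+1)) * (μ (Set.Ioo (-(Λ/2^(j+1))) (Λ/2^(j+1)))ᶜ).toReal)
        ≤ 2 * Λ^k * (ε/10) * (1/2)^j := by
      intro j hj
      rw [Finset.mem_range] at hj
      have harg : M ≤ Λ/2^(j+1) := by
        refine hball1.trans ?_
        apply div_le_div_of_nonneg_left hΛpos.le (by positivity)
        exact pow_le_pow_right₀ (by norm_num) (by omega)
      have hTle := hM0' _ harg
      have hTnn : 0 ≤ (Λ/2^(j+1)) * (μ (Set.Ioo (-(Λ/2^(j+1))) (Λ/2^(j+1)))ᶜ).toReal := by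
        positivity
      have hpow : (Λ/2^j)^k ≤ Λ^k * (1/2)^j := by
        rw [div_pow, div_eq_mul_inv, ← inv_pow, ← inv_pow, ← pow_mul]
        apply mul_le_mul_of_nonneg_left _ (by positivity)
        calc (2:ℝ)⁻¹^(j*k) ≤ 2⁻¹^j :=
              pow_le_pow_of_le_one (by norm_num) (by norm_num) (Nat.le_mul_of_pos_right j hk)
          _ = ((1:ℝ)/2)^j := by norm_num
      calc 2*(Λ/2^j)^k * ((Λ/2^(j+1)) * (μ (Set.Ioo (-(Λ/2^(j+1))) (Λ/2^(j+1)))ᶜ).toReal)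
          ≤ 2*(Λ/2^j)^k * (ε/10) := by
            apply mul_le_mul_of_nonneg_left hTle (by positivity)
        _ ≤ 2*(Λ^k * (1/2)^j) * (ε/10) := by
            apply mul_le_mul_of_nonneg_right _ hε'.le
            apply mul_le_mul_of_nonneg_left hpow (by norm_num)
        _ = 2 * Λ^k * (ε/10) * (1/2)^j := by ring
    calc ∑ j ∈ Finset.range n,
        2*(Λ/2^j)^k * ((Λ/2^(j+1)) * (μ (Set.Ioo (-(Λ/2^(j+1))) (Λ/2^(j+1)))ᶜ).toReal)
        ≤ ∑ j ∈ Finset.range n, 2 * Λ^k * (ε/10) * (1/2)^j := Finset.sum_le_sum hterm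
      _ = 2 * Λ^k * (ε/10) * ∑ j ∈ Finset.range n, (1/2)^j := by rw [Finset.mul_sum]
      _ ≤ 2 * Λ^k * (ε/10) * 2 := by
          apply mul_le_mul_of_nonneg_left _ (by positivity)
          have hg := geom_sum_eq (by norm_num : (1:ℝ)/2 ≠ 1) n
          rw [hg]
          have h2 : ((1/2:ℝ)^n - 1)/(1/2 - 1) = 2 - 2*(1/2)^n := by ring
          have : (0:ℝ) ≤ (1/2)^n := by positivity
          linarith [h2]
      _ = 4 * Λ^k * (ε/10) := by ring
  have hmain : ∫ l in Set.Ioo (-Λ) Λ, |l|^(k+1) ∂μ ≤ (2*M)^(k+1) + 4 * Λ^k * (ε/10) := by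
    refine (iterF μ k hΛpos n).trans ?_
    have hb := ballBound μ k (c := Λ/2^n) (by positivity)
    have hb2 : (Λ/2^n)^(k+1) ≤ (2*M)^(k+1) := pow_le_pow_left₀ (by positivity) hball2 _
    linarith
  -- final
  have hΛk : (2*M)^(k+1) / (ε/10) ≤ Λ^k := by
    refine le_trans (le_trans ?_ hΛ) ?_
    · exact le_max_right _ _
    · calc Λ = Λ^1 := (pow_one Λ).symm
        _ ≤ Λ^k := pow_le_pow_right₀ hΛ1 hk
  have hfirst : (2*M)^(k+1) / Λ^k ≤ ε/10 := by
    rw [div_le_iff₀ (by positivity)]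
    rw [div_le_iff₀ hε'] at hΛk
    linarith
  have hineq : ‖(1 / Λ ^ k) * ∫ l in Set.Ioo (-Λ) Λ, l ^ (k + 1) ∂μ‖ ≤
      (2*M)^(k+1) / Λ^k + 4 * (ε/10) := by
    rw [norm_mul, Real.norm_eq_abs (1/Λ^k), abs_of_pos (by positivity)]
    calc (1/Λ^k) * ‖∫ l in Set.Ioo (-Λ) Λ, l ^ (k + 1) ∂μ‖
        ≤ (1/Λ^k) * ((2*M)^(k+1) + 4 * Λ^k * (ε/10)) := by
          apply mul_le_mul_of_nonneg_left (hnorm.trans hmain) (by positivity)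
      _ = (2*M)^(k+1) / Λ^k + 4 * (ε/10) := by field_simp
  calc ‖(1 / Λ ^ k) * ∫ l in Set.Ioo (-Λ) Λ, l ^ (k + 1) ∂μ‖
      ≤ (2*M)^(k+1) / Λ^k + 4 * (ε/10) := hineq
    _ ≤ ε/10 + 4*(ε/10) := by linarith
    _ < ε := by linarith

lemma decompR (μ : Measure ℝ) [IsProbabilityMeasure μ] {Λ : ℝ} (hΛ : 0 ≤ Λ) :
    (μ (Set.Ioo (-Λ) Λ)ᶜ).toReal =
      (μ ((Set.Ioo (-Λ) Λ)ᶜ ∩ Set.Ioo (-(2*Λ)) (2*Λ))).toReal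
      + (μ (Set.Ioo (-(2*Λ)) (2*Λ))ᶜ).toReal := by
  have hAB : Set.Ioo (-Λ) Λ ⊆ Set.Ioo (-(2*Λ)) (2*Λ) :=
    Set.Ioo_subset_Ioo (by linarith) (by linarith)
  have hdiff : (Set.Ioo (-Λ) Λ)ᶜ \ Set.Ioo (-(2*Λ)) (2*Λ) = (Set.Ioo (-(2*Λ)) (2*Λ))ᶜ := by
    ext x
    simp only [Set.mem_diff, Set.mem_compl_iff]
    constructor
    · exact fun h => h.2
    · exact fun h => ⟨fun hx => h (hAB hx), h⟩
  have := measure_inter_add_diff (μ := μ) ((Set.Ioo (-Λ) Λ)ᶜ) (measurableSet_Ioo (a := -(2*Λ)) (b := 2*Λ))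
  rw [hdiff] at this
  rw [← this, ENNReal.toReal_add (measure_ne_top μ _) (measure_ne_top μ _)]

lemma annBound (μ : Measure ℝ) [IsProbabilityMeasure μ] {Λ : ℝ} (hΛ : 0 < Λ) :
    Λ * (μ ((Set.Ioo (-Λ) Λ)ᶜ ∩ Set.Ioo (-(2*Λ)) (2*Λ))).toReal ≤
      (1/Λ) * ∫ l in Set.Ioo (-(2*Λ)) (2*Λ), l^2 ∂μ := by
  set s := (Set.Ioo (-Λ) Λ)ᶜ ∩ Set.Ioo (-(2*Λ)) (2*Λ) with hs
  have hmeas : MeasurableSet s := measurableSet_Ioo.compl.inter measurableSet_Ioo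
  have hintB : IntegrableOn (fun l : ℝ => l^2) (Set.Ioo (-(2*Λ)) (2*Λ)) μ :=
    intOn μ _ (measurable_id.pow_const _) 2 (fun l => by simp [abs_pow]) _
  have hints : IntegrableOn (fun l : ℝ => l^2) s μ :=
    hintB.mono_set Set.inter_subset_right
  have h1 : Λ^2 * (μ s).toReal ≤ ∫ l in s, l^2 ∂μ := by
    apply setIntegral_ge_of_const_le_real hmeas (measure_ne_top μ _) _ hints
    intro x hx
    have hx1 := hx.1
    simp only [Set.mem_compl_iff, Set.mem_Ioo, not_and_or, not_lt] at hx1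
    have habs : Λ ≤ |x| := by
      rcases hx1 with h | h
      · rw [abs_of_nonpos (by linarith)]; linarith
      · exact h.trans (le_abs_self x)
    calc Λ^2 ≤ |x|^2 := pow_le_pow_left₀ hΛ.le habs 2
      _ = x^2 := sq_abs x
  have h2 : ∫ l in s, l^2 ∂μ ≤ ∫ l in Set.Ioo (-(2*Λ)) (2*Λ), l^2 ∂μ := by
    apply setIntegral_mono_set hintB
    · filter_upwards with x using sq_nonneg x
    · exact HasSubset.Subset.eventuallyLE Set.inter_subset_right
  have h3 : Λ^2 * (μ s).toReal ≤ ∫ l in Set.Ioo (-(2*Λ)) (2*Λ), l^2 ∂μ := h1.trans h2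
  have hΛ' : Λ * (μ s).toReal = (1/Λ) * (Λ^2 * (μ s).toReal) := by field_simp
  rw [hΛ']
  exact mul_le_mul_of_nonneg_left h3 (by positivity)

lemma iterR (μ : Measure ℝ) [IsProbabilityMeasure μ] {Λ : ℝ} (hΛ : 0 < Λ) (n : ℕ) :
    Λ * (μ (Set.Ioo (-Λ) Λ)ᶜ).toReal ≤
      (∑ j ∈ Finset.range n, (1/2^j) *
        ((2^j*Λ) * (μ ((Set.Ioo (-(2^j*Λ)) (2^j*Λ))ᶜ ∩ Set.Ioo (-(2*(2^j*Λ))) (2*(2^j*Λ)))).toReal))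
      + Λ * (μ (Set.Ioo (-(2^n*Λ)) (2^n*Λ))ᶜ).toReal := by
  induction n with
  | zero => simp
  | succ n ih =>
    have hd := decompR μ (Λ := 2^n*Λ) (by positivity)
    rw [Finset.sum_range_succ]
    have h2 : (2:ℝ)^(n+1)*Λ = 2*(2^n*Λ) := by ring
    rw [h2]
    have key : Λ * (μ (Set.Ioo (-(2^n*Λ)) (2^n*Λ))ᶜ).toReal =
        (1/2^n) * ((2^n*Λ) * (μ ((Set.Ioo (-(2^n*Λ)) (2^n*Λ))ᶜ ∩ Set.Ioo (-(2*(2^n*Λ))) (2*(2^n*Λ)))).toReal)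
        + Λ * (μ (Set.Ioo (-(2*(2^n*Λ))) (2*(2^n*Λ)))ᶜ).toReal := by
      rw [hd, mul_add]
      congr 1
      field_simp
    linarith [ih, key]

lemma tailT (μ : Measure ℝ) [IsProbabilityMeasure μ] {Λ : ℝ} (hΛ : 0 < Λ) :
    Tendsto (fun n : ℕ => Λ * (μ (Set.Ioo (-(2^n*Λ)) (2^n*Λ))ᶜ).toReal) atTop (𝓝 0) := by
  have hanti : Antitone (fun n : ℕ => (Set.Ioo (-((2:ℝ)^n*Λ)) ((2:ℝ)^n*Λ))ᶜ) := by
    intro n m hnm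
    apply Set.compl_subset_compl.2
    apply Set.Ioo_subset_Ioo
    · have : (2:ℝ)^n*Λ ≤ 2^m*Λ := by
        apply mul_le_mul_of_nonneg_right (pow_le_pow_right₀ (by norm_num) hnm) hΛ.le
      linarith
    · exact mul_le_mul_of_nonneg_right (pow_le_pow_right₀ (by norm_num) hnm) hΛ.le
  have hinter : ⋂ n : ℕ, (Set.Ioo (-((2:ℝ)^n*Λ)) ((2:ℝ)^n*Λ))ᶜ = ∅ := by
    ext x
    simp only [Set.mem_iInter, Set.mem_compl_iff, Set.mem_empty_iff_false, iff_false, not_forall,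
      not_not, Set.mem_Ioo]
    obtain ⟨n, hn⟩ : ∃ n : ℕ, |x|/Λ < 2^n := pow_unbounded_of_one_lt (|x|/Λ) (by norm_num)
    refine ⟨n, ?_, ?_⟩
    · rw [div_lt_iff₀ hΛ] at hn
      have := neg_abs_le x
      nlinarith
    · rw [div_lt_iff₀ hΛ] at hn
      have := le_abs_self x
      nlinarith
  have hμ := tendsto_measure_iInter_atTop (μ := μ)
    (fun n => (measurableSet_Ioo.compl).nullMeasurableSet) hanti ⟨0, measure_ne_top μ _⟩
  rw [hinter] at hμ
  simp only [measure_empty] at hμ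
  have htr : Tendsto (fun n : ℕ => (μ (Set.Ioo (-((2:ℝ)^n*Λ)) ((2:ℝ)^n*Λ))ᶜ).toReal) atTop (𝓝 0) := by
    have := (ENNReal.tendsto_toReal ENNReal.zero_ne_top).comp hμ
    exact this
  have := htr.const_mul Λ
  simpa using this

lemma reverse (μ : Measure ℝ) [IsProbabilityMeasure μ]
    (h : Tendsto (fun Λ : ℝ => (1 / Λ ^ 1) * ∫ l in Set.Ioo (-Λ) Λ, l ^ (1 + 1) ∂μ)
      atTop (𝓝 0)) :
    Tendsto (fun Λ : ℝ => Λ * (μ (Set.Ioo (-Λ) Λ)ᶜ).toReal) atTop (𝓝 0) := by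
  rw [NormedAddCommGroup.tendsto_nhds_zero]
  intro ε hε
  have hε' : 0 < ε/8 := by linarith
  obtain ⟨M, hM⟩ := (eventually_atTop).1 ((NormedAddCommGroup.tendsto_nhds_zero.mp h) _ hε')
  have hM' : ∀ s ≥ M, (1 / s ^ 1) * ∫ l in Set.Ioo (-s) s, l ^ 2 ∂μ ≤ ε/8 := by
    intro s hs
    have := hM s hs
    rw [Real.norm_eq_abs] at this
    norm_num at this ⊢
    exact (le_abs_self _).trans (by rw [abs_mul, abs_inv]; exact this.le)
  filter_upwards [eventually_ge_atTop (max (M/2) 1)] with Λ hΛ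
  have hΛ1 : 1 ≤ Λ := (le_max_right _ _).trans hΛ
  have hΛpos : 0 < Λ := lt_of_lt_of_le one_pos hΛ1
  have hTnn : 0 ≤ Λ * (μ (Set.Ioo (-Λ) Λ)ᶜ).toReal := by positivity
  rw [Real.norm_eq_abs, abs_of_nonneg hTnn]
  -- per-annulus bound
  have hann : ∀ j : ℕ,
      (2^j*Λ) * (μ ((Set.Ioo (-(2^j*Λ)) (2^j*Λ))ᶜ ∩ Set.Ioo (-(2*(2^j*Λ))) (2*(2^j*Λ)))).toReal
      ≤ 2 * (ε/8) := by
    intro j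
    have hpos : (0:ℝ) < 2^j*Λ := by positivity
    refine (annBound μ hpos).trans ?_
    have harg : M ≤ 2*(2^j*Λ) := by
      have h1 : M/2 ≤ Λ := (le_max_left _ _).trans hΛ
      have h2 : Λ ≤ 2^j*Λ := le_mul_of_one_le_left hΛpos.le (one_le_pow₀ (by norm_num))
      linarith
    have := hM' _ harg
    have heq : (1/(2^j*Λ)) * ∫ l in Set.Ioo (-(2*(2^j*Λ))) (2*(2^j*Λ)), l^2 ∂μ =
        2 * ((1/(2*(2^j*Λ))^1) * ∫ l in Set.Ioo (-(2*(2^j*Λ))) (2*(2^j*Λ)), l^2 ∂μ) := by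
      rw [pow_one]
      field_simp
    rw [heq]
    linarith
  -- sum over annuli
  have hsum : ∀ n : ℕ, (∑ j ∈ Finset.range n, (1/2^j) *
        ((2^j*Λ) * (μ ((Set.Ioo (-(2^j*Λ)) (2^j*Λ))ᶜ ∩ Set.Ioo (-(2*(2^j*Λ))) (2*(2^j*Λ)))).toReal))
      ≤ 4 * (ε/8) := by
    intro n
    calc (∑ j ∈ Finset.range n, (1/2^j) *
          ((2^j*Λ) * (μ ((Set.Ioo (-(2^j*Λ)) (2^j*Λ))ᶜ ∩ Set.Ioo (-(2*(2^j*Λ))) (2*(2^j*Λ)))).toReal))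
        ≤ ∑ j ∈ Finset.range n, (1/2)^j * (2 * (ε/8)) := by
          apply Finset.sum_le_sum
          intro j hj
          rw [one_div_pow]
          rw [← one_div_pow] at *
          apply mul_le_mul_of_nonneg_left (hann j) (by positivity)
      _ = (∑ j ∈ Finset.range n, (1/2:ℝ)^j) * (2 * (ε/8)) := by rw [Finset.sum_mul]
      _ ≤ 2 * (2 * (ε/8)) := by
          apply mul_le_mul_of_nonneg_right _ (by positivity)
          have hg := geom_sum_eq (by norm_num : (1:ℝ)/2 ≠ 1) n
          rw [hg]
          have h2 : ((1/2:ℝ)^n - 1)/(1/2 - 1) = 2 - 2*(1/2)^n := by ring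
          have : (0:ℝ) ≤ (1/2)^n := by positivity
          linarith
      _ = 4 * (ε/8) := by ring
  -- combine with tail
  have hbound : ∀ n : ℕ, Λ * (μ (Set.Ioo (-Λ) Λ)ᶜ).toReal ≤
      4 * (ε/8) + Λ * (μ (Set.Ioo (-(2^n*Λ)) (2^n*Λ))ᶜ).toReal := by
    intro n
    have := iterR μ hΛpos n
    linarith [hsum n]
  have hlim : Tendsto (fun n : ℕ => 4 * (ε/8) + Λ * (μ (Set.Ioo (-(2^n*Λ)) (2^n*Λ))ᶜ).toReal)
      atTop (𝓝 (4 * (ε/8) + 0)) := tendsto_const_nhds.add (tailT μ hΛpos)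
  have hfin : Λ * (μ (Set.Ioo (-Λ) Λ)ᶜ).toReal ≤ 4 * (ε/8) + 0 :=
    ge_of_tendsto hlim (Eventually.of_forall hbound)
  linarith

theorem stmt_3 (μ : Measure ℝ) [IsProbabilityMeasure μ] :
    Tendsto (fun Λ : ℝ => Λ * (μ (Set.Ioo (-Λ) Λ)ᶜ).toReal) atTop (𝓝 0) ↔
      ∀ k : ℕ, 1 ≤ k →
        Tendsto (fun Λ : ℝ => (1 / Λ ^ k) * ∫ l in Set.Ioo (-Λ) Λ, l ^ (k + 1) ∂μ)
          atTop (𝓝 0) := by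
  constructor
  · exact fun hT k hk => forward μ hT k hk
  · exact fun h => reverse μ (h 1 le_rfl)
end

section
/- Let μ be a Borel probability measure on ℝ such that Λ·μ((−Λ,Λ)ᶜ) → 0 as Λ → +∞. Then for every integer k ≥ 1, (1/Λ^k)·∫_{(−Λ,Λ)} λ^{k+1} dμ(λ) → 0 as Λ → +∞. -/
open MeasureTheory Filter Topology

theorem stmt_4 (μ : Measure ℝ) [IsProbabilityMeasure μ]
    (h : Tendsto (fun Λ : ℝ => Λ * (μ (Set.Ioo (-Λ) Λ)ᶜ).toReal) atTop (𝓝 0)) :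
    ∀ k : ℕ, 1 ≤ k →
      Tendsto (fun Λ : ℝ => (1 / Λ ^ k) * ∫ l in Set.Ioo (-Λ) Λ, l ^ (k + 1) ∂μ)
        atTop (𝓝 0) := by
  intro k hk
  obtain ⟨m, rfl⟩ : ∃ m, k = m + 1 := ⟨k - 1, (Nat.succ_pred_eq_of_pos hk).symm⟩
  clear hk
  rw [NormedAddCommGroup.tendsto_nhds_zero]
  intro ε hε
  set ε' : ℝ := ε / (2 * (m + 2)) with hε'def
  have hε' : 0 < ε' := by positivity
  have hev : ∀ᶠ Λ in atTop, Λ * (μ (Set.Ioo (-Λ) Λ)ᶜ).toReal < ε' :=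
    h.eventually (gt_mem_nhds hε')
  rw [eventually_atTop] at hev
  obtain ⟨M₀, hM₀⟩ := hev
  set M : ℝ := max M₀ 1 with hMdef
  have hM1 : (1 : ℝ) ≤ M := le_max_right _ _
  have hM0 : (0 : ℝ) < M := lt_of_lt_of_le one_pos hM1
  have hMtail : ∀ t : ℝ, M ≤ t → μ (Set.Ioo (-t) t)ᶜ ≤ ENNReal.ofReal (ε' / t) := by
    intro t ht
    have ht0 : (0 : ℝ) < t := lt_of_lt_of_le hM0 ht
    have h1 : t * (μ (Set.Ioo (-t) t)ᶜ).toReal < ε' := hM₀ t (le_trans (le_max_left _ _) ht)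
    have h2 : (μ (Set.Ioo (-t) t)ᶜ).toReal ≤ ε' / t := by
      rw [le_div_iff₀ ht0]
      nlinarith [h1]
    calc μ (Set.Ioo (-t) t)ᶜ = ENNReal.ofReal (μ (Set.Ioo (-t) t)ᶜ).toReal :=
          (ENNReal.ofReal_toReal (measure_ne_top μ _)).symm
      _ ≤ ENNReal.ofReal (ε' / t) := ENNReal.ofReal_le_ofReal h2
  rw [eventually_atTop]
  refine ⟨max (M + 1) (2 * (m + 2) * M ^ (m + 2) / ε + 1), fun Λ hΛ => ?_⟩
  have hΛM : M < Λ := lt_of_lt_of_le (by linarith) (le_trans (le_max_left _ _) hΛ)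
  have hΛ1 : (1 : ℝ) ≤ Λ := le_trans hM1 hΛM.le
  have hΛ0 : (0 : ℝ) < Λ := lt_of_lt_of_le one_pos hΛ1
  have hΛbig : 2 * (m + 2) * M ^ (m + 2) / ε + 1 ≤ Λ := le_trans (le_max_right _ _) hΛ
  set ν : Measure ℝ := μ.restrict (Set.Ioo (-Λ) Λ) with hνdef
  set p : ℝ := (m : ℝ) + 2 with hpdef
  have hp : 0 < p := by positivity
  -- layer cake formula
  have layer : ∫⁻ ω, ENNReal.ofReal (|ω| ^ p) ∂ν =
      ENNReal.ofReal p * ∫⁻ t in Set.Ioi (0 : ℝ),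
        ν {a : ℝ | t ≤ |a|} * ENNReal.ofReal (t ^ (p - 1)) :=
    lintegral_rpow_eq_lintegral_meas_le_mul ν (ae_of_all _ fun x => abs_nonneg x)
      measurable_abs.aemeasurable hp
  set F : ℝ → ENNReal := fun t => ν {a : ℝ | t ≤ |a|} * ENNReal.ofReal (t ^ (p - 1)) with hFdef
  have hp1 : ∀ t : ℝ, 0 ≤ t → t ^ (p - 1) = t ^ (m + 1) := by
    intro t ht
    have : p - 1 = ((m + 1 : ℕ) : ℝ) := by push_cast [hpdef]; ring
    rw [this, Real.rpow_natCast]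
  -- F vanishes on [Λ, ∞)
  have hF0 : ∫⁻ t in Set.Ici Λ, F t = 0 := by
    have : ∫⁻ t in Set.Ici Λ, F t = ∫⁻ _ in Set.Ici Λ, (0 : ENNReal) := by
      apply setLIntegral_congr_fun measurableSet_Ici
      intro t ht
      have hset : {a : ℝ | t ≤ |a|} ∩ Set.Ioo (-Λ) Λ = ∅ := by
        apply Set.eq_empty_iff_forall_notMem.mpr
        rintro a ⟨hta, h1, h2⟩
        exact absurd (lt_of_le_of_lt hta (abs_lt.mpr ⟨h1, h2⟩)) (not_lt.mpr ht)
      have : ν {a : ℝ | t ≤ |a|} = 0 := by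
        rw [hνdef, Measure.restrict_apply (measurableSet_le measurable_const measurable_abs),
          hset, measure_empty]
      simp [hFdef, this]
    rw [this, lintegral_zero]
  -- bound on (0, M)
  have hFsmall : ∫⁻ t in Set.Ioo (0 : ℝ) M, F t ≤ ENNReal.ofReal (M ^ (m + 2)) := by
    have hb : ∀ t ∈ Set.Ioo (0 : ℝ) M, F t ≤ ENNReal.ofReal (M ^ (m + 1)) := by
      intro t ⟨ht0, htM⟩
      have h1 : ν {a : ℝ | t ≤ |a|} ≤ 1 := by
        calc ν {a : ℝ | t ≤ |a|} ≤ ν Set.univ := measure_mono (Set.subset_univ _)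
          _ ≤ μ Set.univ := Measure.restrict_le_self _
          _ = 1 := measure_univ
      calc F t ≤ 1 * ENNReal.ofReal (t ^ (p - 1)) := mul_le_mul_left h1 _
        _ = ENNReal.ofReal (t ^ (m + 1)) := by rw [one_mul, hp1 t ht0.le]
        _ ≤ ENNReal.ofReal (M ^ (m + 1)) :=
            ENNReal.ofReal_le_ofReal (pow_le_pow_left₀ ht0.le htM.le _)
    calc ∫⁻ t in Set.Ioo (0 : ℝ) M, F t
        ≤ ∫⁻ _ in Set.Ioo (0 : ℝ) M, ENNReal.ofReal (M ^ (m + 1)) :=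
          lintegral_mono_ae ((ae_restrict_iff' measurableSet_Ioo).mpr (ae_of_all _ hb))
      _ = ENNReal.ofReal (M ^ (m + 1)) * volume (Set.Ioo (0 : ℝ) M) := setLIntegral_const _ _
      _ = ENNReal.ofReal (M ^ (m + 1)) * ENNReal.ofReal M := by
          rw [Real.volume_Ioo, sub_zero]
      _ = ENNReal.ofReal (M ^ (m + 2)) := by
          rw [← ENNReal.ofReal_mul (by positivity), ← pow_succ]
  -- bound on [M, Λ)
  have hFmid : ∫⁻ t in Set.Ico M Λ, F t ≤ ENNReal.ofReal (ε' * Λ ^ (m + 1)) := by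
    have hb : ∀ t ∈ Set.Ico M Λ, F t ≤ ENNReal.ofReal (ε' * Λ ^ m) := by
      intro t ⟨htM, htΛ⟩
      have ht0 : (0 : ℝ) < t := lt_of_lt_of_le hM0 htM
      have h1 : ν {a : ℝ | t ≤ |a|} ≤ ENNReal.ofReal (ε' / t) := by
        calc ν {a : ℝ | t ≤ |a|} ≤ μ {a : ℝ | t ≤ |a|} := Measure.restrict_le_self _
          _ ≤ μ (Set.Ioo (-t) t)ᶜ := by
              apply measure_mono
              intro a ha
              simp only [Set.mem_setOf_eq] at ha
              simp only [Set.mem_compl_iff, Set.mem_Ioo]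
              rintro ⟨hc1, hc2⟩
              exact absurd ha (not_le.mpr (abs_lt.mpr ⟨hc1, hc2⟩))
          _ ≤ ENNReal.ofReal (ε' / t) := hMtail t htM
      calc F t ≤ ENNReal.ofReal (ε' / t) * ENNReal.ofReal (t ^ (p - 1)) :=
            mul_le_mul_left h1 _
        _ = ENNReal.ofReal (ε' / t * t ^ (m + 1)) := by
            rw [hp1 t ht0.le, ← ENNReal.ofReal_mul (by positivity)]
        _ = ENNReal.ofReal (ε' * t ^ m) := by
            congr 1
            field_simp [pow_succ]
            ring
        _ ≤ ENNReal.ofReal (ε' * Λ ^ m) := by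
            apply ENNReal.ofReal_le_ofReal
            exact mul_le_mul_of_nonneg_left (pow_le_pow_left₀ ht0.le htΛ.le _) hε'.le
    calc ∫⁻ t in Set.Ico M Λ, F t
        ≤ ∫⁻ _ in Set.Ico M Λ, ENNReal.ofReal (ε' * Λ ^ m) :=
          lintegral_mono_ae ((ae_restrict_iff' measurableSet_Ico).mpr (ae_of_all _ hb))
      _ = ENNReal.ofReal (ε' * Λ ^ m) * volume (Set.Ico M Λ) := setLIntegral_const _ _
      _ = ENNReal.ofReal (ε' * Λ ^ m) * ENNReal.ofReal (Λ - M) := by rw [Real.volume_Ico]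
      _ ≤ ENNReal.ofReal (ε' * Λ ^ m) * ENNReal.ofReal Λ :=
          mul_le_mul_right (ENNReal.ofReal_le_ofReal (by linarith)) _
      _ = ENNReal.ofReal (ε' * Λ ^ (m + 1)) := by
          rw [← ENNReal.ofReal_mul (by positivity), pow_succ]
          ring_nf
  -- combine
  have hJ : ∫⁻ t in Set.Ioi (0 : ℝ), F t ≤
      ENNReal.ofReal (M ^ (m + 2)) + ENNReal.ofReal (ε' * Λ ^ (m + 1)) := by
    have hsplit1 : Set.Ioo (0 : ℝ) Λ ∪ Set.Ici Λ = Set.Ioi 0 := Set.Ioo_union_Ici_eq_Ioi hΛ0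
    have hsplit2 : Set.Ioo (0 : ℝ) M ∪ Set.Ico M Λ = Set.Ioo 0 Λ :=
      Set.Ioo_union_Ico_eq_Ioo hM0 hΛM.le
    have hd1 : Disjoint (Set.Ioo (0 : ℝ) Λ) (Set.Ici Λ) :=
      (Set.Iio_disjoint_Ici le_rfl).mono_left Set.Ioo_subset_Iio_self
    have hd2 : Disjoint (Set.Ioo (0 : ℝ) M) (Set.Ico M Λ) :=
      (Set.Iio_disjoint_Ici le_rfl).mono (Set.Ioo_subset_Iio_self) (Set.Ico_subset_Ici_self)
    calc ∫⁻ t in Set.Ioi (0 : ℝ), F t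
        = (∫⁻ t in Set.Ioo (0 : ℝ) Λ, F t) + ∫⁻ t in Set.Ici Λ, F t := by
          rw [← hsplit1, lintegral_union measurableSet_Ici hd1]
      _ = (∫⁻ t in Set.Ioo (0 : ℝ) M, F t) + ∫⁻ t in Set.Ico M Λ, F t := by
          rw [hF0, add_zero, ← hsplit2, lintegral_union measurableSet_Ico hd2]
      _ ≤ ENNReal.ofReal (M ^ (m + 2)) + ENNReal.ofReal (ε' * Λ ^ (m + 1)) :=
          add_le_add hFsmall hFmid
  -- the main integral bound
  have hnorm : ‖∫ l in Set.Ioo (-Λ) Λ, l ^ (m + 1 + 1) ∂μ‖ ≤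
      p * (M ^ (m + 2) + ε' * Λ ^ (m + 1)) := by
    have h1 : ‖∫ l in Set.Ioo (-Λ) Λ, l ^ (m + 1 + 1) ∂μ‖ ≤
        (∫⁻ l, ENNReal.ofReal ‖l ^ (m + 1 + 1)‖ ∂ν).toReal :=
      norm_integral_le_lintegral_norm _
    have h2 : ∀ l : ℝ, ENNReal.ofReal ‖l ^ (m + 1 + 1)‖ = ENNReal.ofReal (|l| ^ p) := by
      intro l
      congr 1
      rw [Real.norm_eq_abs, abs_pow]
      have : p = ((m + 2 : ℕ) : ℝ) := by push_cast [hpdef]; ring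
      rw [this, Real.rpow_natCast]
    have h3 : (∫⁻ l, ENNReal.ofReal ‖l ^ (m + 1 + 1)‖ ∂ν) ≤
        ENNReal.ofReal (p * (M ^ (m + 2) + ε' * Λ ^ (m + 1))) := by
      simp_rw [h2]
      rw [layer]
      calc ENNReal.ofReal p * ∫⁻ t in Set.Ioi (0 : ℝ), F t
          ≤ ENNReal.ofReal p *
            (ENNReal.ofReal (M ^ (m + 2)) + ENNReal.ofReal (ε' * Λ ^ (m + 1))) :=
            mul_le_mul_right hJ _
        _ = ENNReal.ofReal (p * (M ^ (m + 2) + ε' * Λ ^ (m + 1))) := by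
            rw [← ENNReal.ofReal_add (by positivity) (by positivity),
              ← ENNReal.ofReal_mul hp.le]
    calc ‖∫ l in Set.Ioo (-Λ) Λ, l ^ (m + 1 + 1) ∂μ‖
        ≤ (∫⁻ l, ENNReal.ofReal ‖l ^ (m + 1 + 1)‖ ∂ν).toReal := h1
      _ ≤ (ENNReal.ofReal (p * (M ^ (m + 2) + ε' * Λ ^ (m + 1)))).toReal :=
          ENNReal.toReal_mono ENNReal.ofReal_ne_top h3
      _ = p * (M ^ (m + 2) + ε' * Λ ^ (m + 1)) :=
          ENNReal.toReal_ofReal (by positivity)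
  -- final arithmetic
  have hΛpow : (0 : ℝ) < Λ ^ (m + 1) := by positivity
  have hΛpow1 : Λ ≤ Λ ^ (m + 1) := le_self_pow₀ hΛ1 (Nat.succ_ne_zero m)
  rw [norm_mul, norm_div, norm_one, norm_pow, Real.norm_eq_abs, abs_of_pos hΛ0]
  have hbound : ‖∫ l in Set.Ioo (-Λ) Λ, l ^ (m + 1 + 1) ∂μ‖ / Λ ^ (m + 1) ≤
      p * M ^ (m + 2) / Λ + p * ε' := by
    rw [div_le_iff₀ hΛpow]
    calc ‖∫ l in Set.Ioo (-Λ) Λ, l ^ (m + 1 + 1) ∂μ‖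
        ≤ p * (M ^ (m + 2) + ε' * Λ ^ (m + 1)) := hnorm
      _ = p * M ^ (m + 2) + p * ε' * Λ ^ (m + 1) := by ring
      _ ≤ p * M ^ (m + 2) / Λ * Λ ^ (m + 1) + p * ε' * Λ ^ (m + 1) := by
          have : p * M ^ (m + 2) ≤ p * M ^ (m + 2) / Λ * Λ ^ (m + 1) := by
            rw [div_mul_eq_mul_div, le_div_iff₀ hΛ0]
            have hpm : (0 : ℝ) ≤ p * M ^ (m + 2) := by positivity
            calc p * M ^ (m + 2) * Λ ≤ p * M ^ (m + 2) * Λ ^ (m + 1) :=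
                  mul_le_mul_of_nonneg_left hΛpow1 hpm
              _ = p * M ^ (m + 2) * Λ ^ (m + 1) := rfl
          linarith
      _ = (p * M ^ (m + 2) / Λ + p * ε') * Λ ^ (m + 1) := by ring
  have hpε' : p * ε' = ε / 2 := by
    rw [hε'def, hpdef]
    field_simp
  have hfirst : p * M ^ (m + 2) / Λ < ε / 2 := by
    rw [div_lt_iff₀ hΛ0]
    have : 2 * (m + 2) * M ^ (m + 2) / ε + 1 ≤ Λ := hΛbig
    have h4 : 2 * ((m : ℝ) + 2) * M ^ (m + 2) ≤ ε * (Λ - 1) := by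
      rw [div_add' _ _ _ hε.ne', div_le_iff₀ hε] at this
      nlinarith
    rw [hpdef]
    nlinarith
  calc 1 / Λ ^ (m + 1) * ‖∫ l in Set.Ioo (-Λ) Λ, l ^ (m + 1 + 1) ∂μ‖
      = ‖∫ l in Set.Ioo (-Λ) Λ, l ^ (m + 1 + 1) ∂μ‖ / Λ ^ (m + 1) := by ring
    _ ≤ p * M ^ (m + 2) / Λ + p * ε' := hbound
    _ < ε / 2 + ε / 2 := by rw [hpε']; linarith
    _ = ε := by ring
end

section
/- Let μ be a Borel probability measure on ℝ such that (1/Λ)·∫_{(−Λ,Λ)} λ² dμ(λ) → 0 as Λ → +∞. Then Λ·μ((−Λ,Λ)ᶜ) → 0 as Λ → +∞. (Indeed, if (1/Λ)·∫_{(−Λ,Λ)} λ² dμ(λ) < ε for all Λ > Λ₀, then Λ·μ((−Λ,Λ)ᶜ) ≤ 2ε for all Λ > Λ₀.) -/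
open MeasureTheory Filter Topology
open scoped ENNReal

/-- Generic improper lintegral of `c * s ^ p` over `Ioi b`, `p < -1`. -/
lemma lint_rpow_aux {b c p : ℝ} (hb : 0 < b) (hc : 0 ≤ c) (hp : p < -1) :
    ∫⁻ s in Set.Ioi b, ENNReal.ofReal (c * s ^ p) = ENNReal.ofReal (c * (-b ^ (p + 1) / (p + 1))) := by
  rw [← MeasureTheory.ofReal_integral_eq_lintegral_ofReal
      ((integrableOn_Ioi_rpow_of_lt hp hb).const_mul c)
      (by
        filter_upwards [ae_restrict_mem measurableSet_Ioi] with s hs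
        have hs0 : (0:ℝ) ≤ s := le_of_lt (lt_trans hb hs)
        exact mul_nonneg hc (Real.rpow_nonneg hs0 p))]
  rw [integral_const_mul, integral_Ioi_rpow_of_lt hp hb]

lemma lint_inv_pow3 {b c : ℝ} (hb : 0 < b) (hc : 0 ≤ c) :
    ∫⁻ s in Set.Ioi b, ENNReal.ofReal (c * (s ^ 3)⁻¹) = ENNReal.ofReal (c / (2 * b ^ 2)) := by
  have h1 : ∫⁻ s in Set.Ioi b, ENNReal.ofReal (c * (s ^ 3)⁻¹)
      = ∫⁻ s in Set.Ioi b, ENNReal.ofReal (c * s ^ (-3 : ℝ)) := by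
    refine setLIntegral_congr_fun measurableSet_Ioi (fun s hs => ?_)
    have hs0 : (0:ℝ) < s := lt_trans hb hs
    rw [Real.rpow_neg hs0.le, show ((3:ℝ)) = ((3:ℕ):ℝ) by norm_num, Real.rpow_natCast]
  rw [h1, lint_rpow_aux hb hc (by norm_num)]
  congr 1
  rw [show ((-3:ℝ)+1) = -2 by norm_num, Real.rpow_neg hb.le,
    show ((2:ℝ)) = ((2:ℕ):ℝ) by norm_num, Real.rpow_natCast]
  field_simp

lemma lint_inv_pow2 {b c : ℝ} (hb : 0 < b) (hc : 0 ≤ c) :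
    ∫⁻ s in Set.Ioi b, ENNReal.ofReal (c * (s ^ 2)⁻¹) = ENNReal.ofReal (c / b) := by
  have h1 : ∫⁻ s in Set.Ioi b, ENNReal.ofReal (c * (s ^ 2)⁻¹)
      = ∫⁻ s in Set.Ioi b, ENNReal.ofReal (c * s ^ (-2 : ℝ)) := by
    refine setLIntegral_congr_fun measurableSet_Ioi (fun s hs => ?_)
    have hs0 : (0:ℝ) < s := lt_trans hb hs
    rw [Real.rpow_neg hs0.le, show ((2:ℝ)) = ((2:ℕ):ℝ) by norm_num, Real.rpow_natCast]
  rw [h1, lint_rpow_aux hb hc (by norm_num)]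
  congr 1
  rw [show ((-2:ℝ)+1) = -1 by norm_num, Real.rpow_neg hb.le, Real.rpow_one]
  field_simp

/-- Key quantitative lemma. -/
lemma key_lemma (μ : Measure ℝ) [IsProbabilityMeasure μ] {ε Λ₀ : ℝ} (hε : 0 < ε) (hΛ₀ : 0 < Λ₀)
    (H : ∀ Λ > Λ₀, (1 / Λ) * ∫ l in Set.Ioo (-Λ) Λ, l ^ 2 ∂μ < ε) :
    ∀ Λ > Λ₀, Λ * (μ (Set.Ioo (-Λ) Λ)ᶜ).toReal ≤ 2 * ε := by
  intro Λ hΛ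
  have hΛ0 : 0 < Λ := lt_trans hΛ₀ hΛ
  -- bound on the truncated second moment, in ℝ≥0∞ form
  have hJ : ∀ s : ℝ, Λ < s →
      ∫⁻ l in Set.Ioo (-s) s, ENNReal.ofReal (l ^ 2) ∂μ ≤ ENNReal.ofReal (ε * s) := by
    intro s hs
    have hs0 : 0 < s := lt_trans hΛ0 hs
    have hfin : (∫⁻ l in Set.Ioo (-s) s, ENNReal.ofReal (l ^ 2) ∂μ) ≤ ENNReal.ofReal (s ^ 2) := by
      calc ∫⁻ l in Set.Ioo (-s) s, ENNReal.ofReal (l ^ 2) ∂μ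
          ≤ ∫⁻ _ in Set.Ioo (-s) s, ENNReal.ofReal (s ^ 2) ∂μ := by
            refine setLIntegral_mono measurable_const (fun l hl => ?_)
            exact ENNReal.ofReal_le_ofReal (by nlinarith [hl.1, hl.2])
        _ = ENNReal.ofReal (s ^ 2) * μ (Set.Ioo (-s) s) := setLIntegral_const _ _
        _ ≤ ENNReal.ofReal (s ^ 2) * 1 := by gcongr; exact prob_le_one
        _ = ENNReal.ofReal (s ^ 2) := mul_one _
    have hne : (∫⁻ l in Set.Ioo (-s) s, ENNReal.ofReal (l ^ 2) ∂μ) ≠ ⊤ :=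
      (lt_of_le_of_lt hfin ENNReal.ofReal_lt_top).ne
    have heq : ∫ l in Set.Ioo (-s) s, l ^ 2 ∂μ
        = (∫⁻ l in Set.Ioo (-s) s, ENNReal.ofReal (l ^ 2) ∂μ).toReal :=
      integral_eq_lintegral_of_nonneg_ae (ae_of_all _ fun l => sq_nonneg l)
        ((measurable_id.pow_const 2).aestronglyMeasurable)
    have hIs : ∫ l in Set.Ioo (-s) s, l ^ 2 ∂μ < ε * s := by
      have h' := H s (lt_trans hΛ hs)
      rw [one_div, inv_mul_lt_iff₀ hs0] at h'
      linarith [h']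
    calc (∫⁻ l in Set.Ioo (-s) s, ENNReal.ofReal (l ^ 2) ∂μ)
        = ENNReal.ofReal ((∫⁻ l in Set.Ioo (-s) s, ENNReal.ofReal (l ^ 2) ∂μ).toReal) :=
          (ENNReal.ofReal_toReal hne).symm
      _ ≤ ENNReal.ofReal (ε * s) := ENNReal.ofReal_le_ofReal (by rw [← heq]; exact hIs.le)
  -- the kernel function
  set f : ℝ → ℝ → ℝ≥0∞ := fun l s =>
    (Set.Ioo (-s) s).indicator (fun x => ENNReal.ofReal (2 * Λ * x ^ 2 * (s ^ 3)⁻¹)) l with hf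
  have hfmeas : Measurable (Function.uncurry f) := by
    have : Function.uncurry f = fun p : ℝ × ℝ =>
        Set.indicator {q : ℝ × ℝ | -q.2 < q.1 ∧ q.1 < q.2}
          (fun q => ENNReal.ofReal (2 * Λ * q.1 ^ 2 * (q.2 ^ 3)⁻¹)) p := by
      funext p
      by_cases hp : -p.2 < p.1 ∧ p.1 < p.2 <;>
        simp [Function.uncurry, hf, Set.indicator, Set.mem_Ioo, hp]
    rw [this]
    refine Measurable.indicator ?_ ?_
    · exact ENNReal.measurable_ofReal.comp <| by fun_prop
    · exact (measurableSet_lt (measurable_snd.neg) measurable_fst).inter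
        (measurableSet_lt measurable_fst measurable_snd)
  have main : ENNReal.ofReal Λ * μ (Set.Ioo (-Λ) Λ)ᶜ ≤ ENNReal.ofReal (2 * ε) := by
    calc ENNReal.ofReal Λ * μ (Set.Ioo (-Λ) Λ)ᶜ
        = ∫⁻ _ in (Set.Ioo (-Λ) Λ)ᶜ, ENNReal.ofReal Λ ∂μ := (setLIntegral_const _ _).symm
      _ ≤ ∫⁻ l in (Set.Ioo (-Λ) Λ)ᶜ, (∫⁻ s in Set.Ioi Λ, f l s) ∂μ := by
          refine setLIntegral_mono (Measurable.lintegral_prod_right hfmeas) (fun l hl => ?_)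
          -- l in complement: Λ ≤ |l|
          have habs : Λ ≤ |l| := by
            simp only [Set.mem_compl_iff, Set.mem_Ioo, not_and, not_lt] at hl
            rcases le_or_gt Λ l with h' | h'
            · exact le_trans h' (le_abs_self l)
            · have hll : l ≤ -Λ := by
                by_contra hh
                push_neg at hh
                exact absurd (hl hh) (not_le.mpr h')
              calc Λ ≤ -l := by linarith
                _ ≤ |l| := neg_le_abs l
          have hl0 : l ≠ 0 := by
            intro h0; rw [h0, abs_zero] at habs; linarith
          have habs0 : 0 < |l| := lt_of_lt_of_le hΛ0 habs
          calc ENNReal.ofReal Λ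
              = ENNReal.ofReal ((2 * Λ * l ^ 2) / (2 * |l| ^ 2)) := by
                congr 1
                rw [sq_abs]
                field_simp
            _ = ∫⁻ s in Set.Ioi |l|, ENNReal.ofReal (2 * Λ * l ^ 2 * (s ^ 3)⁻¹) :=
                (lint_inv_pow3 habs0 (by positivity)).symm
            _ = ∫⁻ s in Set.Ioi |l|, f l s := by
                refine setLIntegral_congr_fun measurableSet_Ioi (fun s hs => ?_)
                have : l ∈ Set.Ioo (-s) s := by
                  rcases abs_lt.mp (Set.mem_Ioi.mp hs) with ⟨h1, h2⟩
                  exact ⟨h1, h2⟩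
                rw [hf]
                simp only [Set.indicator_of_mem this]
            _ ≤ ∫⁻ s in Set.Ioi Λ, f l s :=
                lintegral_mono_set (Set.Ioi_subset_Ioi habs)
      _ ≤ ∫⁻ l, (∫⁻ s in Set.Ioi Λ, f l s) ∂μ :=
          setLIntegral_le_lintegral _ _
      _ = ∫⁻ s in Set.Ioi Λ, (∫⁻ l, f l s ∂μ) := lintegral_lintegral_swap hfmeas.aemeasurable
      _ ≤ ∫⁻ s in Set.Ioi Λ, ENNReal.ofReal (2 * Λ * ε * (s ^ 2)⁻¹) := by
          refine setLIntegral_mono (by fun_prop) (fun s hs => ?_)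
          have hsΛ : Λ < s := hs
          have hs0 : 0 < s := lt_trans hΛ0 hsΛ
          calc ∫⁻ l, f l s ∂μ
              = ∫⁻ l in Set.Ioo (-s) s, ENNReal.ofReal (2 * Λ * l ^ 2 * (s ^ 3)⁻¹) ∂μ := by
                rw [hf]; exact lintegral_indicator measurableSet_Ioo _
            _ = ∫⁻ l in Set.Ioo (-s) s,
                  ENNReal.ofReal (2 * Λ * (s ^ 3)⁻¹) * ENNReal.ofReal (l ^ 2) ∂μ := by
                refine setLIntegral_congr_fun measurableSet_Ioo (fun l _ => ?_)
                rw [← ENNReal.ofReal_mul (by positivity)]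
                congr 1; ring
            _ = ENNReal.ofReal (2 * Λ * (s ^ 3)⁻¹)
                  * ∫⁻ l in Set.Ioo (-s) s, ENNReal.ofReal (l ^ 2) ∂μ :=
                lintegral_const_mul _ (by fun_prop)
            _ ≤ ENNReal.ofReal (2 * Λ * (s ^ 3)⁻¹) * ENNReal.ofReal (ε * s) := by
                gcongr
                exact hJ s hsΛ
            _ = ENNReal.ofReal (2 * Λ * ε * (s ^ 2)⁻¹) := by
                rw [← ENNReal.ofReal_mul (by positivity)]
                congr 1
                field_simp
      _ = ENNReal.ofReal (2 * Λ * ε / Λ) := lint_inv_pow2 hΛ0 (by positivity)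
      _ = ENNReal.ofReal (2 * ε) := by
          congr 1
          field_simp
  -- convert to real
  have h1 : (ENNReal.ofReal Λ * μ (Set.Ioo (-Λ) Λ)ᶜ).toReal
      = Λ * (μ (Set.Ioo (-Λ) Λ)ᶜ).toReal := by
    rw [ENNReal.toReal_mul, ENNReal.toReal_ofReal hΛ0.le]
  rw [← h1]
  exact ENNReal.toReal_le_of_le_ofReal (by positivity) main

theorem stmt_5 (μ : Measure ℝ) [IsProbabilityMeasure μ]
    (h : Tendsto (fun Λ : ℝ => (1 / Λ) * ∫ l in Set.Ioo (-Λ) Λ, l ^ 2 ∂μ) atTop (𝓝 0)) :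
    Tendsto (fun Λ : ℝ => Λ * (μ (Set.Ioo (-Λ) Λ)ᶜ).toReal) atTop (𝓝 0) ∧
      ∀ ε > (0 : ℝ), ∀ Λ₀ > (0 : ℝ),
        (∀ Λ > Λ₀, (1 / Λ) * ∫ l in Set.Ioo (-Λ) Λ, l ^ 2 ∂μ < ε) →
        ∀ Λ > Λ₀, Λ * (μ (Set.Ioo (-Λ) Λ)ᶜ).toReal ≤ 2 * ε := by
  constructor
  · rw [Metric.tendsto_atTop]
    intro δ hδ
    obtain ⟨N, hN⟩ := Metric.tendsto_atTop.mp h (δ / 4) (by linarith)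
    set Λ₀ : ℝ := max N 1 with hΛ₀def
    have hΛ₀pos : 0 < Λ₀ := lt_of_lt_of_le one_pos (le_max_right _ _)
    have H : ∀ Λ > Λ₀, (1 / Λ) * ∫ l in Set.Ioo (-Λ) Λ, l ^ 2 ∂μ < δ / 4 := by
      intro Λ hΛ
      have := hN Λ (le_trans (le_max_left _ _) hΛ.le)
      rw [Real.dist_eq, sub_zero] at this
      exact lt_of_le_of_lt (le_abs_self _) this
    have key := key_lemma μ (by linarith : (0:ℝ) < δ / 4) hΛ₀pos H
    refine ⟨Λ₀ + 1, fun Λ hΛ => ?_⟩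
    have hΛgt : Λ > Λ₀ := by linarith
    have hΛpos : 0 < Λ := lt_trans hΛ₀pos hΛgt
    rw [Real.dist_eq, sub_zero, abs_of_nonneg (by positivity)]
    have := key Λ hΛgt
    linarith
  · intro ε hε Λ₀ hΛ₀ H
    exact key_lemma μ hε hΛ₀ H
end

section
/- Let μ be a Borel probability measure on ℝ. Then (1/|s|)·∫_ℝ (1 − cos(λs)) dμ(λ) → 0 as s → 0 if and only if Λ·μ((−Λ,Λ)ᶜ) → 0 as Λ → +∞. -/
open MeasureTheory Filter Topology

section auxstmt6
open Real

lemma aux_sin_le {x : ℝ} (hx : 1 ≤ x) : Real.sin x ≤ x * Real.sin 1 := by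
  have hs1 : (0:ℝ) < Real.sin 1 :=
    Real.sin_pos_of_pos_of_lt_pi one_pos (by nlinarith [Real.pi_gt_three])
  rcases le_or_gt x π with hxpi | hxpi
  · have h0 : (0:ℝ) < x := lt_of_lt_of_le one_pos hx
    have hcc : ConcaveOn ℝ (Set.Icc 0 π) Real.sin := strictConcaveOn_sin_Icc.concaveOn
    have key : (1 - 1/x) • Real.sin 0 + (1/x) • Real.sin x ≤
        Real.sin ((1 - 1/x) • (0:ℝ) + (1/x) • x) :=
      hcc.2 (Set.mem_Icc.2 ⟨le_rfl, Real.pi_pos.le⟩) (Set.mem_Icc.2 ⟨h0.le, hxpi⟩)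
        (by rw [sub_nonneg]; exact div_le_one_of_le₀ hx h0.le) (by positivity) (by field_simp; ring)
    have hx1 : (1 - 1/x) • (0:ℝ) + (1/x) • x = 1 := by
      simp only [smul_eq_mul]; field_simp; ring
    rw [hx1] at key
    simp only [Real.sin_zero, smul_eq_mul, mul_zero, zero_add] at key
    calc Real.sin x = x * ((1/x) * Real.sin x) := by field_simp
    _ ≤ x * Real.sin 1 := by nlinarith [key]
  · have h1 : Real.sin x ≤ 1 := Real.sin_le_one x
    have h2 : (2:ℝ)/π * 1 ≤ Real.sin 1 := Real.mul_le_sin (by norm_num)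
      (by nlinarith [Real.pi_gt_three])
    have h3 : (2:ℝ) ≤ Real.sin 1 * π := by
      rw [div_mul_eq_mul_div, mul_one, div_le_iff₀ Real.pi_pos] at h2
      linarith
    nlinarith [Real.pi_gt_three]

lemma aux_sinc_le {y : ℝ} (hy : 1 ≤ |y|) : Real.sin y / y ≤ Real.sin 1 := by
  rcases abs_cases y with ⟨h, _⟩ | ⟨h, _⟩
  · rw [h] at hy
    rw [div_le_iff₀ (by linarith)]
    linarith [aux_sin_le hy]
  · rw [h] at hy
    have := aux_sin_le hy
    rw [Real.sin_neg] at this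
    have hyneg : y < 0 := by linarith
    rw [div_le_iff_of_neg hyneg]
    linarith
open intervalIntegral in
lemma aux_cos_integral (u l : ℝ) (hl : l ≠ 0) :
    ∫ s in (0:ℝ)..u, Real.cos (l * s) = Real.sin (l * u) / l := by
  rw [integral_comp_mul_left Real.cos hl]
  simp [integral_cos, smul_eq_mul, div_eq_inv_mul]

lemma aux_fin (a b : ℝ) : IsFiniteMeasure (volume.restrict (Set.Ioc a b)) :=
  ⟨by rw [Measure.restrict_apply_univ]; exact measure_Ioc_lt_top⟩

lemma aux_prod_int (μ : Measure ℝ) [IsProbabilityMeasure μ] (u : ℝ) :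
    Integrable (fun p : ℝ × ℝ => 1 - Real.cos (p.1 * p.2))
      (μ.prod (volume.restrict (Set.Ioc 0 u))) := by
  haveI := aux_fin 0 u
  refine (integrable_const (2:ℝ)).mono' (Continuous.aestronglyMeasurable (by continuity)) ?_
  filter_upwards with p
  rw [Real.norm_eq_abs, abs_le]
  constructor <;> nlinarith [Real.cos_le_one (p.1 * p.2), Real.neg_one_le_cos (p.1 * p.2)]

lemma aux_inner (u : ℝ) (hu : 0 ≤ u) (l : ℝ) (hl : l ≠ 0) :
    ∫ s in Set.Ioc 0 u, (1 - Real.cos (l * s)) = u - Real.sin (l * u) / l := by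
  rw [← intervalIntegral.integral_of_le hu]
  rw [intervalIntegral.integral_sub (intervalIntegrable_const)
    ((by continuity : Continuous fun s : ℝ => Real.cos (l * s)).intervalIntegrable 0 u),
    aux_cos_integral u l hl]
  simp

set_option maxHeartbeats 1000000 in
open intervalIntegral in
lemma aux_lin (K u : ℝ) : ∫ s in (0:ℝ)..u, K * s = K * u^2 / 2 := by
  rw [intervalIntegral.integral_const_mul, integral_id]
  ring


lemma aux_fwd (μ : Measure ℝ) [IsProbabilityMeasure μ]
    (h : Tendsto (fun s : ℝ => (1 / |s|) * ∫ l : ℝ, (1 - Real.cos (l * s)) ∂μ)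
        (𝓝[≠] 0) (𝓝 0)) :
    Tendsto (fun Λ : ℝ => Λ * (μ (Set.Ioo (-Λ) Λ)ᶜ).toReal) atTop (𝓝 0) := by
  have hc : 0 < 1 - Real.sin 1 := by nlinarith [Real.sin_lt one_pos]
  set c := 1 - Real.sin 1 with hcdef
  rw [Metric.tendsto_nhds]
  intro ε εpos
  obtain ⟨δ, δpos, hδ⟩ := Metric.tendsto_nhdsWithin_nhds.mp h (c * ε / 2) (by positivity)
  rw [eventually_atTop]
  refine ⟨max (2/δ) 1, fun Λ hΛ => ?_⟩
  have hΛ1 : 1 ≤ Λ := le_trans (le_max_right _ _) hΛ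
  have hΛpos : 0 < Λ := lt_of_lt_of_le one_pos hΛ1
  set u := 1/Λ with hudef
  have hupos : 0 < u := by positivity
  have huδ : u < δ := by
    have h2 : 2/δ ≤ Λ := le_trans (le_max_left _ _) hΛ
    rw [hudef, div_lt_iff₀ hΛpos]
    rw [div_le_iff₀ δpos] at h2
    nlinarith
  haveI := aux_fin 0 u
  set τ := (μ (Set.Ioo (-Λ) Λ)ᶜ).toReal with hτ
  have hτ0 : 0 ≤ τ := ENNReal.toReal_nonneg
  have hmeas : MeasurableSet (Set.Ioo (-Λ) Λ)ᶜ := measurableSet_Ioo.compl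
  have hint := aux_prod_int μ u
  have hA : (c * u) * τ ≤ ∫ l, (∫ s in Set.Ioc 0 u, (1 - Real.cos (l * s))) ∂μ := by
    rw [show (c*u)*τ = ∫ l, (Set.Ioo (-Λ) Λ)ᶜ.indicator (fun _ => c * u) l ∂μ by
      rw [integral_indicator_const (c * u) hmeas, smul_eq_mul, mul_comm]; rfl]
    apply integral_mono ((integrable_const (c*u)).indicator hmeas) hint.integral_prod_left
    intro l
    by_cases hl : l ∈ (Set.Ioo (-Λ) Λ)ᶜ
    · have hgoal : (Set.Ioo (-Λ) Λ)ᶜ.indicator (fun _ => c * u) l = c * u :=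
        Set.indicator_of_mem hl _
      rw [hgoal]
      show c * u ≤ ∫ s in Set.Ioc 0 u, (1 - Real.cos (l * s))
      have habs : Λ ≤ |l| := by
        rcases not_and_or.mp ((Set.mem_Ioo).not.mp hl) with h1 | h1
        · push_neg at h1; rw [le_abs]; right; linarith
        · push_neg at h1; rw [le_abs]; left; linarith
      have hlne : l ≠ 0 := by
        intro h0; rw [h0, abs_zero] at habs; linarith
      rw [aux_inner u hupos.le l hlne]
      have h1 : (1:ℝ) ≤ |l * u| := by
        rw [abs_mul, abs_of_pos hupos]
        calc (1:ℝ) = Λ * u := by rw [hudef]; field_simp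
        _ ≤ |l| * u := by nlinarith
      have h2 := aux_sinc_le h1
      have h3 : Real.sin (l*u) / l = u * (Real.sin (l*u) / (l*u)) := by
        field_simp
      rw [h3]
      nlinarith
    · rw [Set.indicator_of_notMem hl]
      show (0:ℝ) ≤ ∫ s in Set.Ioc 0 u, (1 - Real.cos (l * s))
      exact setIntegral_nonneg measurableSet_Ioc (fun s _ => by nlinarith [Real.cos_le_one (l*s)])
  have hB : ∫ l, (∫ s in Set.Ioc 0 u, (1 - Real.cos (l * s))) ∂μ
      = ∫ s in Set.Ioc 0 u, (∫ l, (1 - Real.cos (l * s)) ∂μ) :=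
    integral_integral_swap hint
  have hC : ∫ s in Set.Ioc 0 u, (∫ l, (1 - Real.cos (l * s)) ∂μ)
      ≤ ∫ s in Set.Ioc 0 u, (c * ε / 2) * s := by
    apply setIntegral_mono_on hint.integral_prod_right
      (((continuous_const.mul continuous_id).intervalIntegrable 0 u).1) measurableSet_Ioc
    intro s hs
    have hs0 : 0 < s := hs.1
    have hsu : s ≤ u := hs.2
    have hkey := hδ (x := s) (by simp [hs0.ne']) (by
      rw [Real.dist_eq, sub_zero, abs_of_pos hs0]; linarith)
    rw [Real.dist_eq, sub_zero] at hkey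
    have hnn : 0 ≤ ∫ l, (1 - Real.cos (l * s)) ∂μ :=
      integral_nonneg (fun l => by
        simp only [Pi.zero_apply]
        nlinarith [Real.cos_le_one (l*s)])
    have habs : |s| = s := abs_of_pos hs0
    rw [abs_of_nonneg (by positivity), habs, one_div] at hkey
    show ∫ l, (1 - Real.cos (l * s)) ∂μ ≤ c * ε / 2 * s
    nlinarith [mul_inv_cancel₀ hs0.ne', hkey, hs0]
  have hRHS : ∫ s in Set.Ioc 0 u, (c * ε / 2) * s = c * ε / 2 * u^2 / 2 := by
    rw [← intervalIntegral.integral_of_le hupos.le, aux_lin]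
  have hfin : c * u * τ ≤ c * ε / 2 * u^2 / 2 := by
    rw [← hRHS]
    exact hA.trans (le_of_eq hB |>.trans hC)
  have huΛ : u * Λ = 1 := by rw [hudef]; field_simp
  have hτle : Λ * τ ≤ ε / 4 := by
    have h1 : τ ≤ ε * u / 4 := by
      have hcu : 0 < c * u := mul_pos hc hupos
      rw [← mul_le_mul_iff_right₀ hcu]
      calc c * u * τ ≤ c * ε / 2 * u^2 / 2 := hfin
      _ = c * u * (ε * u / 4) := by ring
    calc Λ * τ ≤ Λ * (ε * u / 4) := by nlinarith
    _ = ε / 4 := by linear_combination (ε/4) * huΛ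
  rw [Real.dist_eq, sub_zero, abs_of_nonneg (by positivity)]
  linarith


set_option maxHeartbeats 2000000 in
lemma aux_bwd (μ : Measure ℝ) [IsProbabilityMeasure μ]
    (h : Tendsto (fun Λ : ℝ => Λ * (μ (Set.Ioo (-Λ) Λ)ᶜ).toReal) atTop (𝓝 0)) :
    Tendsto (fun s : ℝ => (1 / |s|) * ∫ l : ℝ, (1 - Real.cos (l * s)) ∂μ)
        (𝓝[≠] 0) (𝓝 0) := by
  rw [Metric.tendsto_nhdsWithin_nhds]
  intro ε εpos
  have h8 : (0:ℝ) < ε/8 := by positivity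
  have hev := Metric.tendsto_nhds.mp h (ε/8) h8
  rw [eventually_atTop] at hev
  obtain ⟨N, hN⟩ := hev
  set T := max N 1 with hT
  have hT1 : (1:ℝ) ≤ T := le_max_right _ _
  have hTpos : (0:ℝ) < T := lt_of_lt_of_le one_pos hT1
  have hTtail : ∀ v, T ≤ v → v * (μ (Set.Ioo (-v) v)ᶜ).toReal < ε/8 := by
    intro v hv
    have := hN v (le_trans (le_max_left _ _) hv)
    rw [Real.dist_eq, sub_zero] at this
    exact lt_of_abs_lt this
  refine ⟨min (ε/(4*T^2)) (1/T), by positivity, ?_⟩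
  intro s hs hsd
  rw [Real.dist_eq, sub_zero] at hsd ⊢
  have hsne : s ≠ 0 := hs
  have ha : 0 < |s| := abs_pos.mpr hsne
  set a := |s| with hadef
  have haδ1 : a < ε/(4*T^2) := lt_of_lt_of_le hsd (min_le_left _ _)
  have haδ2 : a < 1/T := lt_of_lt_of_le hsd (min_le_right _ _)
  set U := 1/a with hU
  have hUpos : 0 < U := by positivity
  have hTU : T ≤ U := by
    rw [hU, le_div_iff₀ ha]
    rw [lt_div_iff₀ hTpos] at haδ2
    nlinarith
  haveI := aux_fin 0 U
  set F : ℝ × ℝ → ℝ := fun p => if p.2 < |p.1| then 2*s^2*p.2 else 0 with hF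
  have hFmeas : Measurable F :=
    Measurable.ite (measurableSet_lt measurable_snd measurable_fst.abs)
      (measurable_const.mul measurable_snd) measurable_const
  -- pointwise bound
  have hptA : ∀ l : ℝ, 1 - Real.cos (l * s) ≤
      2 * ∫ v, F (l, v) ∂(volume.restrict (Set.Ioc 0 U)) := by
    intro l
    set m := min |l| U with hm
    have hm0 : 0 ≤ m := le_min (abs_nonneg l) hUpos.le
    have hfun : (fun v => F (l, v)) = fun v => (Set.Iio |l|).indicator (fun w => 2*s^2*w) v := by
      ext v
      rw [Set.indicator_apply]
      simp only [hF, Set.mem_Iio]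
    have hstep1 : ∫ v, F (l, v) ∂(volume.restrict (Set.Ioc 0 U))
        = ∫ v in Set.Ioc 0 U ∩ Set.Iio |l|, 2*s^2*v := by
      rw [hfun]
      exact setIntegral_indicator measurableSet_Iio
    have hsub : Set.Ioo 0 m ⊆ Set.Ioc 0 U ∩ Set.Iio |l| := by
      intro v hv
      exact ⟨⟨hv.1, le_of_lt (lt_of_lt_of_le hv.2 (min_le_right _ _))⟩,
        lt_of_lt_of_le hv.2 (min_le_left _ _)⟩
    have hIOn : IntegrableOn (fun v => 2*s^2*v) (Set.Ioc 0 U ∩ Set.Iio |l|) volume :=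
      (((continuous_const.mul continuous_id).intervalIntegrable 0 U).1).mono_set
        Set.inter_subset_left
    have hnn : 0 ≤ᵐ[volume.restrict (Set.Ioc 0 U ∩ Set.Iio |l|)] (fun v => 2*s^2*v) := by
      refine (ae_restrict_iff' (measurableSet_Ioc.inter measurableSet_Iio)).2 (ae_of_all _ ?_)
      intro v hv
      have hv0 : 0 < v := hv.1.1
      have : (0:ℝ) ≤ 2*s^2*v := by positivity
      simpa using this
    have hstep2 : ∫ v in Set.Ioo 0 m, 2*s^2*v ≤ ∫ v in Set.Ioc 0 U ∩ Set.Iio |l|, 2*s^2*v :=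
      setIntegral_mono_set hIOn hnn (HasSubset.Subset.eventuallyLE hsub)
    have hstep3 : ∫ v in Set.Ioo 0 m, 2*s^2*v = s^2 * m^2 := by
      rw [← integral_Ioc_eq_integral_Ioo, ← intervalIntegral.integral_of_le hm0, aux_lin]
      ring
    have hstep4 : 1 - Real.cos (l*s) ≤ 2*(s^2*m^2) := by
      rcases le_total |l| U with hcase | hcase
      · have hmm : m = |l| := min_eq_left hcase
        have hls : 1 - Real.cos (l*s) ≤ (l*s)^2/2 := by
          nlinarith [Real.one_sub_sq_div_two_le_cos (x := l*s)]
        have habs2 : m^2 = l^2 := by rw [hmm]; exact sq_abs l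
        nlinarith [sq_nonneg (l*s), sq_nonneg s, sq_nonneg l]
      · have hmm : m = U := min_eq_right hcase
        have hm2 : s^2 * m^2 = 1 := by
          rw [hmm, hU, show s^2 = a^2 from (sq_abs s).symm]
          field_simp
        rw [hm2]
        nlinarith [Real.neg_one_le_cos (l*s)]
    calc 1 - Real.cos (l * s) ≤ 2*(s^2*m^2) := hstep4
    _ = 2 * ∫ v in Set.Ioo 0 m, 2*s^2*v := by rw [hstep3]
    _ ≤ 2 * ∫ v in Set.Ioc 0 U ∩ Set.Iio |l|, 2*s^2*v := by linarith [hstep2]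
    _ = 2 * ∫ v, F (l, v) ∂(volume.restrict (Set.Ioc 0 U)) := by rw [hstep1]
  -- integrability of F on the product
  have haeU : ∀ᵐ p ∂(μ.prod (volume.restrict (Set.Ioc 0 U))), p.2 ∈ Set.Ioc 0 U := by
    rw [ae_iff]
    have hset : {p : ℝ×ℝ | ¬ p.2 ∈ Set.Ioc 0 U} = Set.univ ×ˢ (Set.Ioc 0 U)ᶜ := by
      ext p; simp [Set.mem_prod]
    rw [hset, Measure.prod_prod, Measure.restrict_apply measurableSet_Ioc.compl]
    simp
  have hintF : Integrable F (μ.prod (volume.restrict (Set.Ioc 0 U))) := by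
    refine (integrable_const (2*s^2*U)).mono' hFmeas.aestronglyMeasurable ?_
    filter_upwards [haeU] with p hp
    rw [Real.norm_eq_abs]
    simp only [hF]
    split
    · rw [abs_of_nonneg (by nlinarith [hp.1.le, sq_nonneg s])]
      nlinarith [hp.2, hp.1.le, sq_nonneg s]
    · rw [abs_zero]; positivity
  have hint1 : Integrable (fun l => 1 - Real.cos (l * s)) μ := by
    have hcont : Continuous (fun l : ℝ => 1 - Real.cos (l * s)) :=
      continuous_const.sub (Real.continuous_cos.comp (continuous_id.mul continuous_const))
    refine (integrable_const (2:ℝ)).mono' hcont.aestronglyMeasurable ?_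
    filter_upwards with l
    rw [Real.norm_eq_abs, abs_le]
    constructor <;> nlinarith [Real.cos_le_one (l*s), Real.neg_one_le_cos (l*s)]
  have hmain1 : ∫ l, (1 - Real.cos (l * s)) ∂μ
      ≤ ∫ l, 2 * (∫ v, F (l, v) ∂(volume.restrict (Set.Ioc 0 U))) ∂μ :=
    integral_mono hint1 (hintF.integral_prod_left.const_mul 2) hptA
  have hswap : ∫ l, (∫ v, F (l, v) ∂(volume.restrict (Set.Ioc 0 U))) ∂μ
      = ∫ v, (∫ l, F (l, v) ∂μ) ∂(volume.restrict (Set.Ioc 0 U)) :=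
    integral_integral_swap hintF
  -- inner integral in l
  set ρ : ℝ → ℝ := fun v => (μ (Set.Icc (-v) v)ᶜ).toReal with hρ
  have hρ0 : ∀ v, 0 ≤ ρ v := fun v => ENNReal.toReal_nonneg
  have hρ1 : ∀ v, ρ v ≤ 1 := by
    intro v
    have h1 := ENNReal.toReal_mono ENNReal.one_ne_top (prob_le_one (μ := μ) (s := (Set.Icc (-v) v)ᶜ))
    simpa using h1
  have hρanti : Antitone ρ := by
    intro v w hvw
    exact ENNReal.toReal_mono (measure_ne_top μ _)
      (measure_mono (Set.compl_subset_compl.mpr (Set.Icc_subset_Icc (neg_le_neg hvw) hvw)))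
  have hρmeas : Measurable ρ := hρanti.measurable
  have hinner : ∀ v : ℝ, ∫ l, F (l, v) ∂μ = 2*s^2*v * ρ v := by
    intro v
    have hsetm : MeasurableSet (Set.Icc (-v) v)ᶜ := measurableSet_Icc.compl
    have hmemiff : ∀ l : ℝ, l ∈ (Set.Icc (-v) v)ᶜ ↔ v < |l| := by
      intro l
      simp only [Set.mem_compl_iff, Set.mem_Icc, not_and_or, not_le]
      rw [lt_abs]
      constructor
      · rintro (h1 | h1)
        · right; linarith
        · left; exact h1
      · rintro (h1 | h1)
        · right; exact h1
        · left; linarith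
    have hfun2 : (fun l => F (l, v)) = fun l => (Set.Icc (-v) v)ᶜ.indicator (fun _ => 2*s^2*v) l := by
      ext l
      rw [Set.indicator_apply]
      simp only [hF]
      exact if_congr (hmemiff l).symm rfl rfl
    rw [hfun2, integral_indicator_const _ hsetm, smul_eq_mul, mul_comm]
    rfl
  -- outer estimate
  have hg_meas : Measurable (fun v => 2*s^2*v * ρ v) :=
    (measurable_const.mul measurable_id).mul hρmeas
  have hIOng : ∀ (a' b' : ℝ), 0 ≤ a' → IntegrableOn (fun v => 2*s^2*v * ρ v) (Set.Ioc a' b') volume := by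
    intro a' b' ha'
    haveI := aux_fin a' b'
    refine (integrable_const (2*s^2*b')).mono' hg_meas.aestronglyMeasurable ?_
    refine (ae_restrict_iff' measurableSet_Ioc).2 (ae_of_all _ fun v hv => ?_)
    have hv0 : 0 < v := lt_of_le_of_lt ha' hv.1
    rw [Real.norm_eq_abs, abs_of_nonneg (mul_nonneg (by positivity) (hρ0 v))]
    have h1 : 2*s^2*v*ρ v ≤ 2*s^2*v := by
      nlinarith [mul_nonneg (mul_nonneg (by positivity : (0:ℝ) ≤ 2*s^2) hv0.le)
        (sub_nonneg.2 (hρ1 v))]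
    have h2 : 2*s^2*v ≤ 2*s^2*b' := mul_le_mul_of_nonneg_left hv.2 (by positivity)
    linarith
  have hUnion : Set.Ioc (0:ℝ) U = Set.Ioc 0 T ∪ Set.Ioc T U :=
    (Set.Ioc_union_Ioc_eq_Ioc hTpos.le hTU).symm
  have hsum : ∫ v in Set.Ioc 0 U, 2*s^2*v * ρ v
      = (∫ v in Set.Ioc 0 T, 2*s^2*v * ρ v) + ∫ v in Set.Ioc T U, 2*s^2*v * ρ v := by
    rw [hUnion]
    exact setIntegral_union (Set.Ioc_disjoint_Ioc_of_le le_rfl) measurableSet_Ioc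
      (hIOng 0 T le_rfl) (hIOng T U hTpos.le)
  have hb1 : ∫ v in Set.Ioc 0 T, 2*s^2*v * ρ v ≤ s^2*T^2 := by
    have hcont2 : Continuous (fun v : ℝ => 2*s^2*v) := continuous_const.mul continuous_id
    calc ∫ v in Set.Ioc 0 T, 2*s^2*v * ρ v ≤ ∫ v in Set.Ioc 0 T, 2*s^2*v := by
          apply setIntegral_mono_on (hIOng 0 T le_rfl)
            ((hcont2.intervalIntegrable 0 T).1) measurableSet_Ioc
          intro v hv
          have hv0 : 0 < v := hv.1
          nlinarith [mul_nonneg (mul_nonneg (by positivity : (0:ℝ) ≤ 2*s^2) hv0.le)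
            (sub_nonneg.2 (hρ1 v))]
    _ = s^2*T^2 := by rw [← intervalIntegral.integral_of_le hTpos.le, aux_lin]; ring
  have hb2 : ∫ v in Set.Ioc T U, 2*s^2*v * ρ v ≤ ε/4 * a := by
    have hsU : s^2 * U = a := by
      rw [hU, show s^2 = a^2 from (sq_abs s).symm]
      field_simp
    calc ∫ v in Set.Ioc T U, 2*s^2*v * ρ v ≤ ∫ _v in Set.Ioc T U, (2*s^2*(ε/8)) := by
          apply setIntegral_mono_on (hIOng T U hTpos.le)
            (integrableOn_const measure_Ioc_lt_top.ne) measurableSet_Ioc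
          intro v hv
          have hvT : T ≤ v := hv.1.le
          have hρρ : ρ v ≤ (μ (Set.Ioo (-v) v)ᶜ).toReal :=
            ENNReal.toReal_mono (measure_ne_top μ _)
              (measure_mono (Set.compl_subset_compl.mpr Set.Ioo_subset_Icc_self))
          have hvρ : v * ρ v ≤ v * (μ (Set.Ioo (-v) v)ᶜ).toReal :=
            mul_le_mul_of_nonneg_left hρρ (le_trans hTpos.le hvT)
          have htail := hTtail v hvT
          nlinarith [sq_nonneg s]
    _ = 2*s^2*(ε/8) * (U - T) := by
          rw [setIntegral_const, smul_eq_mul, Real.volume_real_Ioc_of_le hTU]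
          ring
    _ ≤ ε/4 * a := by
          nlinarith [mul_nonneg (le_of_lt h8) (mul_nonneg (sq_nonneg s) hTpos.le)]
  -- assemble
  have hfun3 : (fun v => ∫ l, F (l, v) ∂μ) = fun v => 2*s^2*v * ρ v := funext hinner
  have htotal : ∫ l, (1 - Real.cos (l * s)) ∂μ ≤ 2*(s^2*T^2) + ε/2 * a := by
    calc ∫ l, (1 - Real.cos (l * s)) ∂μ
        ≤ ∫ l, 2 * (∫ v, F (l, v) ∂(volume.restrict (Set.Ioc 0 U))) ∂μ := hmain1
    _ = 2 * ∫ l, (∫ v, F (l, v) ∂(volume.restrict (Set.Ioc 0 U))) ∂μ := integral_const_mul 2 _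
    _ = 2 * ∫ v, (∫ l, F (l, v) ∂μ) ∂(volume.restrict (Set.Ioc 0 U)) := by rw [hswap]
    _ = 2 * ∫ v in Set.Ioc 0 U, 2*s^2*v * ρ v := by rw [hfun3]
    _ ≤ 2*(s^2*T^2) + ε/2 * a := by rw [hsum]; linarith [hb1, hb2]
  have hnn : 0 ≤ ∫ l, (1 - Real.cos (l * s)) ∂μ :=
    integral_nonneg (fun l => by
      simp only [Pi.zero_apply]
      nlinarith [Real.cos_le_one (l*s)])
  rw [abs_of_nonneg (by positivity)]
  have hs2 : s^2 = a^2 := (sq_abs s).symm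
  have hfin : 1/a * ∫ l, (1 - Real.cos (l * s)) ∂μ ≤ 2*a*T^2 + ε/2 := by
    rw [div_mul_eq_mul_div, one_mul, div_le_iff₀ ha]
    calc ∫ l, (1 - Real.cos (l * s)) ∂μ ≤ 2*(s^2*T^2) + ε/2 * a := htotal
    _ = (2*a*T^2 + ε/2) * a := by rw [hs2]; ring
  have hlast : 2*a*T^2 < ε/2 := by
    rw [lt_div_iff₀ (by positivity : (0:ℝ) < 4*T^2)] at haδ1
    nlinarith
  linarith

end auxstmt6

theorem stmt_6 (μ : Measure ℝ) [IsProbabilityMeasure μ] :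
    Tendsto (fun s : ℝ => (1 / |s|) * ∫ l : ℝ, (1 - Real.cos (l * s)) ∂μ)
        (𝓝[≠] 0) (𝓝 0) ↔
      Tendsto (fun Λ : ℝ => Λ * (μ (Set.Ioo (-Λ) Λ)ᶜ).toReal) atTop (𝓝 0) :=
  ⟨aux_fwd μ, aux_bwd μ⟩
end

section
/- Let μ be a Borel probability measure on ℝ, A(s) = ∫_ℝ e^{−isλ} dμ(λ) and p(s) = |A(s)|². If (1/|s|)·∫_ℝ (1 − cos(λs)) dμ(λ) → 0 as s → 0, then p is differentiable at 0 with p'(0) = 0. -/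
open MeasureTheory Filter Topology

theorem stmt_7 (μ : Measure ℝ) [IsProbabilityMeasure μ]
    (A : ℝ → ℂ) (hA : ∀ s : ℝ, A s = ∫ l : ℝ, Complex.exp (-(Complex.I * s * l)) ∂μ)
    (p : ℝ → ℝ) (hp : ∀ s : ℝ, p s = ‖A s‖ ^ 2)
    (h : Tendsto (fun s : ℝ => (1 / |s|) * ∫ l : ℝ, (1 - Real.cos (l * s)) ∂μ)
      (𝓝[≠] 0) (𝓝 0)) :
    HasDerivAt p 0 0 := by
  have hp0 : p 0 = 1 := by
    simp [hp, hA]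
  -- basic integrability and bounds for each s
  have hnorm : ∀ s l : ℝ, ‖Complex.exp (-(Complex.I * s * l))‖ = 1 := by
    intro s l
    rw [Complex.norm_exp]
    simp
  have hint : ∀ s : ℝ, Integrable (fun l : ℝ => Complex.exp (-(Complex.I * s * l))) μ := by
    intro s
    refine (integrable_const (1 : ℝ)).mono' ?_ ?_
    · exact (Complex.continuous_exp.comp (by continuity)).aestronglyMeasurable
    · filter_upwards with l using le_of_eq (hnorm s l)
  have hcosint : ∀ s : ℝ, Integrable (fun l : ℝ => Real.cos (l * s)) μ := by
    intro s
    refine (integrable_const (1 : ℝ)).mono' ?_ ?_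
    · exact (Real.continuous_cos.comp (by continuity)).aestronglyMeasurable
    · filter_upwards with l
      simp [Real.abs_cos_le_one]
  have hAle : ∀ s : ℝ, ‖A s‖ ≤ 1 := by
    intro s
    rw [hA]
    calc ‖∫ l : ℝ, Complex.exp (-(Complex.I * s * l)) ∂μ‖
        ≤ ∫ l : ℝ, ‖Complex.exp (-(Complex.I * s * l))‖ ∂μ := norm_integral_le_integral_norm _
      _ = 1 := by simp [hnorm s]
  have hRe : ∀ s : ℝ, (A s).re = ∫ l : ℝ, Real.cos (l * s) ∂μ := by
    intro s
    rw [hA, ← RCLike.re_to_complex, ← integral_re (hint s)]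
    congr 1
    ext l
    have : -(Complex.I * (s : ℂ) * (l : ℂ)) = ((-(s * l) : ℝ) : ℂ) * Complex.I := by
      push_cast; ring
    rw [this, RCLike.re_to_complex, Complex.exp_ofReal_mul_I_re, Real.cos_neg, mul_comm]
  have hIntEq : ∀ s : ℝ, ∫ l : ℝ, (1 - Real.cos (l * s)) ∂μ = 1 - (A s).re := by
    intro s
    rw [integral_sub (integrable_const 1) (hcosint s), hRe s]
    simp
  have hkey : ∀ s : ℝ, 1 - p s ≤ 2 * ∫ l : ℝ, (1 - Real.cos (l * s)) ∂μ := by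
    intro s
    rw [hIntEq s, hp]
    have h1 := hAle s
    have h2 : (A s).re ≤ ‖A s‖ := Complex.re_le_norm _
    have h3 : (0 : ℝ) ≤ ‖A s‖ := norm_nonneg _
    nlinarith
  have hps : ∀ s : ℝ, p s ≤ 1 := by
    intro s
    rw [hp]
    nlinarith [hAle s, norm_nonneg (A s)]
  rw [hasDerivAt_iff_tendsto_slope]
  have hg : Tendsto (fun s : ℝ => 2 * ((1 / |s|) * ∫ l : ℝ, (1 - Real.cos (l * s)) ∂μ))
      (𝓝[≠] 0) (𝓝 0) := by
    have := h.const_mul 2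
    simpa using this
  refine squeeze_zero_norm' ?_ hg
  filter_upwards [self_mem_nhdsWithin] with s hs
  have hs0 : s ≠ 0 := hs
  have habs : 0 < |s| := abs_pos.mpr hs0
  have hslope : slope p 0 s = (p s - 1) / s := by
    rw [slope_def_field, hp0, sub_zero]
  rw [hslope, norm_div, Real.norm_eq_abs, Real.norm_eq_abs,
    abs_of_nonpos (by linarith [hps s]), div_le_iff₀ habs]
  have h5 : 2 * ((1 / |s|) * ∫ l : ℝ, (1 - Real.cos (l * s)) ∂μ) * |s|
      = 2 * ∫ l : ℝ, (1 - Real.cos (l * s)) ∂μ := by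
    rw [mul_assoc, mul_comm _ |s|, ← mul_assoc |s|, mul_one_div_cancel habs.ne', one_mul]
  rw [h5]
  linarith [hkey s]
end

section
/- Let a > 1 and let μ be the Borel measure on ℝ defined by μ(E) = a·log a · ∫_{E ∩ [a,+∞)} (1 + log λ)/(λ² log² λ) dλ for every Borel set E ⊂ ℝ. Then: (i) μ(ℝ) = 1; (ii) for every Λ ≥ a, Λ·μ((−Λ,Λ)ᶜ) = a·log a / log Λ, so Λ·μ((−Λ,Λ)ᶜ) → 0 as Λ → +∞; (iii) ∫_ℝ λ dμ(λ) = +∞. -/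
open MeasureTheory Filter Topology

lemma aux_deriv (x : ℝ) (hx : 1 < x) :
    HasDerivAt (fun l : ℝ => -(l * Real.log l)⁻¹)
      ((1 + Real.log x) / (x ^ 2 * Real.log x ^ 2)) x := by
  have hx0 : (0:ℝ) < x := by linarith
  have hlog : 0 < Real.log x := Real.log_pos hx
  have h1 : HasDerivAt (fun l : ℝ => l * Real.log l) (1 * Real.log x + x * x⁻¹) x :=
    (hasDerivAt_id x).mul (Real.hasDerivAt_log hx0.ne')
  have hne : x * Real.log x ≠ 0 := by positivity
  have h2 := (h1.inv hne).neg
  refine h2.congr_deriv ?_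
  field_simp
  ring

lemma aux_tendsto : Tendsto (fun l : ℝ => -(l * Real.log l)⁻¹) atTop (𝓝 0) := by
  have h : Tendsto (fun l : ℝ => l * Real.log l) atTop atTop :=
    tendsto_id.atTop_mul_atTop₀ Real.tendsto_log_atTop
  have := h.inv_tendsto_atTop.neg
  simpa using this

lemma aux_nonneg {Λ x : ℝ} (hΛ : 1 < Λ) (hx : x ∈ Set.Ioi Λ) :
    0 ≤ (1 + Real.log x) / (x ^ 2 * Real.log x ^ 2) := by
  have hx1 : 1 < x := lt_trans hΛ hx
  have := Real.log_pos hx1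
  positivity

lemma aux_integrable {Λ : ℝ} (hΛ : 1 < Λ) :
    IntegrableOn (fun x : ℝ => (1 + Real.log x) / (x ^ 2 * Real.log x ^ 2)) (Set.Ioi Λ) := by
  refine integrableOn_Ioi_deriv_of_nonneg' (g := fun l : ℝ => -(l * Real.log l)⁻¹)
    (fun x hx => aux_deriv x (lt_of_lt_of_le hΛ hx)) (fun x hx => aux_nonneg hΛ hx) aux_tendsto

lemma aux_integral {Λ : ℝ} (hΛ : 1 < Λ) :
    ∫ x in Set.Ioi Λ, (1 + Real.log x) / (x ^ 2 * Real.log x ^ 2) = (Λ * Real.log Λ)⁻¹ := by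
  have := integral_Ioi_of_hasDerivAt_of_nonneg' (g := fun l : ℝ => -(l * Real.log l)⁻¹)
    (fun x hx => aux_deriv x (lt_of_lt_of_le hΛ hx)) (fun x hx => aux_nonneg hΛ hx) aux_tendsto
  simpa using this

lemma aux_lintegral (a : ℝ) (ha : 1 < a) {Λ : ℝ} (hΛ : a ≤ Λ) :
    ∫⁻ x in Set.Ici Λ,
      ENNReal.ofReal (a * Real.log a * (1 + Real.log x) / (x ^ 2 * Real.log x ^ 2)) =
      ENNReal.ofReal (a * Real.log a * (Λ * Real.log Λ)⁻¹) := by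
  have hΛ1 : 1 < Λ := lt_of_lt_of_le ha hΛ
  have hc : 0 ≤ a * Real.log a :=
    mul_nonneg (by linarith) (Real.log_nonneg ha.le)
  rw [setLIntegral_congr (Ioi_ae_eq_Ici (a := Λ)).symm]
  have hint : Integrable (fun x : ℝ => a * Real.log a * (1 + Real.log x) / (x ^ 2 * Real.log x ^ 2))
      (volume.restrict (Set.Ioi Λ)) := by
    simp only [mul_div_assoc]
    exact (aux_integrable hΛ1).const_mul _
  have hnn : 0 ≤ᵐ[volume.restrict (Set.Ioi Λ)]
      (fun x : ℝ => a * Real.log a * (1 + Real.log x) / (x ^ 2 * Real.log x ^ 2)) := by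
    refine (ae_restrict_iff' measurableSet_Ioi).mpr (Filter.Eventually.of_forall fun x hx => ?_)
    simp only [Pi.zero_apply, mul_div_assoc]
    exact mul_nonneg hc (aux_nonneg hΛ1 hx)
  rw [← ofReal_integral_eq_lintegral_ofReal hint hnn]
  congr 1
  simp only [mul_div_assoc]
  rw [integral_const_mul, aux_integral hΛ1]

lemma aux_top (a : ℝ) (ha : 1 < a) :
    ∫⁻ x in Set.Ici a, ENNReal.ofReal ((x * Real.log x)⁻¹) = ⊤ := by
  refine ENNReal.eq_top_of_forall_nnreal_le fun r => ?_
  set s := (r : ℝ) + Real.log (Real.log a) with hs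
  set b := max a (Real.exp (Real.exp s)) with hb
  have hab : a ≤ b := le_max_left _ _
  have hb1 : 1 < b := lt_of_lt_of_le ha hab
  have h1 : Real.exp s ≤ Real.log b := by
    rw [← Real.log_exp (Real.exp s)]
    exact Real.log_le_log (Real.exp_pos _) (le_max_right _ _)
  have h2 : s ≤ Real.log (Real.log b) := by
    rw [← Real.log_exp s]
    exact Real.log_le_log (Real.exp_pos _) h1
  have hderiv : ∀ x ∈ Set.uIcc a b,
      HasDerivAt (fun y => Real.log (Real.log y)) ((x * Real.log x)⁻¹) x := by
    intro x hx
    rw [Set.uIcc_of_le hab] at hx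
    have hx1 : 1 < x := lt_of_lt_of_le ha hx.1
    have hx0 : (0:ℝ) < x := by linarith
    have hlx : 0 < Real.log x := Real.log_pos hx1
    have h := (Real.hasDerivAt_log hlx.ne').comp x (Real.hasDerivAt_log hx0.ne')
    refine h.congr_deriv ?_
    rw [mul_inv, mul_comm]
  have hcont : ContinuousOn (fun x : ℝ => (x * Real.log x)⁻¹) (Set.Icc a b) := by
    apply ContinuousOn.inv₀
    · exact continuousOn_id.mul (Real.continuousOn_log.mono (fun x hx => by
        have : 1 < x := lt_of_lt_of_le ha hx.1
        simp only [Set.mem_compl_iff, Set.mem_singleton_iff]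
        intro h; rw [h] at this; linarith))
    · intro x hx
      have hx1 : 1 < x := lt_of_lt_of_le ha hx.1
      have hx0 : (0:ℝ) < x := by linarith
      have hlx : 0 < Real.log x := Real.log_pos hx1
      positivity
  have hii : IntervalIntegrable (fun x : ℝ => (x * Real.log x)⁻¹) volume a b := by
    apply ContinuousOn.intervalIntegrable
    rwa [Set.uIcc_of_le hab]
  have hI : ∫ x in a..b, (x * Real.log x)⁻¹
      = Real.log (Real.log b) - Real.log (Real.log a) :=
    intervalIntegral.integral_eq_sub_of_hasDerivAt hderiv hii
  have hIoc : IntegrableOn (fun x : ℝ => (x * Real.log x)⁻¹) (Set.Ioc a b) :=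
    (hcont.integrableOn_Icc).mono_set Set.Ioc_subset_Icc_self
  have hnn : 0 ≤ᵐ[volume.restrict (Set.Ioc a b)] fun x : ℝ => (x * Real.log x)⁻¹ := by
    refine (ae_restrict_iff' measurableSet_Ioc).mpr (Filter.Eventually.of_forall fun x hx => ?_)
    have hx1 : 1 < x := lt_trans ha hx.1
    have hx0 : (0:ℝ) < x := by linarith
    have hlx : 0 < Real.log x := Real.log_pos hx1
    simp only [Pi.zero_apply]
    positivity
  calc (r : ENNReal) = ENNReal.ofReal r := (ENNReal.ofReal_coe_nnreal).symm
    _ ≤ ENNReal.ofReal (Real.log (Real.log b) - Real.log (Real.log a)) :=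
        ENNReal.ofReal_le_ofReal (by rw [hs] at h2; linarith)
    _ = ENNReal.ofReal (∫ x in Set.Ioc a b, (x * Real.log x)⁻¹) := by
        rw [← hI, intervalIntegral.integral_of_le hab]
    _ = ∫⁻ x in Set.Ioc a b, ENNReal.ofReal ((x * Real.log x)⁻¹) :=
        ofReal_integral_eq_lintegral_ofReal hIoc hnn
    _ ≤ ∫⁻ x in Set.Ici a, ENNReal.ofReal ((x * Real.log x)⁻¹) :=
        lintegral_mono_set (Set.Ioc_subset_Icc_self.trans Set.Icc_subset_Ici_self)

theorem stmt_8 (a : ℝ) (ha : 1 < a) (μ : Measure ℝ)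
    (hμ : μ = volume.withDensity (fun l : ℝ =>
      ENNReal.ofReal (Set.indicator (Set.Ici a)
        (fun l : ℝ => a * Real.log a * (1 + Real.log l) / (l ^ 2 * Real.log l ^ 2)) l))) :
    μ Set.univ = 1 ∧
    (∀ Λ : ℝ, a ≤ Λ →
      Λ * (μ (Set.Ioo (-Λ) Λ)ᶜ).toReal = a * Real.log a / Real.log Λ) ∧
    Tendsto (fun Λ : ℝ => Λ * (μ (Set.Ioo (-Λ) Λ)ᶜ).toReal) atTop (𝓝 0) ∧
    ∫⁻ l : ℝ, ENNReal.ofReal l ∂μ = ⊤ := by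
  have hc : 0 < a * Real.log a := mul_pos (by linarith) (Real.log_pos ha)
  have hFmeas : Measurable
      (fun l : ℝ => a * Real.log a * (1 + Real.log l) / (l ^ 2 * Real.log l ^ 2)) :=
    (measurable_const.mul (measurable_const.add Real.measurable_log)).div
      ((measurable_id.pow_const 2).mul (Real.measurable_log.pow_const 2))
  have hind : ∀ x : ℝ, ENNReal.ofReal ((Set.Ici a).indicator
        (fun l : ℝ => a * Real.log a * (1 + Real.log l) / (l ^ 2 * Real.log l ^ 2)) x)
      = (Set.Ici a).indicator (fun x : ℝ =>
        ENNReal.ofReal (a * Real.log a * (1 + Real.log x) / (x ^ 2 * Real.log x ^ 2))) x := by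
    intro x
    by_cases hx : x ∈ Set.Ici a <;> simp [Set.indicator_apply, hx]
  have key : ∀ s : Set ℝ, MeasurableSet s →
      μ s = ∫⁻ x in Set.Ici a ∩ s,
        ENNReal.ofReal (a * Real.log a * (1 + Real.log x) / (x ^ 2 * Real.log x ^ 2)) := by
    intro s hs
    rw [hμ, withDensity_apply _ hs]
    simp only [hind]
    exact setLIntegral_indicator measurableSet_Ici _
  have h1 : μ Set.univ = 1 := by
    rw [key _ MeasurableSet.univ, Set.inter_univ, aux_lintegral a ha le_rfl,
      mul_inv_cancel₀ hc.ne', ENNReal.ofReal_one]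
  have hset : ∀ Λ : ℝ, a ≤ Λ → Set.Ici a ∩ (Set.Ioo (-Λ) Λ)ᶜ = Set.Ici Λ := by
    intro Λ hΛ
    ext x
    simp only [Set.mem_inter_iff, Set.mem_Ici, Set.mem_compl_iff, Set.mem_Ioo, not_and_or,
      not_lt]
    constructor
    · rintro ⟨hax, h | h⟩
      · linarith
      · exact h
    · intro h
      exact ⟨le_trans hΛ h, Or.inr h⟩
  have h2 : ∀ Λ : ℝ, a ≤ Λ →
      Λ * (μ (Set.Ioo (-Λ) Λ)ᶜ).toReal = a * Real.log a / Real.log Λ := by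
    intro Λ hΛ
    have hΛ1 : 1 < Λ := lt_of_lt_of_le ha hΛ
    have hΛ0 : (0:ℝ) < Λ := by linarith
    have hlΛ : 0 < Real.log Λ := Real.log_pos hΛ1
    rw [key _ measurableSet_Ioo.compl, hset Λ hΛ, aux_lintegral a ha hΛ,
      ENNReal.toReal_ofReal (by positivity)]
    field_simp
  refine ⟨h1, h2, ?_, ?_⟩
  · have hlim : Tendsto (fun Λ : ℝ => a * Real.log a / Real.log Λ) atTop (𝓝 0) := by
      simp only [div_eq_mul_inv]
      have := Real.tendsto_log_atTop.inv_tendsto_atTop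
      simpa using this.const_mul (a * Real.log a)
    apply hlim.congr'
    filter_upwards [eventually_ge_atTop a] with Λ hΛ
    exact (h2 Λ hΛ).symm
  · rw [hμ, lintegral_withDensity_eq_lintegral_mul volume
      ((hFmeas.indicator measurableSet_Ici).ennreal_ofReal) ENNReal.measurable_ofReal]
    rw [eq_top_iff]
    have hmeas2 : Measurable (fun x : ℝ => ENNReal.ofReal ((x * Real.log x)⁻¹)) :=
      ((measurable_id.mul Real.measurable_log).inv).ennreal_ofReal
    have step : ∫⁻ x in Set.Ici a,
        ENNReal.ofReal (a * Real.log a * (x * Real.log x)⁻¹) = ⊤ := by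
      have hsplit : ∀ x : ℝ, ENNReal.ofReal (a * Real.log a * (x * Real.log x)⁻¹)
          = ENNReal.ofReal (a * Real.log a) * ENNReal.ofReal ((x * Real.log x)⁻¹) :=
        fun x => ENNReal.ofReal_mul hc.le
      simp only [hsplit]
      rw [lintegral_const_mul _ hmeas2, aux_top a ha,
        ENNReal.mul_top (ENNReal.ofReal_pos.mpr hc).ne']
    calc (⊤ : ENNReal)
        = ∫⁻ x in Set.Ici a, ENNReal.ofReal (a * Real.log a * (x * Real.log x)⁻¹) := step.symm
      _ = ∫⁻ x, (Set.Ici a).indicator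
            (fun x => ENNReal.ofReal (a * Real.log a * (x * Real.log x)⁻¹)) x :=
          (lintegral_indicator measurableSet_Ici _).symm
      _ ≤ _ := by
          apply lintegral_mono
          intro x
          by_cases hx : x ∈ Set.Ici a
          · rw [Set.indicator_of_mem hx]
            simp only [Pi.mul_apply, Set.indicator_of_mem hx]
            have hx1 : 1 < x := lt_of_lt_of_le ha hx
            have hx0 : (0:ℝ) < x := by linarith
            have hlx : 0 < Real.log x := Real.log_pos hx1
            have hFnn : 0 ≤ a * Real.log a * (1 + Real.log x) / (x ^ 2 * Real.log x ^ 2) := by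
              positivity
            rw [← ENNReal.ofReal_mul hFnn]
            apply ENNReal.ofReal_le_ofReal
            rw [div_mul_eq_mul_div, inv_eq_one_div, mul_one_div,
              div_le_div_iff₀ (by positivity) (by positivity)]
            nlinarith [mul_pos (mul_pos hc (mul_pos hx0 hx0)) hlx]
          · rw [Set.indicator_of_notMem hx]
            exact zero_le
end

section
/- Let μ be a Borel probability measure on ℝ supported on [0,+∞) (i.e. μ((−∞,0)) = 0) such that Λ·μ([Λ,+∞)) → 0 as Λ → +∞ and ∫_ℝ λ dμ(λ) = +∞. Then (1/s)·∫_ℝ sin(λs) dμ(λ) → +∞ as s → 0⁺. -/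
open MeasureTheory Filter Topology

theorem stmt_9 (μ : Measure ℝ) [IsProbabilityMeasure μ]
    (hsupp : μ (Set.Iio 0) = 0)
    (htail : Tendsto (fun Λ : ℝ => Λ * (μ (Set.Ici Λ)).toReal) atTop (𝓝 0))
    (hint : ¬ Integrable (fun l : ℝ => l) μ) :
    Tendsto (fun s : ℝ => (1 / s) * ∫ l : ℝ, Real.sin (l * s) ∂μ) (𝓝[>] 0) atTop := by
  have hpi : (0:ℝ) < Real.pi := Real.pi_pos
  have hae : ∀ᵐ l ∂μ, 0 ≤ l := by
    rw [ae_iff]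
    convert hsupp using 2
    ext x
    simp [not_le]
  -- T Λ = truncated first moment
  set T : ℝ → ℝ := fun Λ => ∫ l in Set.Iio Λ, l ∂μ with hTdef
  have hIntOn : ∀ Λ : ℝ, IntegrableOn (fun l : ℝ => l) (Set.Iio Λ) μ := by
    intro Λ
    refine Integrable.mono' (integrable_const (max Λ 0)) measurable_id.aestronglyMeasurable ?_
    filter_upwards [ae_restrict_of_ae hae, ae_restrict_mem measurableSet_Iio] with l h0 hlt
    rw [Real.norm_eq_abs, abs_of_nonneg h0]
    exact le_max_of_le_left hlt.le
  have hTmono : Monotone T := by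
    intro a b hab
    refine setIntegral_mono_set (hIntOn b) ?_ ?_
    · filter_upwards [ae_restrict_of_ae hae] with l h0 using h0
    · exact HasSubset.Subset.eventuallyLE (Set.Iio_subset_Iio hab)
  -- lintegral of l is infinite
  have hlin : ∫⁻ l, ENNReal.ofReal l ∂μ = ⊤ := by
    have h1 : ¬ HasFiniteIntegral (fun l : ℝ => l) μ := fun h =>
      hint ⟨measurable_id.aestronglyMeasurable, h⟩
    rw [HasFiniteIntegral, not_lt, top_le_iff] at h1
    rw [← h1]
    refine lintegral_congr_ae ?_
    filter_upwards [hae] with l h0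
    rw [← Real.enorm_eq_ofReal h0]
  -- T Λ as toReal of a lintegral
  have hTlin : ∀ Λ : ℝ, T Λ = (∫⁻ l in Set.Iio Λ, ENNReal.ofReal l ∂μ).toReal := by
    intro Λ
    rw [hTdef]
    exact integral_eq_lintegral_of_nonneg_ae (ae_restrict_of_ae hae)
      measurable_id.aestronglyMeasurable
  have hLfin : ∀ Λ : ℝ, ∫⁻ l in Set.Iio Λ, ENNReal.ofReal l ∂μ ≠ ⊤ := by
    intro Λ
    have hb : ∫⁻ l in Set.Iio Λ, ENNReal.ofReal l ∂μ ≤ ENNReal.ofReal Λ * μ (Set.Iio Λ) := by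
      rw [← setLIntegral_const]
      exact setLIntegral_mono measurable_const fun x hx => ENNReal.ofReal_le_ofReal hx.le
    exact ne_top_of_le_ne_top (ENNReal.mul_ne_top ENNReal.ofReal_ne_top
      (measure_ne_top μ _)) hb
  -- monotone convergence
  have hL : Tendsto (fun n : ℕ => ∫⁻ l in Set.Iio (n:ℝ), ENNReal.ofReal l ∂μ) atTop (𝓝 ⊤) := by
    have := lintegral_tendsto_of_tendsto_of_monotone
      (f := fun n : ℕ => (Set.Iio (n:ℝ)).indicator fun l => ENNReal.ofReal l)
      (F := fun l => ENNReal.ofReal l) (μ := μ)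
      (fun n => (measurable_id.ennreal_ofReal.indicator measurableSet_Iio).aemeasurable)
      ?_ ?_
    · rw [hlin] at this
      refine this.congr fun n => ?_
      rw [lintegral_indicator measurableSet_Iio]
    · filter_upwards with x
      intro a b hab
      exact Set.indicator_le_indicator_of_subset (Set.Iio_subset_Iio (by exact_mod_cast hab))
        (fun _ => zero_le) x
    · filter_upwards with x
      obtain ⟨N, hN⟩ := exists_nat_gt x
      refine tendsto_const_nhds.congr' ?_
      filter_upwards [eventually_ge_atTop N] with n hn
      have : x ∈ Set.Iio (n:ℝ) := lt_of_lt_of_le hN (by exact_mod_cast hn)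
      rw [Set.indicator_of_mem this]
  have hTtop : Tendsto T atTop atTop := by
    refine tendsto_atTop_atTop_of_monotone hTmono ?_
    intro b
    have : ∀ᶠ n : ℕ in atTop,
        ENNReal.ofReal b < ∫⁻ l in Set.Iio (n:ℝ), ENNReal.ofReal l ∂μ :=
      hL.eventually (eventually_gt_nhds (by simp [ENNReal.ofReal_lt_top]))
    obtain ⟨n, hn⟩ := this.exists
    refine ⟨(n:ℝ), ?_⟩
    rw [hTlin]
    exact (ENNReal.ofReal_le_iff_le_toReal (hLfin _)).mp hn.le
  -- key pointwise estimate
  have key : ∀ s : ℝ, s ∈ Set.Ioi (0:ℝ) →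
      2 / Real.pi * T (1/s) - (1/s) * (μ (Set.Ici (1/s))).toReal ≤
        (1 / s) * ∫ l : ℝ, Real.sin (l * s) ∂μ := by
    intro s hs
    have hs0 : (0:ℝ) < s := hs
    have hsne : s ≠ 0 := ne_of_gt hs0
    have hsin : Integrable (fun l : ℝ => Real.sin (l * s)) μ := by
      refine Integrable.mono' (integrable_const 1)
        (Real.measurable_sin.comp (measurable_id.mul_const s)).aestronglyMeasurable ?_
      filter_upwards with l
      rw [Real.norm_eq_abs]
      exact Real.abs_sin_le_one _
    have hsplit : (∫ l : ℝ, Real.sin (l * s) ∂μ) =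
        (∫ l in Set.Iio (1/s), Real.sin (l * s) ∂μ) +
        (∫ l in Set.Ici (1/s), Real.sin (l * s) ∂μ) := by
      rw [← Set.compl_Iio]
      exact (integral_add_compl measurableSet_Iio hsin).symm
    have hpart1 : 2 / Real.pi * s * T (1/s) ≤ ∫ l in Set.Iio (1/s), Real.sin (l * s) ∂μ := by
      have hle : ∫ l in Set.Iio (1/s), (2 / Real.pi * s) * l ∂μ ≤
          ∫ l in Set.Iio (1/s), Real.sin (l * s) ∂μ := by
        refine setIntegral_mono_ae_restrict ((hIntOn (1/s)).const_mul _)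
          hsin.integrableOn ?_
        filter_upwards [ae_restrict_of_ae hae, ae_restrict_mem measurableSet_Iio]
          with l h0 hlt
        have hls : l * s < 1 := by
          calc l * s < (1/s) * s := by exact mul_lt_mul_of_pos_right hlt hs0
          _ = 1 := by field_simp
        have h2 : l * s ≤ Real.pi / 2 := hls.le.trans (by nlinarith [Real.pi_gt_three])
        calc (2 / Real.pi * s) * l = 2 / Real.pi * (l * s) := by ring
        _ ≤ Real.sin (l * s) := Real.mul_le_sin (mul_nonneg h0 hs0.le) h2
      calc 2 / Real.pi * s * T (1/s) = ∫ l in Set.Iio (1/s), (2 / Real.pi * s) * l ∂μ := by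
            rw [hTdef]
            simp only [← smul_eq_mul]
            rw [← integral_smul]
      _ ≤ _ := hle
    have hpart2 : -((μ (Set.Ici (1/s))).toReal) ≤ ∫ l in Set.Ici (1/s), Real.sin (l * s) ∂μ := by
      have hb : ‖∫ l in Set.Ici (1/s), Real.sin (l * s) ∂μ‖ ≤ 1 * (μ (Set.Ici (1/s))).toReal := by
        refine norm_setIntegral_le_of_norm_le_const (measure_lt_top μ _) ?_
        · intro x _
          rw [Real.norm_eq_abs]
          exact Real.abs_sin_le_one _
      rw [Real.norm_eq_abs, abs_le, one_mul] at hb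
      linarith [hb.1]
    have hineq : 2 / Real.pi * s * T (1/s) - (μ (Set.Ici (1/s))).toReal ≤
        ∫ l : ℝ, Real.sin (l * s) ∂μ := by
      rw [hsplit]; linarith
    have h1s : (0:ℝ) < 1/s := by positivity
    calc 2 / Real.pi * T (1/s) - (1/s) * (μ (Set.Ici (1/s))).toReal
        = (1/s) * (2 / Real.pi * s * T (1/s) - (μ (Set.Ici (1/s))).toReal) := by
          field_simp
    _ ≤ (1/s) * ∫ l : ℝ, Real.sin (l * s) ∂μ :=
        mul_le_mul_of_nonneg_left hineq h1s.le
  -- limit of the lower bound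
  have hinv : Tendsto (fun s : ℝ => 1/s) (𝓝[>] (0:ℝ)) atTop := by
    simpa [one_div] using tendsto_inv_nhdsGT_zero (𝕜 := ℝ)
  have hA : Tendsto (fun s : ℝ => 2 / Real.pi * T (1/s)) (𝓝[>] (0:ℝ)) atTop :=
    (hTtop.comp hinv).const_mul_atTop (by positivity)
  have hB : Tendsto (fun s : ℝ => -((1/s) * (μ (Set.Ici (1/s))).toReal)) (𝓝[>] (0:ℝ)) (𝓝 0) := by
    have := (htail.comp hinv).neg
    simpa using this
  have hG : Tendsto (fun s : ℝ => 2 / Real.pi * T (1/s) - (1/s) * (μ (Set.Ici (1/s))).toReal)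
      (𝓝[>] (0:ℝ)) atTop := by
    simpa [sub_eq_add_neg] using hA.atTop_add hB
  refine tendsto_atTop_mono' _ ?_ hG
  filter_upwards [self_mem_nhdsWithin] with s hs using key s hs
end
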